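/- arXiv:0704.2518 — 4 statements merged into one kernel-verified Lean document; each statement's English description precedes it below -/
import Mathlib

section
/- (Reflection principle) Let k ≥ 2 and let C_0 = {x ∈ ℤ^{k-1} : 0 < x_{k-1} < ⋯ < x_1}. Let the hyperoctahedral group B_{k-1} act on ℤ^{k-1} by signed permutations: an element β = (ε, σ) with ε ∈ {+1,-1}^{k-1} and σ a permutation of {1,…,k-1} acts via (β x)_i = ε_i x_{σ^{-1}(i)}, and set (-1)^{ℓ(β)} = sgn(σ)·∏_{i=1}^{k-1} ε_i. For a, b ∈ C_0, let Γ_n(a,b) be the number of walks of length n from a to b with steps 0, ±e_i, and let Γ_n^+(a,b) be the number of such walks all of whose positions lie in C_0. Then Γ_n^+(a,b) = Σ_{β ∈ B_{k-1}} (-1)^{ℓ(β)} Γ_n(β(a), b). -/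
open Finset


/-- A set of arcs (ordered pairs of vertices) is pairwise vertex-disjoint. -/
def ArcsDisjoint (M : Finset (ℕ × ℕ)) : Prop :=
  ∀ p ∈ M, ∀ q ∈ M, p ≠ q → p.1 ≠ q.1 ∧ p.1 ≠ q.2 ∧ p.2 ≠ q.1 ∧ p.2 ≠ q.2

/-- `M` is a partial matching on `{1,…,n}`: arcs `(i,j)` with `1 ≤ i < j ≤ n`,
every vertex in at most one arc. -/
def IsPartialMatching (n : ℕ) (M : Finset (ℕ × ℕ)) : Prop :=
  (∀ p ∈ M, 1 ≤ p.1 ∧ p.1 < p.2 ∧ p.2 ≤ n) ∧ ArcsDisjoint M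

/-- `M` contains `k` mutually crossing arcs
`(i₁,j₁),…,(i_k,j_k)` with `i₁ < ⋯ < i_k < j₁ < ⋯ < j_k`. -/
def HasKCrossing (k : ℕ) (M : Finset (ℕ × ℕ)) : Prop :=
  ∃ f : Fin k → ℕ × ℕ, (∀ r, f r ∈ M) ∧
    (StrictMono fun r => (f r).1) ∧ (StrictMono fun r => (f r).2) ∧
    ∀ r s : Fin k, (f r).1 < (f s).2

/-- `M` is `k`-noncrossing. -/
def KNoncrossing (k : ℕ) (M : Finset (ℕ × ℕ)) : Prop := ¬ HasKCrossing k M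

/-- The number of isolated vertices of `M` in `{1,…,n}`. -/
def isolatedCount (n : ℕ) (M : Finset (ℕ × ℕ)) : ℕ :=
  ((Finset.Icc 1 n).filter fun v => ∀ p ∈ M, p.1 ≠ v ∧ p.2 ≠ v).card

/-- `fMatch k n ℓ`: the number of `k`-noncrossing partial matchings on `{1,…,n}`
with exactly `ℓ` isolated vertices. -/
noncomputable def fMatch (k n ℓ : ℕ) : ℕ :=
  Nat.card {M : Finset (ℕ × ℕ) //
    IsPartialMatching n M ∧ KNoncrossing k M ∧ isolatedCount n M = ℓ}

/-- A legal step in `ℤ^m`: `0` or `± eᵢ`. -/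
def IsStep {m : ℕ} (s : Fin m → ℤ) : Prop :=
  s = 0 ∨ ∃ i : Fin m, s = Pi.single i 1 ∨ s = Pi.single i (-1)

/-- Position of the walk with steps `s` starting at `a` after `r` steps. -/
def walkPos {m n : ℕ} (a : Fin m → ℤ) (s : Fin n → Fin m → ℤ) (r : ℕ) :
    Fin m → ℤ :=
  a + ∑ h ∈ Finset.univ.filter (fun h : Fin n => (h : ℕ) < r), s h

/-- Interior of the Weyl chamber `C₀`: `0 < x_{k-1} < ⋯ < x₁`
(coordinate `i` of the vector is `x_{i+1}`). -/
def InChamber {m : ℕ} (x : Fin m → ℤ) : Prop :=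
  (∀ i j : Fin m, i < j → x j < x i) ∧ ∀ i : Fin m, 0 < x i

/-- The point `a = (m, m-1, …, 1)` (i.e. `(k-1,…,1)` when `m = k-1`). -/
def startPt (m : ℕ) : Fin m → ℤ := fun i => (m : ℤ) - (i : ℕ)

/-- The signed-permutation action of `β = (ε, σ) ∈ B_m` on `ℤ^m`:
`(β x) i = ε i * x (σ⁻¹ i)`, where `ε i = 1` if `ε i = true` and `-1` else. -/
def signedPermAct {m : ℕ} (ε : Fin m → Bool) (σ : Equiv.Perm (Fin m))
    (x : Fin m → ℤ) : Fin m → ℤ :=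
  fun i => (if ε i then (1 : ℤ) else -1) * x (σ⁻¹ i)

/-- `Γ_n(a,b)`: the number of walks of length `n` from `a` to `b` with steps
`0, ±eᵢ`. -/
noncomputable def walkCount (m n : ℕ) (a b : Fin m → ℤ) : ℕ :=
  Nat.card {s : Fin n → Fin m → ℤ //
    (∀ h, IsStep (s h)) ∧ walkPos a s n = b}

/-- `Γ_n⁺(a,b)`: the number of such walks all of whose positions lie in the
interior of the Weyl chamber. -/
noncomputable def walkCountPos (m n : ℕ) (a b : Fin m → ℤ) : ℕ :=
  Nat.card {s : Fin n → Fin m → ℤ //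
    (∀ h, IsStep (s h)) ∧ walkPos a s n = b ∧
    ∀ r ≤ n, InChamber (walkPos a s r)}

namespace RP


def sg (b : Bool) : ℤ := if b then 1 else -1

@[simp] lemma sg_true : sg true = 1 := rfl
@[simp] lemma sg_false : sg false = -1 := rfl
lemma sg_beq (a b : Bool) : sg (a == b) = sg a * sg b := by cases a <;> cases b <;> rfl
lemma sg_ne_zero (a : Bool) : sg a ≠ 0 := by cases a <;> simp [sg]
lemma sg_abs (a : Bool) : |sg a| = 1 := by cases a <;> simp [sg]
lemma beq_cancel (a b : Bool) : (a == (a == b)) = b := by cases a <;> cases b <;> rfl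

variable {m n : ℕ}

def decodeStep (c : Option (Fin m × Bool)) : Fin m → ℤ :=
  match c with
  | none => 0
  | some (i, s) => Pi.single i (sg s)

lemma isStep_decodeStep (c : Option (Fin m × Bool)) : IsStep (decodeStep c) := by
  match c with
  | none => exact Or.inl rfl
  | some (i, s) =>
    refine Or.inr ⟨i, ?_⟩
    cases s
    · exact Or.inr rfl
    · exact Or.inl rfl

lemma decodeStep_surj {v : Fin m → ℤ} (hv : IsStep v) : ∃ c, decodeStep c = v := by
  rcases hv with h | ⟨i, h | h⟩
  · exact ⟨none, h.symm⟩
  · exact ⟨some (i, true), h.symm⟩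
  · exact ⟨some (i, false), h.symm⟩

lemma decodeStep_injective : Function.Injective (decodeStep (m := m)) := by
  intro c d h
  match c, d with
  | none, none => rfl
  | none, some (j, t) =>
    exfalso
    have := congrFun h j
    simp [decodeStep] at this
    exact (sg_ne_zero t) this.symm
  | some (i, s), none =>
    exfalso
    have := congrFun h i
    simp [decodeStep] at this
    exact (sg_ne_zero s) this
  | some (i, s), some (j, t) =>
    have hij : i = j := by
      by_contra hne
      have := congrFun h i
      rw [show decodeStep (some (i,s)) i = sg s by simp [decodeStep],
        show decodeStep (some (j,t)) i = 0 by
          simp only [decodeStep]; exact Pi.single_eq_of_ne hne _] at this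
      exact (sg_ne_zero s) this
    subst hij
    have := congrFun h i
    simp [decodeStep] at this
    have : s = t := by
      cases s <;> cases t <;> simp_all [sg]
    rw [this]

def actCode (ε : Fin m → Bool) (σ : Equiv.Perm (Fin m)) :
    Option (Fin m × Bool) → Option (Fin m × Bool)
  | none => none
  | some (i, s) => some (σ i, ε (σ i) == s)

lemma decodeStep_actCode (ε : Fin m → Bool) (σ : Equiv.Perm (Fin m))
    (c : Option (Fin m × Bool)) :
    decodeStep (actCode ε σ c) = signedPermAct ε σ (decodeStep c) := by
  match c with
  | none =>
    funext j; simp [decodeStep, actCode, signedPermAct]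
  | some (i, s) =>
    funext j
    simp only [decodeStep, actCode, signedPermAct]
    rcases eq_or_ne j (σ i) with rfl | hne
    · rw [Pi.single_eq_same, show σ⁻¹ (σ i) = i from σ.symm_apply_apply i, Pi.single_eq_same]
      cases hb : ε (σ i) <;> cases s <;> simp [sg]
    · rw [Pi.single_eq_of_ne hne, Pi.single_eq_of_ne, mul_zero]
      intro hc
      exact hne (by rw [← hc]; simp)



lemma act_sum {ι : Type*} (ε : Fin m → Bool) (σ : Equiv.Perm (Fin m))
    (s : Finset ι) (f : ι → Fin m → ℤ) :
    signedPermAct ε σ (∑ h ∈ s, f h) = ∑ h ∈ s, signedPermAct ε σ (f h) := by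
  funext i
  simp only [signedPermAct, Finset.sum_apply, Finset.mul_sum]

lemma act_add (ε : Fin m → Bool) (σ : Equiv.Perm (Fin m)) (x y : Fin m → ℤ) :
    signedPermAct ε σ (x + y) = signedPermAct ε σ x + signedPermAct ε σ y := by
  funext i; simp only [signedPermAct, Pi.add_apply]; split <;> ring

lemma act_comp (ε₁ ε₂ : Fin m → Bool) (σ₁ σ₂ : Equiv.Perm (Fin m)) (x : Fin m → ℤ) :
    signedPermAct ε₁ σ₁ (signedPermAct ε₂ σ₂ x) =
      signedPermAct (fun i => ε₁ i == ε₂ (σ₁⁻¹ i)) (σ₁ * σ₂) x := by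
  funext i
  simp only [signedPermAct, mul_inv_rev, Equiv.Perm.coe_mul, Function.comp_apply]
  rcases Bool.eq_false_or_eq_true (ε₁ i) with h | h <;>
    rcases Bool.eq_false_or_eq_true (ε₂ (σ₁⁻¹ i)) with h2 | h2 <;>
      simp only [h, h2] <;> simp <;> ring

lemma act_one (x : Fin m → ℤ) : signedPermAct (fun _ => true) 1 x = x := by
  funext i; simp [signedPermAct]

/-- off the wall arrangement -/
def OffWall (x : Fin m → ℤ) : Prop :=
  (∀ i, x i ≠ 0) ∧ Function.Injective (fun i => |x i|)

lemma offWall_act (ε : Fin m → Bool) (σ : Equiv.Perm (Fin m)) (x : Fin m → ℤ) :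
    OffWall (signedPermAct ε σ x) ↔ OffWall x := by
  have habs : ∀ i, |signedPermAct ε σ x i| = |x (σ⁻¹ i)| := by
    intro i
    simp only [signedPermAct]
    rcases Bool.eq_false_or_eq_true (ε i) with h | h <;> simp [h, abs_mul]
  constructor
  · rintro ⟨h0, hinj⟩
    constructor
    · intro i hi
      refine h0 (σ i) ?_
      simp [signedPermAct, Equiv.Perm.inv_def, hi]
    · intro i j hij
      have : |signedPermAct ε σ x (σ i)| = |signedPermAct ε σ x (σ j)| := by
        rw [habs, habs]; simpa using hij
      have := hinj this
      simpa using this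
  · rintro ⟨h0, hinj⟩
    constructor
    · intro i hi
      simp only [signedPermAct] at hi
      rcases Bool.eq_false_or_eq_true (ε i) with h | h <;>
        simp [h] at hi <;> exact h0 _ hi
    · intro i j hij
      simp only [habs] at hij
      have := hinj hij
      simpa using congrArg σ this

lemma inChamber_offWall {x : Fin m → ℤ} (hx : InChamber x) : OffWall x := by
  refine ⟨fun i => (hx.2 i).ne', ?_⟩
  intro i j hij
  simp only [abs_of_pos (hx.2 i), abs_of_pos (hx.2 j)] at hij
  rcases lt_trichotomy i j with h | h | h
  · exact absurd hij (hx.1 i j h).ne'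
  · exact h
  · exact absurd hij (hx.1 j i h).ne

lemma isStep_abs_le {s : Fin m → ℤ} (hs : IsStep s) (i : Fin m) : |s i| ≤ 1 := by
  rcases hs with h | ⟨j, h | h⟩ <;> subst h
  · simp
  all_goals
    rcases eq_or_ne i j with rfl | hne
    · simp
    · rw [Pi.single_eq_of_ne hne]; simp

lemma isStep_diff_le {s : Fin m → ℤ} (hs : IsStep s) (i j : Fin m) (hij : i ≠ j) :
    |s i - s j| ≤ 1 := by
  rcases hs with h | ⟨l, h | h⟩ <;> subst h
  · simp
  all_goals
    rcases eq_or_ne i l with rfl | hne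
    · rw [Pi.single_eq_of_ne (Ne.symm hij)]; simp
    · rw [Pi.single_eq_of_ne hne]
      rcases eq_or_ne j l with rfl | hne2
      · simp
      · rw [Pi.single_eq_of_ne hne2]; simp

lemma chamber_back {x s : Fin m → ℤ} (hx : OffWall x) (hs : IsStep s)
    (h : InChamber (x + s)) : InChamber x := by
  constructor
  · intro i j hij
    have h1 : x j + s j < x i + s i := h.1 i j hij
    have h2 : |s j - s i| ≤ 1 := isStep_diff_le hs j i (Fin.ne_of_gt hij)
    have hne : x j ≠ x i := by
      intro he
      have : j = i := hx.2 (by simp [he])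
      exact absurd this (Fin.ne_of_gt hij)
    have : x j ≤ x i := by
      have := abs_le.mp h2
      omega
    exact lt_of_le_of_ne this hne
  · intro i
    have h1 : 0 < x i + s i := h.2 i
    have h2 : |s i| ≤ 1 := isStep_abs_le hs i
    have h3 : x i ≠ 0 := hx.1 i
    have := abs_le.mp h2
    omega

lemma act_chamber_eq {a : Fin m → ℤ} (ha : InChamber a) (ε : Fin m → Bool)
    (σ : Equiv.Perm (Fin m)) (h : InChamber (signedPermAct ε σ a)) :
    σ = 1 ∧ ε = fun _ => true := by
  have heps : ∀ i, ε i = true := by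
    intro i
    have hpos := h.2 i
    by_contra hF
    have hF' : ε i = false := by simpa using hF
    simp only [signedPermAct, hF', Bool.false_eq_true, if_false] at hpos
    have := ha.2 (σ⁻¹ i)
    nlinarith
  have hval : ∀ i, signedPermAct ε σ a i = a (σ⁻¹ i) := by
    intro i; simp [signedPermAct, heps i]
  have hmono : StrictMono (fun i => σ⁻¹ i) := by
    intro i j hij
    have := h.1 i j hij
    rw [hval, hval] at this
    rcases lt_trichotomy ((σ⁻¹ : Equiv.Perm (Fin m)) i) (σ⁻¹ j) with hh | hh | hh
    · exact hh
    · exact absurd (congrArg a hh) (by omega)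
    · exact absurd (ha.1 _ _ hh) (by omega)
  have inst : WellFoundedLT (Fin m) := inferInstance
  have hid : (fun i => (σ⁻¹ : Equiv.Perm (Fin m)) i) = (id : Fin m → Fin m) :=
    (@StrictMono.range_inj (Fin m) (Fin m) _ _ inst _ id hmono strictMono_id).mp
      (by rw [Set.range_id]; exact Set.range_eq_univ.mpr (σ⁻¹).surjective)
  have hσ : σ = 1 := by
    have : σ⁻¹ = 1 := Equiv.ext fun i => congrFun hid i
    simpa using congrArg (·⁻¹) this
  exact ⟨hσ, funext heps⟩

def IsRefl (x : Fin m → ℤ) (p : (Fin m → Bool) × Equiv.Perm (Fin m)) : Prop :=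
  p.2 * p.2 = 1 ∧ (∀ i, p.1 (p.2 i) = p.1 i) ∧ signedPermAct p.1 p.2 x = x ∧
    (Equiv.Perm.sign p.2 : ℤ) * ∏ i, sg (p.1 i) = -1

lemma prod_sg_ne (i : Fin m) : (∏ l, sg (decide (l ≠ i))) = -1 := by
  rw [Finset.prod_eq_single_of_mem i (mem_univ i) (fun j _ hj => by simp [sg, hj])]
  simp [sg]

lemma exists_refl {x : Fin m → ℤ} (hx : ¬ OffWall x) : ∃ p, IsRefl x p := by
  rw [OffWall, not_and_or] at hx
  rcases hx with hx | hx
  · push_neg at hx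
    obtain ⟨i, hi⟩ := hx
    refine ⟨(fun j => decide (j ≠ i), 1), ?_, fun j => rfl, ?_, ?_⟩
    · simp
    · funext j
      simp only [signedPermAct]
      rcases eq_or_ne j i with rfl | hne
      · simp [hi]
      · simp [hne]
    · rw [show ((Equiv.Perm.sign (1 : Equiv.Perm (Fin m)) : ℤˣ) : ℤ) = 1 by simp, one_mul]
      exact prod_sg_ne i
  · rw [Function.not_injective_iff] at hx
    obtain ⟨i, j, habs, hij⟩ := hx
    rcases abs_eq_abs.mp habs with hv | hv
    · refine ⟨(fun _ => true, Equiv.swap i j), Equiv.swap_mul_self i j, fun l => rfl, ?_, ?_⟩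
      · funext l
        simp only [signedPermAct, if_true, one_mul, Equiv.swap_inv]
        rcases eq_or_ne l i with rfl | hli
        · rw [Equiv.swap_apply_left]; exact hv.symm
        rcases eq_or_ne l j with rfl | hlj
        · rw [Equiv.swap_apply_right]; exact hv
        · rw [Equiv.swap_apply_of_ne_of_ne hli hlj]
      · simp [Equiv.Perm.sign_swap hij, sg]
    · refine ⟨(fun l => decide (l ≠ i) && decide (l ≠ j), Equiv.swap i j),
        Equiv.swap_mul_self i j, ?_, ?_, ?_⟩
      · intro l
        rcases eq_or_ne l i with rfl | hli
        · simp [Equiv.swap_apply_left, hij.symm, hij]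
        rcases eq_or_ne l j with rfl | hlj
        · simp [Equiv.swap_apply_right, hij, hij.symm]
        · rw [Equiv.swap_apply_of_ne_of_ne hli hlj]
      · funext l
        simp only [signedPermAct, Equiv.swap_inv]
        rcases eq_or_ne l i with rfl | hli
        · rw [Equiv.swap_apply_left]
          simp [hij]
          omega
        rcases eq_or_ne l j with rfl | hlj
        · rw [Equiv.swap_apply_right]
          simp [hij.symm]
          omega
        · rw [Equiv.swap_apply_of_ne_of_ne hli hlj]
          simp [hli, hlj]
      · have hsplit : (∏ l, sg (decide (l ≠ i) && decide (l ≠ j)))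
            = (∏ l, sg (decide (l ≠ i))) * ∏ l, sg (decide (l ≠ j)) := by
          rw [← Finset.prod_mul_distrib]
          refine Finset.prod_congr rfl fun l _ => ?_
          rcases eq_or_ne l i with rfl | hli
          · simp [hij, sg]
          rcases eq_or_ne l j with rfl | hlj
          · simp [hij.symm, sg]
          · simp [hli, hlj, sg]
        rw [hsplit, prod_sg_ne, prod_sg_ne, Equiv.Perm.sign_swap hij]
        simp

open Classical in
noncomputable def reflOf (x : Fin m → ℤ) : (Fin m → Bool) × Equiv.Perm (Fin m) :=
  if h : ∃ p, IsRefl x p then h.choose else (fun _ => true, 1)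

lemma reflOf_isRefl {x : Fin m → ℤ} (hx : ¬ OffWall x) : IsRefl x (reflOf x) := by
  have hex := exists_refl hx
  rw [reflOf, dif_pos hex]
  exact hex.choose_spec

lemma walkPos_zero (a : Fin m → ℤ) (s : Fin n → Fin m → ℤ) : walkPos a s 0 = a := by
  rw [walkPos]
  simp

lemma walkPos_succ (a : Fin m → ℤ) (s : Fin n → Fin m → ℤ) {r : ℕ} (hr : r < n) :
    walkPos a s (r + 1) = walkPos a s r + s ⟨r, hr⟩ := by
  rw [walkPos, walkPos]
  have : Finset.univ.filter (fun h : Fin n => (h : ℕ) < r + 1)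
      = insert ⟨r, hr⟩ (Finset.univ.filter (fun h : Fin n => (h : ℕ) < r)) := by
    ext h
    simp only [mem_filter, mem_univ, true_and, mem_insert]
    constructor
    · intro hh
      rcases Nat.lt_succ_iff_lt_or_eq.mp hh with hl | he
      · exact Or.inr hl
      · exact Or.inl (by ext; exact he)
    · rintro (rfl | hh)
      · simp
      · exact hh.trans (Nat.lt_succ_self r)
  rw [this, Finset.sum_insert (by simp), add_comm (s ⟨r, hr⟩)]
  rw [add_assoc]

lemma walkPos_split (a : Fin m → ℤ) (s : Fin n → Fin m → ℤ) {r j : ℕ} (hrj : r ≤ j) :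
    walkPos a s j = walkPos a s r
      + ∑ h ∈ Finset.univ.filter (fun h : Fin n => r ≤ (h : ℕ) ∧ (h : ℕ) < j), s h := by
  rw [walkPos, walkPos, add_assoc]
  congr 1
  have h1 : Finset.univ.filter (fun h : Fin n => (h : ℕ) < j)
      = Finset.univ.filter (fun h : Fin n => (h : ℕ) < r)
        ∪ Finset.univ.filter (fun h : Fin n => r ≤ (h : ℕ) ∧ (h : ℕ) < j) := by
    ext h
    simp only [mem_filter, mem_union, mem_univ, true_and]
    omega
  rw [h1, Finset.sum_union]
  rw [Finset.disjoint_left]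
  intro h hh1 hh2
  simp only [mem_filter, mem_univ, true_and] at hh1 hh2
  omega

lemma walkPos_congr (a : Fin m → ℤ) (s s' : Fin n → Fin m → ℤ) (r : ℕ)
    (h : ∀ i : Fin n, (i : ℕ) < r → s i = s' i) : walkPos a s r = walkPos a s' r := by
  rw [walkPos, walkPos]
  congr 1
  refine Finset.sum_congr rfl fun i hi => ?_
  exact h i (by simpa using hi)

lemma walkPos_act (ε : Fin m → Bool) (σ : Equiv.Perm (Fin m)) (a : Fin m → ℤ)
    (s : Fin n → Fin m → ℤ) (r : ℕ) :
    walkPos (signedPermAct ε σ a) (fun h => signedPermAct ε σ (s h)) r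
      = signedPermAct ε σ (walkPos a s r) := by
  rw [walkPos, walkPos, act_add, act_sum]

abbrev TT (m n : ℕ) := Equiv.Perm (Fin m) × (Fin m → Bool) × (Fin n → Option (Fin m × Bool))

def stepsOf (c : Fin n → Option (Fin m × Bool)) : Fin n → Fin m → ℤ :=
  fun h => decodeStep (c h)

def tpos (a : Fin m → ℤ) (t : TT m n) (r : ℕ) : Fin m → ℤ :=
  walkPos (signedPermAct t.2.1 t.1 a) (stepsOf t.2.2) r

def wgt (t : TT m n) : ℤ := (Equiv.Perm.sign t.1 : ℤ) * ∏ i, sg (t.2.1 i)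

def Bad (a : Fin m → ℤ) (t : TT m n) : Prop :=
  ∃ r, ¬ OffWall (tpos a t r) ∧ r ≤ n

open Classical in
noncomputable def r0 (a : Fin m → ℤ) (t : TT m n) : ℕ :=
  if h : Bad a t then Nat.find h else 0

open Classical in
lemma r0_spec {a : Fin m → ℤ} {t : TT m n} (hb : Bad a t) :
    ¬ OffWall (tpos a t (r0 a t)) ∧ r0 a t ≤ n := by
  rw [r0, dif_pos hb]
  exact Nat.find_spec hb

open Classical in
lemma r0_min {a : Fin m → ℤ} {t : TT m n} (hb : Bad a t) {j : ℕ} (hj : j < r0 a t) :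
    OffWall (tpos a t j) := by
  rw [r0, dif_pos hb] at hj
  have := Nat.find_min hb hj
  have hjn : j ≤ n := le_trans (le_of_lt hj) (Nat.find_spec hb).2
  by_contra hc
  exact this ⟨hc, hjn⟩

open Classical in
lemma r0_le {a : Fin m → ℤ} {t : TT m n} (hb : Bad a t) {j : ℕ}
    (hj : ¬ OffWall (tpos a t j) ∧ j ≤ n) : r0 a t ≤ j := by
  rw [r0, dif_pos hb]
  exact Nat.find_le hj

noncomputable def flipT (a : Fin m → ℤ) (t : TT m n) : TT m n :=
  ((reflOf (tpos a t (r0 a t))).2 * t.1,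
   fun i => (reflOf (tpos a t (r0 a t))).1 i
      == t.2.1 ((reflOf (tpos a t (r0 a t))).2⁻¹ i),
   fun h => if (h : ℕ) < r0 a t
      then actCode (reflOf (tpos a t (r0 a t))).1 (reflOf (tpos a t (r0 a t))).2 (t.2.2 h)
      else t.2.2 h)

lemma tpos_flip_le (a : Fin m → ℤ) (t : TT m n) {j : ℕ} (hj : j ≤ r0 a t) :
    tpos a (flipT a t) j
      = signedPermAct (reflOf (tpos a t (r0 a t))).1 (reflOf (tpos a t (r0 a t))).2
          (tpos a t j) := by
  set p := reflOf (tpos a t (r0 a t)) with hp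
  have hstart : signedPermAct (flipT a t).2.1 (flipT a t).1 a
      = signedPermAct p.1 p.2 (signedPermAct t.2.1 t.1 a) := by
    rw [act_comp]
    rfl
  have : tpos a (flipT a t) j
      = walkPos (signedPermAct p.1 p.2 (signedPermAct t.2.1 t.1 a))
          (fun h => signedPermAct p.1 p.2 (stepsOf t.2.2 h)) j := by
    rw [tpos, hstart]
    refine walkPos_congr _ _ _ _ fun i hi => ?_
    show decodeStep ((flipT a t).2.2 i) = _
    have : (flipT a t).2.2 i = actCode p.1 p.2 (t.2.2 i) := by
      show (if (i : ℕ) < r0 a t then _ else _) = _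
      rw [if_pos (lt_of_lt_of_le hi hj)]
    rw [this, decodeStep_actCode]
    rfl
  rw [this, walkPos_act]
  rfl

lemma tpos_flip_ge (a : Fin m → ℤ) (t : TT m n) (hb : Bad a t) {j : ℕ} (hj : r0 a t ≤ j) :
    tpos a (flipT a t) j = tpos a t j := by
  have hfix : signedPermAct (reflOf (tpos a t (r0 a t))).1 (reflOf (tpos a t (r0 a t))).2
      (tpos a t (r0 a t)) = tpos a t (r0 a t) :=
    (reflOf_isRefl (r0_spec hb).1).2.2.1
  have h1 : tpos a (flipT a t) (r0 a t) = tpos a t (r0 a t) := by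
    rw [tpos_flip_le a t le_rfl, hfix]
  have e1 : tpos a (flipT a t) j = tpos a (flipT a t) (r0 a t)
      + ∑ h ∈ Finset.univ.filter (fun h : Fin n => r0 a t ≤ (h : ℕ) ∧ (h : ℕ) < j),
          stepsOf (flipT a t).2.2 h := walkPos_split _ _ hj
  have e2 : tpos a t j = tpos a t (r0 a t)
      + ∑ h ∈ Finset.univ.filter (fun h : Fin n => r0 a t ≤ (h : ℕ) ∧ (h : ℕ) < j),
          stepsOf t.2.2 h := walkPos_split _ _ hj
  rw [e1, e2, h1]
  congr 1
  refine Finset.sum_congr rfl fun i hi => ?_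
  simp only [mem_filter, mem_univ, true_and] at hi
  show decodeStep ((flipT a t).2.2 i) = decodeStep (t.2.2 i)
  have : (flipT a t).2.2 i = t.2.2 i := by
    show (if (i : ℕ) < r0 a t then _ else _) = _
    rw [if_neg (by omega)]
  rw [this]

lemma bad_flip {a : Fin m → ℤ} {t : TT m n} (hb : Bad a t) : Bad a (flipT a t) :=
  ⟨r0 a t, by rw [tpos_flip_ge a t hb le_rfl]; exact (r0_spec hb).1, (r0_spec hb).2⟩

lemma r0_flip {a : Fin m → ℤ} {t : TT m n} (hb : Bad a t) : r0 a (flipT a t) = r0 a t := by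
  refine le_antisymm (r0_le (bad_flip hb)
    ⟨by rw [tpos_flip_ge a t hb le_rfl]; exact (r0_spec hb).1, (r0_spec hb).2⟩) ?_
  by_contra hc
  push_neg at hc
  have h1 := (r0_spec (bad_flip hb)).1
  rw [tpos_flip_le a t (le_of_lt hc), offWall_act] at h1
  exact h1 (r0_min hb hc)

lemma actCode_invol {p : (Fin m → Bool) × Equiv.Perm (Fin m)}
    (happ : ∀ i, p.2 (p.2 i) = i) (heq : ∀ i, p.1 (p.2 i) = p.1 i)
    (cd : Option (Fin m × Bool)) : actCode p.1 p.2 (actCode p.1 p.2 cd) = cd := by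
  match cd with
  | none => rfl
  | some (i, s) =>
    show some (p.2 (p.2 i), p.1 (p.2 (p.2 i)) == (p.1 (p.2 i) == s)) = some (i, s)
    rw [happ i, heq i, beq_cancel]

lemma flip_flip {a : Fin m → ℤ} {t : TT m n} (hb : Bad a t) : flipT a (flipT a t) = t := by
  have hx : tpos a (flipT a t) (r0 a (flipT a t)) = tpos a t (r0 a t) := by
    rw [r0_flip hb, tpos_flip_ge a t hb le_rfl]
  have hp := reflOf_isRefl (r0_spec hb).1
  set p := reflOf (tpos a t (r0 a t)) with hpdef
  have hinv : p.2⁻¹ = p.2 := inv_eq_of_mul_eq_one_right hp.1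
  have happ : ∀ i, p.2 (p.2 i) = i := by
    intro i
    have := congrArg (fun e => Equiv.toFun e i) hp.1
    simpa using this
  have heq : ∀ i, p.1 (p.2 i) = p.1 i := hp.2.1
  have hr : r0 a (flipT a t) = r0 a t := r0_flip hb
  have hrefl : reflOf (tpos a (flipT a t) (r0 a (flipT a t))) = p := by rw [hx]
  refine Prod.ext ?_ (Prod.ext ?_ ?_)
  · show (reflOf (tpos a (flipT a t) (r0 a (flipT a t)))).2 * (flipT a t).1 = t.1
    rw [hrefl]
    show p.2 * (p.2 * t.1) = t.1
    rw [← mul_assoc, hp.1, one_mul]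
  · show (fun i => (reflOf (tpos a (flipT a t) (r0 a (flipT a t)))).1 i
        == (flipT a t).2.1 ((reflOf (tpos a (flipT a t) (r0 a (flipT a t)))).2⁻¹ i)) = t.2.1
    rw [hrefl]
    funext i
    show (p.1 i == (p.1 (p.2⁻¹ i) == t.2.1 (p.2⁻¹ (p.2⁻¹ i)))) = t.2.1 i
    rw [hinv, happ, heq, beq_cancel]
  · funext h
    show (if (h : ℕ) < r0 a (flipT a t)
        then actCode (reflOf (tpos a (flipT a t) (r0 a (flipT a t)))).1
          (reflOf (tpos a (flipT a t) (r0 a (flipT a t)))).2 ((flipT a t).2.2 h)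
        else (flipT a t).2.2 h) = t.2.2 h
    rw [hrefl, hr]
    by_cases hcase : (h : ℕ) < r0 a t
    · rw [if_pos hcase]
      show actCode p.1 p.2 (if (h : ℕ) < r0 a t then actCode p.1 p.2 (t.2.2 h) else t.2.2 h) = _
      rw [if_pos hcase, actCode_invol happ heq]
    · rw [if_neg hcase]
      show (if (h : ℕ) < r0 a t then actCode p.1 p.2 (t.2.2 h) else t.2.2 h) = _
      rw [if_neg hcase]

lemma wgt_flip {a : Fin m → ℤ} {t : TT m n} (hb : Bad a t) :
    wgt (flipT a t) = - wgt t := by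
  have hp := reflOf_isRefl (r0_spec hb).1
  set p := reflOf (tpos a t (r0 a t)) with hpdef
  have hsign : ((Equiv.Perm.sign ((flipT a t).1) : ℤˣ) : ℤ)
      = (Equiv.Perm.sign p.2 : ℤ) * (Equiv.Perm.sign t.1 : ℤ) := by
    show ((Equiv.Perm.sign (p.2 * t.1) : ℤˣ) : ℤ) = _
    rw [map_mul, Units.val_mul]
  have hprod : (∏ i, sg ((flipT a t).2.1 i))
      = (∏ i, sg (p.1 i)) * ∏ i, sg (t.2.1 i) := by
    calc (∏ i, sg ((flipT a t).2.1 i))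
        = ∏ i, sg (p.1 i) * sg (t.2.1 (p.2⁻¹ i)) :=
          Finset.prod_congr rfl fun i _ => sg_beq _ _
      _ = (∏ i, sg (p.1 i)) * ∏ i, sg (t.2.1 (p.2⁻¹ i)) := Finset.prod_mul_distrib
      _ = (∏ i, sg (p.1 i)) * ∏ i, sg (t.2.1 i) := by
          rw [Equiv.prod_comp p.2⁻¹ (fun i => sg (t.2.1 i))]
  have h4 := hp.2.2.2
  rw [wgt, hsign, hprod, wgt]
  rw [show (Equiv.Perm.sign p.2 : ℤ) * (Equiv.Perm.sign t.1 : ℤ)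
      * ((∏ i, sg (p.1 i)) * ∏ i, sg (t.2.1 i))
    = ((Equiv.Perm.sign p.2 : ℤ) * ∏ i, sg (p.1 i))
      * ((Equiv.Perm.sign t.1 : ℤ) * ∏ i, sg (t.2.1 i)) from by ring, h4]
  ring

lemma card_codes (P : (Fin n → Fin m → ℤ) → Prop) [DecidablePred P] :
    Nat.card {s : Fin n → Fin m → ℤ // (∀ h, IsStep (s h)) ∧ P s}
      = (Finset.univ.filter
          (fun c : Fin n → Option (Fin m × Bool) => P (stepsOf c))).card := by
  classical
  have hbij : Function.Bijective
      (fun c : {c : Fin n → Option (Fin m × Bool) // P (stepsOf c)} =>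
        (⟨stepsOf c.1, fun h => isStep_decodeStep _, c.2⟩ :
          {s : Fin n → Fin m → ℤ // (∀ h, IsStep (s h)) ∧ P s})) := by
    constructor
    · intro c d hcd
      have h1 : stepsOf c.1 = stepsOf d.1 := congrArg Subtype.val hcd
      exact Subtype.ext (funext fun h => decodeStep_injective (congrFun h1 h))
    · rintro ⟨s, hs, hP⟩
      have : ∃ c : Fin n → Option (Fin m × Bool), stepsOf c = s := by
        choose c hc using fun h => decodeStep_surj (hs h)
        exact ⟨c, funext hc⟩
      obtain ⟨c, rfl⟩ := this
      exact ⟨⟨c, hP⟩, rfl⟩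
  rw [← Nat.card_eq_of_bijective _ hbij, Nat.card_eq_fintype_card, Fintype.card_subtype]

set_option maxHeartbeats 800000 in
lemma hinner_aux (m n : ℕ) (a b : Fin m → ℤ) (σ : Equiv.Perm (Fin m)) (ε : Fin m → Bool) :
        (Equiv.Perm.sign σ : ℤ) * (∏ i, if ε i then (1 : ℤ) else -1) *
          (walkCount m n (signedPermAct ε σ a) b : ℤ)
        = ∑ c : Fin n → Option (Fin m × Bool),
            if tpos a (σ, ε, c) n = b then wgt (σ, ε, c) else 0 := by
      classical
      rw [show (walkCount m n (signedPermAct ε σ a) b : ℤ)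
          = ((Finset.univ.filter (fun c : Fin n → Option (Fin m × Bool) =>
              walkPos (signedPermAct ε σ a) (stepsOf c) n = b)).card : ℤ) by
        rw [walkCount, card_codes]]
      rw [← Finset.sum_filter]
      have hcg : ∀ c ∈ Finset.univ.filter (fun c : Fin n → Option (Fin m × Bool) =>
          tpos a (σ, ε, c) n = b), wgt (σ, ε, c)
            = (Equiv.Perm.sign σ : ℤ) * ∏ i, if ε i then (1 : ℤ) else -1 :=
        fun c _ => rfl
      rw [Finset.sum_congr rfl hcg, Finset.sum_const, nsmul_eq_mul]
      rw [show (Finset.univ.filter (fun c : Fin n → Option (Fin m × Bool) =>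
          tpos a (σ, ε, c) n = b))
        = (Finset.univ.filter (fun c : Fin n → Option (Fin m × Bool) =>
          walkPos (signedPermAct ε σ a) (stepsOf c) n = b)) from rfl]
      ring


lemma hRHS_aux (m n : ℕ) (a b : Fin m → ℤ) :
    (∑ σ : Equiv.Perm (Fin m), ∑ ε : Fin m → Bool,
        (Equiv.Perm.sign σ : ℤ) * (∏ i, if ε i then (1 : ℤ) else -1) *
          (walkCount m n (signedPermAct ε σ a) b : ℤ))
      = ∑ t ∈ Finset.univ.filter (fun t : TT m n => tpos a t n = b), wgt t := by
  classical
  calc (∑ σ : Equiv.Perm (Fin m), ∑ ε : Fin m → Bool,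
        (Equiv.Perm.sign σ : ℤ) * (∏ i, if ε i then (1 : ℤ) else -1) *
          (walkCount m n (signedPermAct ε σ a) b : ℤ))
      = ∑ σ : Equiv.Perm (Fin m), ∑ ε : Fin m → Bool,
          ∑ c : Fin n → Option (Fin m × Bool),
            if tpos a (σ, ε, c) n = b then wgt (σ, ε, c) else 0 :=
        Finset.sum_congr rfl fun σ _ => Finset.sum_congr rfl
          (fun ε _ => hinner_aux m n a b σ ε)
    _ = ∑ σ : Equiv.Perm (Fin m),
          ∑ q : (Fin m → Bool) × (Fin n → Option (Fin m × Bool)),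
            if tpos a (σ, q) n = b then wgt (σ, q) else 0 :=
        Finset.sum_congr rfl fun σ _ =>
          (Fintype.sum_prod_type (f := fun q : (Fin m → Bool) × (Fin n → Option (Fin m × Bool)) =>
            if tpos a (σ, q) n = b then wgt (σ, q) else 0)).symm
    _ = ∑ t : TT m n, if tpos a t n = b then wgt t else 0 :=
        (Fintype.sum_prod_type (f := fun t : TT m n =>
          if tpos a t n = b then wgt t else 0)).symm
    _ = ∑ t ∈ Finset.univ.filter (fun t : TT m n => tpos a t n = b), wgt t :=
        (Finset.sum_filter _ _).symm

set_option maxHeartbeats 1000000 in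
lemma main_count (m n : ℕ) (a b : Fin m → ℤ) (ha : InChamber a) (hb : InChamber b) :
    (walkCountPos m n a b : ℤ) =
      ∑ σ : Equiv.Perm (Fin m), ∑ ε : Fin m → Bool,
        (Equiv.Perm.sign σ : ℤ) * (∏ i, if ε i then (1 : ℤ) else -1) *
          (walkCount m n (signedPermAct ε σ a) b : ℤ) := by
  classical
  have hRHS := hRHS_aux m n a b
  have hsplit : ∑ t ∈ Finset.univ.filter (fun t : TT m n => tpos a t n = b), wgt t
      = ∑ t ∈ (Finset.univ.filter (fun t : TT m n => tpos a t n = b)).filter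
            (fun t => ∀ r ≤ n, OffWall (tpos a t r)), wgt t
        + ∑ t ∈ (Finset.univ.filter (fun t : TT m n => tpos a t n = b)).filter
            (fun t => ¬ ∀ r ≤ n, OffWall (tpos a t r)), wgt t :=
    (Finset.sum_filter_add_sum_filter_not _ _ wgt).symm
  have hbadOf : ∀ t ∈ (Finset.univ.filter (fun t : TT m n => tpos a t n = b)).filter
      (fun t => ¬ ∀ r ≤ n, OffWall (tpos a t r)), Bad a t := by
    intro t ht
    rw [Finset.mem_filter] at ht
    have h2 := ht.2
    push_neg at h2
    obtain ⟨r, hr1, hr2⟩ := h2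
    exact ⟨r, hr2, hr1⟩
  have hzero : ∑ t ∈ (Finset.univ.filter (fun t : TT m n => tpos a t n = b)).filter
      (fun t => ¬ ∀ r ≤ n, OffWall (tpos a t r)), wgt t = 0 := by
    refine Finset.sum_involution (fun t _ => flipT a t) ?_ ?_ ?_ ?_
    · intro t ht
      show wgt t + wgt (flipT a t) = 0
      rw [wgt_flip (hbadOf t ht)]
      ring
    · intro t ht hne heq
      replace heq : flipT a t = t := heq
      have h3 := wgt_flip (hbadOf t ht)
      rw [heq] at h3
      exact hne (by linarith)
    · intro t ht
      have hb' := hbadOf t ht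
      show flipT a t ∈ _
      rw [Finset.mem_filter] at ht ⊢
      constructor
      · rw [Finset.mem_filter]
        refine ⟨Finset.mem_univ _, ?_⟩
        show tpos a (flipT a t) n = b
        rw [tpos_flip_ge a t hb' (r0_spec hb').2]
        have h4 := ht.1
        rw [Finset.mem_filter] at h4
        exact h4.2
      · intro hGoodFlip
        have h2 := hGoodFlip (r0 a t) (r0_spec hb').2
        rw [tpos_flip_ge a t hb' le_rfl] at h2
        exact (r0_spec hb').1 h2
    · intro t ht
      show flipT a (flipT a t) = t
      exact flip_flip (hbadOf t ht)
  have hchar : ∀ t : TT m n,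
      t ∈ (Finset.univ.filter (fun t : TT m n => tpos a t n = b)).filter
        (fun t => ∀ r ≤ n, OffWall (tpos a t r)) ↔
      (t.1 = 1 ∧ t.2.1 = (fun _ => true)
        ∧ (walkPos a (stepsOf t.2.2) n = b
            ∧ ∀ r ≤ n, InChamber (walkPos a (stepsOf t.2.2) r))) := by
    intro t
    constructor
    · intro ht
      rw [Finset.mem_filter, Finset.mem_filter] at ht
      have hend : tpos a t n = b := ht.1.2
      have hGood : ∀ r ≤ n, OffWall (tpos a t r) := ht.2
      have hch : ∀ d, d ≤ n → InChamber (tpos a t (n - d)) := by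
        intro d
        induction d with
        | zero =>
          intro _
          simpa [hend] using hb
        | succ d ih =>
          intro hdn
          have h1 := ih (Nat.le_of_succ_le hdn)
          have hr : n - (d + 1) < n :=
            Nat.sub_lt (Nat.lt_of_lt_of_le (Nat.succ_pos d) hdn) (Nat.succ_pos d)
          have hstep : tpos a t (n - d) = tpos a t (n - (d + 1))
              + stepsOf t.2.2 ⟨n - (d + 1), hr⟩ := by
            rw [show n - d = (n - (d + 1)) + 1 from by
              rw [Nat.sub_succ]
              exact (Nat.succ_pred_eq_of_pos (Nat.sub_pos_of_lt (Nat.lt_of_succ_le hdn))).symm]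
            exact walkPos_succ _ _ hr
          rw [hstep] at h1
          exact chamber_back (hGood _ (Nat.sub_le n (d+1))) (isStep_decodeStep _) h1
      have hchAll : ∀ r ≤ n, InChamber (tpos a t r) := by
        intro r hr
        have h5 := hch (n - r) (Nat.sub_le n r)
        rwa [Nat.sub_sub_self hr] at h5
      have h0 : InChamber (signedPermAct t.2.1 t.1 a) := by
        have h6 := hchAll 0 (Nat.zero_le n)
        rwa [tpos, walkPos_zero] at h6
      obtain ⟨hσ, hε⟩ := act_chamber_eq ha _ _ h0
      have hact : signedPermAct t.2.1 t.1 a = a := by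
        rw [hσ, hε, act_one]
      refine ⟨hσ, hε, ?_, ?_⟩
      · rw [show walkPos a (stepsOf t.2.2) n = tpos a t n by rw [tpos, hact]]
        exact hend
      · intro r hr
        rw [show walkPos a (stepsOf t.2.2) r = tpos a t r by rw [tpos, hact]]
        exact hchAll r hr
    · rintro ⟨hσ, hε, hend, hch⟩
      have hact : signedPermAct t.2.1 t.1 a = a := by rw [hσ, hε, act_one]
      rw [Finset.mem_filter, Finset.mem_filter]
      refine ⟨⟨Finset.mem_univ _, ?_⟩, ?_⟩
      · show tpos a t n = b
        rw [tpos, hact]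
        exact hend
      · intro r hr
        rw [tpos, hact]
        exact inChamber_offWall (hch r hr)
  have hwgt1 : ∀ t ∈ (Finset.univ.filter (fun t : TT m n => tpos a t n = b)).filter
      (fun t => ∀ r ≤ n, OffWall (tpos a t r)), wgt t = 1 := by
    intro t ht
    obtain ⟨hσ, hε, _⟩ := (hchar t).mp ht
    rw [wgt, hσ, hε]
    simp [sg]
  have hgoodsum : ∑ t ∈ (Finset.univ.filter (fun t : TT m n => tpos a t n = b)).filter
        (fun t => ∀ r ≤ n, OffWall (tpos a t r)), wgt t
      = (((Finset.univ.filter (fun t : TT m n => tpos a t n = b)).filter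
          (fun t => ∀ r ≤ n, OffWall (tpos a t r))).card : ℤ) := by
    rw [Finset.sum_congr rfl hwgt1, Finset.sum_const, nsmul_eq_mul, mul_one]
  have hcard : ((Finset.univ.filter (fun t : TT m n => tpos a t n = b)).filter
        (fun t => ∀ r ≤ n, OffWall (tpos a t r))).card
      = (Finset.univ.filter (fun c : Fin n → Option (Fin m × Bool) =>
          walkPos a (stepsOf c) n = b
            ∧ ∀ r ≤ n, InChamber (walkPos a (stepsOf c) r))).card := by
    refine Finset.card_bij (fun t _ => t.2.2) ?_ ?_ ?_
    · intro t ht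
      obtain ⟨_, _, h1, h2⟩ := (hchar t).mp ht
      simp only [Finset.mem_filter, Finset.mem_univ, true_and]
      exact ⟨h1, h2⟩
    · intro t1 h1 t2 h2 heq
      obtain ⟨ha1, hb1, _⟩ := (hchar t1).mp h1
      obtain ⟨ha2, hb2, _⟩ := (hchar t2).mp h2
      replace heq : t1.2.2 = t2.2.2 := heq
      refine Prod.ext (by rw [ha1, ha2]) (Prod.ext (by rw [hb1, hb2]) heq)
    · intro c hc
      simp only [Finset.mem_filter, Finset.mem_univ, true_and] at hc
      exact ⟨(1, fun _ => true, c), (hchar _).mpr ⟨rfl, rfl, hc.1, hc.2⟩, rfl⟩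
  have hLHS : (walkCountPos m n a b : ℤ)
      = (((Finset.univ.filter (fun c : Fin n → Option (Fin m × Bool) =>
          walkPos a (stepsOf c) n = b
            ∧ ∀ r ≤ n, InChamber (walkPos a (stepsOf c) r))).card : ℕ) : ℤ) := by
    rw [walkCountPos, card_codes]
  rw [hLHS, hRHS, hsplit, hzero, add_zero, hgoodsum, hcard]

end RP

/-- **Reflection principle.** For `a, b` in the interior of the
Weyl chamber `C₀`,
`Γ_n⁺(a,b) = Σ_{β ∈ B_{k-1}} (-1)^{ℓ(β)} Γ_n(β(a), b)`. -/
theorem reflection_principle (k n : ℕ) (hk : 2 ≤ k)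
    (a b : Fin (k - 1) → ℤ) (ha : InChamber a) (hb : InChamber b) :
    (walkCountPos (k - 1) n a b : ℤ) =
      ∑ σ : Equiv.Perm (Fin (k - 1)), ∑ ε : Fin (k - 1) → Bool,
        (Equiv.Perm.sign σ : ℤ) * (∏ i, if ε i then (1 : ℤ) else -1) *
          (walkCount (k - 1) n (signedPermAct ε σ a) b : ℤ) :=
  RP.main_count (k - 1) n a b ha hb
end

section
/- Let k ≥ 2. The number S_k(n,ℓ) of k-noncrossing RNA structures on {1,…,n} with exactly ℓ isolated vertices satisfies S_k(n,ℓ) = Σ_{b=0}^{⌊(n-ℓ)/2⌋} (-1)^b · C(n-b, b) · f_k(n-2b, ℓ), where C(·,·) is the binomial coefficient. -/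
/-- `S_k(n,ℓ)`: the number of `k`-noncrossing RNA structures on `{1,…,n}`
(`k`-noncrossing partial matchings with no 1-arc `(i,i+1)`)
with exactly `ℓ` isolated vertices. -/
noncomputable def SCount (k n ℓ : ℕ) : ℕ :=
  Nat.card {M : Finset (ℕ × ℕ) //
    IsPartialMatching n M ∧ KNoncrossing k M ∧
    (∀ p ∈ M, p.2 ≠ p.1 + 1) ∧ isolatedCount n M = ℓ}

open Finset

open scoped Classical in
noncomputable def TT (k n ℓ : ℕ) : Finset (Finset (ℕ × ℕ)) :=
  ((Finset.Icc 1 n ×ˢ Finset.Icc 1 n).powerset).filter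
    (fun M => IsPartialMatching n M ∧ KNoncrossing k M ∧ isolatedCount n M = ℓ)

lemma mem_TT {k n ℓ : ℕ} {M : Finset (ℕ × ℕ)} :
    M ∈ TT k n ℓ ↔ IsPartialMatching n M ∧ KNoncrossing k M ∧ isolatedCount n M = ℓ := by
  classical
  simp only [TT, mem_filter, mem_powerset, and_iff_right_iff_imp]
  rintro ⟨⟨h1, -⟩, -⟩ p hp
  obtain ⟨a, b, c⟩ := h1 p hp
  exact mem_product.2 ⟨mem_Icc.2 ⟨a, le_of_lt (lt_of_lt_of_le b c)⟩, mem_Icc.2 ⟨le_trans a b.le, c⟩⟩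

lemma fMatch_eq_card (k n ℓ : ℕ) : fMatch k n ℓ = (TT k n ℓ).card := by
  classical
  have hset : {M : Finset (ℕ × ℕ) |
      IsPartialMatching n M ∧ KNoncrossing k M ∧ isolatedCount n M = ℓ} = ↑(TT k n ℓ) := by
    ext M; simp [mem_TT]
  rw [fMatch, ← Set.ncard_coe_finset, ← hset]
  rfl

lemma SCount_eq_card (k n ℓ : ℕ) :
    SCount k n ℓ = ((TT k n ℓ).filter (fun M => ∀ p ∈ M, p.2 ≠ p.1 + 1)).card := by
  have hset : {M : Finset (ℕ × ℕ) |
      IsPartialMatching n M ∧ KNoncrossing k M ∧ (∀ p ∈ M, p.2 ≠ p.1 + 1) ∧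
        isolatedCount n M = ℓ} =
      ↑((TT k n ℓ).filter (fun M => ∀ p ∈ M, p.2 ≠ p.1 + 1)) := by
    ext M; simp [mem_TT]; tauto
  rw [SCount, ← Set.ncard_coe_finset, ← hset]
  rfl

/-! ### Collapse/expand toolkit -/

def cmap (L : Finset ℕ) (v : ℕ) : ℕ := v - 2 * (L.filter (· < v)).card

def dmap (L : Finset ℕ) (v : ℕ) : ℕ := v - (L.filter (· < v)).card

def gmap (D : Finset ℕ) (v : ℕ) : ℕ := v + (D.filter (· < v)).card

def Sset (n : ℕ) (L : Finset ℕ) : Finset ℕ :=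
  (Finset.Icc 1 n).filter (fun v => ∀ i ∈ L, v ≠ i ∧ v ≠ i + 1)

section Toolkit

variable {n : ℕ} {L D : Finset ℕ}

/-- Splitting a `<`-count at an intermediate point. -/
lemma count_split (A : Finset ℕ) {u v : ℕ} (huv : u ≤ v) :
    (A.filter (· < v)).card =
      (A.filter (· < u)).card + (A.filter (fun i => u ≤ i ∧ i < v)).card := by
  rw [← card_union_of_disjoint]
  · congr 1
    ext i
    simp only [Finset.mem_filter, Finset.mem_union]
    constructor
    · rintro ⟨hi, hv⟩
      rcases lt_or_ge i u with h | h
      · exact Or.inl ⟨hi, h⟩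
      · exact Or.inr ⟨hi, h, hv⟩
    · rintro (⟨hi, h⟩ | ⟨hi, h, h'⟩)
      · exact ⟨hi, lt_of_lt_of_le h huv⟩
      · exact ⟨hi, h'⟩
  · rw [Finset.disjoint_left]
    rintro a ha hb
    have h1 := (Finset.mem_filter.1 ha).2
    have h2 := (Finset.mem_filter.1 hb).2.1
    omega

/-- Two copies of a "spread" set fit in an interval. -/
lemma two_mul_card_le (hL2 : ∀ i ∈ L, ∀ j ∈ L, i < j → i + 1 < j)
    (P : Finset ℕ) (hP : P ⊆ L) (a bnd : ℕ) (h : ∀ i ∈ P, a ≤ i ∧ i + 1 ≤ bnd) :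
    2 * P.card ≤ bnd + 1 - a := by
  have hnotin : ∀ i ∈ L, i + 1 ∉ L := by
    intro i hi hcon
    exact absurd (hL2 i hi (i+1) hcon (Nat.lt_succ_self i)) (by omega)
  have hdisj : Disjoint P (P.image (· + 1)) := by
    rw [Finset.disjoint_left]
    rintro x hx hx'
    obtain ⟨i, hi, rfl⟩ := Finset.mem_image.1 hx'
    exact hnotin i (hP hi) (hP hx)
  have hsub : P ∪ P.image (· + 1) ⊆ Finset.Icc a bnd := by
    intro x hx
    rcases Finset.mem_union.1 hx with hx | hx
    · have := h x hx; exact Finset.mem_Icc.2 ⟨this.1, by omega⟩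
    · obtain ⟨i, hi, rfl⟩ := Finset.mem_image.1 hx
      have := h i hi; exact Finset.mem_Icc.2 ⟨by omega, this.2⟩
  have := Finset.card_le_card hsub
  rw [Finset.card_union_of_disjoint hdisj,
    Finset.card_image_of_injective _ (add_left_injective 1), Nat.card_Icc] at this
  omega

variable (hL1 : ∀ i ∈ L, 1 ≤ i ∧ i + 1 ≤ n)
  (hL2 : ∀ i ∈ L, ∀ j ∈ L, i < j → i + 1 < j)

lemma mem_Sset {v : ℕ} : v ∈ Sset n L ↔ v ∈ Finset.Icc 1 n ∧ ∀ i ∈ L, v ≠ i ∧ v ≠ i + 1 :=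
  Finset.mem_filter

include hL1 hL2 in
lemma count_lt_half {v : ℕ} (hv : v ∈ Sset n L) : 2 * (L.filter (· < v)).card < v := by
  obtain ⟨hv1, hv2⟩ := mem_Sset.1 hv
  have h1 : 1 ≤ v := (Finset.mem_Icc.1 hv1).1
  have := two_mul_card_le hL2 (L.filter (· < v)) (Finset.filter_subset _ _) 1 (v - 1) ?_
  · omega
  · intro i hi
    rw [Finset.mem_filter] at hi
    have := (hL1 i hi.1).1
    have hne := (hv2 i hi.1).2
    omega

include hL1 hL2 in
lemma count_ge_bound {v : ℕ} (hv : v ∈ Sset n L) :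
    v + 2 * (L.filter (fun i => ¬ i < v)).card ≤ n := by
  obtain ⟨hv1, hv2⟩ := mem_Sset.1 hv
  have hvn := (Finset.mem_Icc.1 hv1).2
  have := two_mul_card_le hL2 (L.filter (fun i => ¬ i < v)) (Finset.filter_subset _ _)
    (v + 1) n ?_
  · omega
  · intro i hi
    rw [Finset.mem_filter] at hi
    have := (hL1 i hi.1).2
    have hne := (hv2 i hi.1).1
    omega

include hL1 hL2 in
lemma cmap_strictMonoOn : StrictMonoOn (cmap L) ↑(Sset n L) := by
  intro u hu v hv huv
  rw [Finset.mem_coe] at hu hv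
  have hau := count_lt_half hL1 hL2 hu
  have hav := count_lt_half hL1 hL2 hv
  have hsplit := count_split L huv.le (u := u) (v := v)
  have hmid : u + 1 + 2 * (L.filter (fun i => u ≤ i ∧ i < v)).card ≤ v := by
    have := two_mul_card_le hL2 (L.filter (fun i => u ≤ i ∧ i < v))
      (Finset.filter_subset _ _) (u + 1) (v - 1) ?_
    · omega
    · intro i hi
      rw [Finset.mem_filter] at hi
      have hne1 := ((mem_Sset.1 hu).2 i hi.1).1
      have hne2 := ((mem_Sset.1 hv).2 i hi.1).2
      omega
  simp only [cmap]
  omega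

include hL1 hL2 in
lemma cmap_mem {v : ℕ} (hv : v ∈ Sset n L) :
    cmap L v ∈ Finset.Icc 1 (n - 2 * L.card) := by
  have h1 := count_lt_half hL1 hL2 hv
  have h2 := count_ge_bound hL1 hL2 hv
  have h3 := Finset.card_filter_add_card_filter_not (s := L) (p := (· < v))
  rw [Finset.mem_Icc]
  simp only [cmap]
  omega

include hL1 hL2 in
lemma Sset_card : (Sset n L).card = n - 2 * L.card := by
  have hnotin : ∀ i ∈ L, i + 1 ∉ L := by
    intro i hi hcon
    exact absurd (hL2 i hi (i+1) hcon (Nat.lt_succ_self i)) (by omega)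
  have hV : Sset n L = Finset.Icc 1 n \ (L ∪ L.image (· + 1)) := by
    ext v
    simp only [mem_Sset, Finset.mem_sdiff, Finset.mem_union, Finset.mem_image]
    constructor
    · rintro ⟨h1, h2⟩
      refine ⟨h1, ?_⟩
      rintro (hv | ⟨i, hi, rfl⟩)
      · exact (h2 v hv).1 rfl
      · exact (h2 i hi).2 rfl
    · rintro ⟨h1, h2⟩
      exact ⟨h1, fun i hi => ⟨fun e => h2 (Or.inl (e ▸ hi)),
        fun e => h2 (Or.inr ⟨i, hi, e.symm⟩)⟩⟩
  have hdisj : Disjoint L (L.image (· + 1)) := by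
    rw [Finset.disjoint_left]
    rintro x hx hx'
    obtain ⟨i, hi, rfl⟩ := Finset.mem_image.1 hx'
    exact hnotin i hi hx
  have hsub : L ∪ L.image (· + 1) ⊆ Finset.Icc 1 n := by
    intro x hx
    rcases Finset.mem_union.1 hx with hx | hx
    · have := hL1 x hx; exact Finset.mem_Icc.2 ⟨this.1, by omega⟩
    · obtain ⟨i, hi, rfl⟩ := Finset.mem_image.1 hx
      have := hL1 i hi; exact Finset.mem_Icc.2 ⟨by omega, this.2⟩
  rw [hV, Finset.card_sdiff_of_subset hsub, Finset.card_union_of_disjoint hdisj,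
    Finset.card_image_of_injective _ (add_left_injective 1), Nat.card_Icc]
  omega

include hL1 hL2 in
lemma cmap_image : (Sset n L).image (cmap L) = Finset.Icc 1 (n - 2 * L.card) := by
  apply Finset.eq_of_subset_of_card_le
  · intro x hx
    obtain ⟨v, hv, rfl⟩ := Finset.mem_image.1 hx
    exact cmap_mem hL1 hL2 hv
  · rw [Finset.card_image_of_injOn (cmap_strictMonoOn hL1 hL2).injOn,
      Sset_card hL1 hL2, Nat.card_Icc]
    omega

noncomputable def emap (n : ℕ) (L : Finset ℕ) : ℕ → ℕ :=
  Function.invFunOn (cmap L) ↑(Sset n L)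

include hL1 hL2 in
lemma emap_spec {x : ℕ} (hx : x ∈ Finset.Icc 1 (n - 2 * L.card)) :
    emap n L x ∈ Sset n L ∧ cmap L (emap n L x) = x := by
  have : x ∈ (Sset n L).image (cmap L) := by rw [cmap_image hL1 hL2]; exact hx
  obtain ⟨v, hv, he⟩ := Finset.mem_image.1 this
  have hex : ∃ a ∈ (↑(Sset n L) : Set ℕ), cmap L a = x := ⟨v, hv, he⟩
  exact ⟨Function.invFunOn_mem hex, Function.invFunOn_eq hex⟩

include hL1 hL2 in
lemma emap_cmap {v : ℕ} (hv : v ∈ Sset n L) : emap n L (cmap L v) = v :=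
  (cmap_strictMonoOn hL1 hL2).injOn.leftInvOn_invFunOn hv

include hL1 hL2 in
lemma emap_image :
    (Finset.Icc 1 (n - 2 * L.card)).image (emap n L) = Sset n L := by
  apply Finset.Subset.antisymm
  · intro v hv
    obtain ⟨x, hx, rfl⟩ := Finset.mem_image.1 hv
    exact (emap_spec hL1 hL2 hx).1
  · intro v hv
    exact Finset.mem_image.2 ⟨cmap L v, cmap_mem hL1 hL2 hv, emap_cmap hL1 hL2 hv⟩

include hL1 hL2 in
lemma emap_lt_iff {x y : ℕ} (hx : x ∈ Finset.Icc 1 (n - 2 * L.card))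
    (hy : y ∈ Finset.Icc 1 (n - 2 * L.card)) :
    emap n L x < emap n L y ↔ x < y := by
  obtain ⟨hx1, hx2⟩ := emap_spec hL1 hL2 hx
  obtain ⟨hy1, hy2⟩ := emap_spec hL1 hL2 hy
  conv_rhs => rw [← hx2, ← hy2]
  exact ((cmap_strictMonoOn hL1 hL2).lt_iff_lt hx1 hy1).symm

include hL1 hL2 in
lemma emap_injOn : Set.InjOn (emap n L) ↑(Finset.Icc 1 (n - 2 * L.card)) := by
  intro x hx y hy he
  have h1 := (emap_spec hL1 hL2 (Finset.mem_coe.1 hx)).2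
  have h2 := (emap_spec hL1 hL2 (Finset.mem_coe.1 hy)).2
  rw [← h1, ← h2, he]

/-! ### The `dmap`/`gmap` correspondence -/

/-- Rank transfer along a strictly monotone map. -/
lemma rank_transfer (f : ℕ → ℕ) (A : Finset ℕ) (hf : StrictMonoOn f ↑A) {i : ℕ}
    (hi : i ∈ A) :
    ((A.image f).filter (· < f i)).card = (A.filter (· < i)).card := by
  have himg : (A.image f).filter (· < f i) = (A.filter (· < i)).image f := by
    ext y
    simp only [Finset.mem_filter, Finset.mem_image]
    constructor
    · rintro ⟨⟨j, hj, rfl⟩, hlt⟩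
      exact ⟨j, ⟨hj, (hf.lt_iff_lt hj hi).1 hlt⟩, rfl⟩
    · rintro ⟨j, ⟨hj, hlt⟩, rfl⟩
      exact ⟨⟨j, hj, rfl⟩, (hf.lt_iff_lt hj hi).2 hlt⟩
  rw [himg, Finset.card_image_of_injOn (hf.injOn.mono (by
    intro x hx; exact Finset.mem_coe.2 (Finset.filter_subset _ _ (Finset.mem_coe.1 hx))))]

lemma count_lt_self {A : Finset ℕ} (hA : ∀ i ∈ A, 1 ≤ i) {v : ℕ} (hv : 1 ≤ v) :
    (A.filter (· < v)).card < v := by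
  have hsub : A.filter (· < v) ⊆ Finset.Icc 1 (v - 1) := by
    intro i hi
    rw [Finset.mem_filter] at hi
    have := hA i hi.1
    exact Finset.mem_Icc.2 ⟨this, by omega⟩
  have := Finset.card_le_card hsub
  rw [Nat.card_Icc] at this
  omega

include hL1 hL2 in
lemma dmap_strictMonoOn : StrictMonoOn (dmap L) ↑L := by
  intro u hu v hv huv
  rw [Finset.mem_coe] at hu hv
  have hau := count_lt_self (fun i hi => (hL1 i hi).1) (hL1 u hu).1
  have hsplit := count_split L huv.le (u := u) (v := v)
  have hmid : (L.filter (fun i => u ≤ i ∧ i < v)).card ≤ v - u - 1 := by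
    have hsub : L.filter (fun i => u ≤ i ∧ i < v) ⊆ Finset.Icc u (v - 2) := by
      intro i hi
      rw [Finset.mem_filter] at hi
      have := hL2 i hi.1 v hv (by omega)
      exact Finset.mem_Icc.2 ⟨hi.2.1, by omega⟩
    have := Finset.card_le_card hsub
    rw [Nat.card_Icc] at this
    omega
  simp only [dmap]
  omega

include hL1 hL2 in
lemma dmap_mem {i : ℕ} (hi : i ∈ L) : dmap L i ∈ Finset.Icc 1 (n - L.card) := by
  have h1 := count_lt_self (fun j hj => (hL1 j hj).1) (hL1 i hi).1 (v := i)
  have h2 : (L.filter (fun j => ¬ j < i)).card ≤ n - i := by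
    have hsub : L.filter (fun j => ¬ j < i) ⊆ Finset.Icc i (n - 1) := by
      intro j hj
      rw [Finset.mem_filter] at hj
      have := (hL1 j hj.1).2
      exact Finset.mem_Icc.2 ⟨by omega, by omega⟩
    have := Finset.card_le_card hsub
    rw [Nat.card_Icc] at this
    have := (hL1 i hi).2
    omega
  have h3 := Finset.card_filter_add_card_filter_not (s := L) (p := (· < i))
  have hin : i + 1 ≤ n := (hL1 i hi).2
  rw [Finset.mem_Icc]
  simp only [dmap]
  omega

include hL1 hL2 in
lemma gmap_dmap {i : ℕ} (hi : i ∈ L) : gmap (L.image (dmap L)) (dmap L i) = i := by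
  have h1 := count_lt_self (fun j hj => (hL1 j hj).1) (hL1 i hi).1 (v := i)
  rw [gmap, rank_transfer (dmap L) L (dmap_strictMonoOn hL1 hL2) hi]
  simp only [dmap]
  omega

lemma gmap_strictMonoOn : StrictMonoOn (gmap D) ↑D := by
  intro u hu v hv huv
  have hsub : D.filter (· < u) ⊆ D.filter (· < v) := by
    intro i hi
    rw [Finset.mem_filter] at hi ⊢
    exact ⟨hi.1, lt_trans hi.2 huv⟩
  have hmono := Finset.card_le_card hsub
  simp only [gmap]
  omega

include hL1 hL2 in
lemma image_gmap_dmap : (L.image (dmap L)).image (gmap (L.image (dmap L))) = L := by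
  rw [Finset.image_image]
  have : ∀ i ∈ L, (gmap (L.image (dmap L)) ∘ dmap L) i = id i := by
    intro i hi
    simp only [Function.comp_apply, id_eq]
    exact gmap_dmap hL1 hL2 hi
  rw [Finset.image_congr this, Finset.image_id]

lemma count_le_pred {j : ℕ} (hj : j ∈ D) : (D.filter (· < j)).card ≤ D.card - 1 := by
  have hsub : D.filter (· < j) ⊆ D.erase j := by
    intro x hx
    rw [Finset.mem_filter] at hx
    exact Finset.mem_erase.2 ⟨by omega, hx.1⟩
  have := Finset.card_le_card hsub
  rw [Finset.card_erase_of_mem hj] at this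
  exact this

lemma gmap_mem {m : ℕ} (hD : D ⊆ Finset.Icc 1 m) {j : ℕ} (hj : j ∈ D) :
    1 ≤ gmap D j ∧ gmap D j + 1 ≤ m + D.card := by
  have h1 := count_le_pred hj
  have h2 := Finset.mem_Icc.1 (hD hj)
  have h3 : 1 ≤ D.card := Finset.card_pos.2 ⟨j, hj⟩
  simp only [gmap]
  omega

lemma gmap_spread {u v : ℕ} (hu : u ∈ D) (hv : v ∈ D) (huv : u < v) :
    gmap D u + 1 < gmap D v := by
  have hsplit := count_split D huv.le (u := u) (v := v)
  have hmid : 1 ≤ (D.filter (fun i => u ≤ i ∧ i < v)).card :=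
    Finset.card_pos.2 ⟨u, Finset.mem_filter.2 ⟨hu, le_refl u, huv⟩⟩
  simp only [gmap]
  omega

lemma gL_spread {i j : ℕ} (hi : i ∈ D.image (gmap D)) (hj : j ∈ D.image (gmap D))
    (hij : i < j) : i + 1 < j := by
  obtain ⟨u, hu, rfl⟩ := Finset.mem_image.1 hi
  obtain ⟨v, hv, rfl⟩ := Finset.mem_image.1 hj
  have huv : u < v := by
    by_contra hcon
    rcases eq_or_lt_of_le (not_lt.1 hcon) with rfl | h
    · omega
    · exact absurd ((gmap_strictMonoOn hv hu h).trans hij) (lt_irrefl _)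
  exact gmap_spread hu hv huv

lemma dmap_gmap {j : ℕ} (hj : j ∈ D) : dmap (D.image (gmap D)) (gmap D j) = j := by
  rw [dmap, rank_transfer (gmap D) D gmap_strictMonoOn hj]
  simp only [gmap]
  omega

lemma image_dmap_gmap : (D.image (gmap D)).image (dmap (D.image (gmap D))) = D := by
  rw [Finset.image_image]
  have : ∀ j ∈ D, (dmap (D.image (gmap D)) ∘ gmap D) j = id j := by
    intro j hj
    simp only [Function.comp_apply, id_eq]
    exact dmap_gmap hj
  rw [Finset.image_congr this, Finset.image_id]

end Toolkit

/-! ### Transfer of matching structure along strictly monotone maps -/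

lemma image_isPartialMatching (φ : ℕ → ℕ) (A : Finset ℕ) (n' : ℕ)
    (hmono : StrictMonoOn φ ↑A) (hrange : ∀ v ∈ A, φ v ∈ Finset.Icc 1 n')
    (R : Finset (ℕ × ℕ)) (hend : ∀ p ∈ R, p.1 ∈ A ∧ p.2 ∈ A)
    (hlt : ∀ p ∈ R, p.1 < p.2) (hdisj : ArcsDisjoint R) :
    IsPartialMatching n' (R.image (Prod.map φ φ)) := by
  constructor
  · rintro p hp
    obtain ⟨q, hq, rfl⟩ := Finset.mem_image.1 hp
    obtain ⟨h1, h2⟩ := hend q hq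
    have hb1 := Finset.mem_Icc.1 (hrange _ h1)
    have hb2 := Finset.mem_Icc.1 (hrange _ h2)
    exact ⟨hb1.1, hmono h1 h2 (hlt q hq), hb2.2⟩
  · rintro p hp q hq hpq
    obtain ⟨p', hp', rfl⟩ := Finset.mem_image.1 hp
    obtain ⟨q', hq', rfl⟩ := Finset.mem_image.1 hq
    have hne : p' ≠ q' := by rintro rfl; exact hpq rfl
    obtain ⟨e1, e2, e3, e4⟩ := hdisj p' hp' q' hq' hne
    obtain ⟨hp1, hp2⟩ := hend p' hp'
    obtain ⟨hq1, hq2⟩ := hend q' hq'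
    refine ⟨fun h => e1 (hmono.injOn hp1 hq1 h), fun h => e2 (hmono.injOn hp1 hq2 h),
      fun h => e3 (hmono.injOn hp2 hq1 h), fun h => e4 (hmono.injOn hp2 hq2 h)⟩

lemma hasKCrossing_of_image {k : ℕ} (φ : ℕ → ℕ) (A : Finset ℕ)
    (hmono : StrictMonoOn φ ↑A) (R : Finset (ℕ × ℕ))
    (hend : ∀ p ∈ R, p.1 ∈ A ∧ p.2 ∈ A) :
    HasKCrossing k (R.image (Prod.map φ φ)) → HasKCrossing k R := by
  rintro ⟨f, hf, hm1, hm2, hcr⟩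
  have hch : ∀ r : Fin k, ∃ q ∈ R, Prod.map φ φ q = f r := fun r =>
    Finset.mem_image.1 (hf r)
  choose g hg hge using hch
  have hrefl : ∀ u ∈ A, ∀ v ∈ A, φ u < φ v → u < v := by
    intro u hu v hv h
    exact (hmono.lt_iff_lt hu hv).1 h
  have hg1 : ∀ r, φ (g r).1 = (f r).1 := fun r => congrArg Prod.fst (hge r)
  have hg2 : ∀ r, φ (g r).2 = (f r).2 := fun r => congrArg Prod.snd (hge r)
  refine ⟨g, hg, ?_, ?_, ?_⟩
  · intro r s hrs
    exact hrefl _ (hend _ (hg r)).1 _ (hend _ (hg s)).1 (by rw [hg1, hg1]; exact hm1 hrs)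
  · intro r s hrs
    exact hrefl _ (hend _ (hg r)).2 _ (hend _ (hg s)).2 (by rw [hg2, hg2]; exact hm2 hrs)
  · intro r s
    exact hrefl _ (hend _ (hg r)).1 _ (hend _ (hg s)).2 (by rw [hg1, hg2]; exact hcr r s)

lemma one_arc_not_crossing {k : ℕ} (hk : 2 ≤ k) (f : Fin k → ℕ × ℕ)
    (hm1 : StrictMono fun r => (f r).1) (hm2 : StrictMono fun r => (f r).2)
    (hcr : ∀ r s : Fin k, (f r).1 < (f s).2) (r : Fin k) : (f r).2 ≠ (f r).1 + 1 := by
  intro he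
  have h0 : (0 : ℕ) < k := by omega
  have h1 : (1 : ℕ) < k := by omega
  set s : Fin k := if (r : ℕ) = 0 then ⟨1, h1⟩ else ⟨0, h0⟩ with hs
  have hsr : s ≠ r := by
    rw [Ne, Fin.ext_iff, hs]
    by_cases h : (r : ℕ) = 0 <;> simp [h] <;> omega
  rcases lt_or_gt_of_ne hsr with hlt | hgt
  · have hx : (f s).2 < (f r).2 := hm2 hlt
    have hy := hcr r s
    omega
  · have hx : (f r).1 < (f s).1 := hm1 hgt
    have hy := hcr s r
    omega

def isoSet (n : ℕ) (M : Finset (ℕ × ℕ)) : Finset ℕ :=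
  (Finset.Icc 1 n).filter fun v => ∀ p ∈ M, p.1 ≠ v ∧ p.2 ≠ v

lemma isolatedCount_eq_card_isoSet (n : ℕ) (M : Finset (ℕ × ℕ)) :
    isolatedCount n M = (isoSet n M).card := rfl

lemma isoSet_union_oneArcs (n : ℕ) (L : Finset ℕ) (R : Finset (ℕ × ℕ)) :
    isoSet n ((L.image fun i => (i, i + 1)) ∪ R) =
      (Sset n L).filter (fun v => ∀ p ∈ R, p.1 ≠ v ∧ p.2 ≠ v) := by
  ext v
  simp only [isoSet, Sset, Finset.mem_filter, Finset.mem_union]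
  constructor
  · rintro ⟨hIcc, hall⟩
    refine ⟨⟨hIcc, fun i hi => ?_⟩, fun p hp => hall p (Or.inr hp)⟩
    have := hall (i, i + 1) (Or.inl (Finset.mem_image.2 ⟨i, hi, rfl⟩))
    exact ⟨fun e => this.1 e.symm, fun e => this.2 e.symm⟩
  · rintro ⟨⟨hIcc, hL⟩, hR⟩
    refine ⟨hIcc, fun p hp => ?_⟩
    rcases hp with hp | hp
    · obtain ⟨i, hi, rfl⟩ := Finset.mem_image.1 hp
      have := hL i hi
      exact ⟨fun e => this.1 e.symm, fun e => this.2 e.symm⟩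
    · exact hR p hp

lemma filter_untouched_image (φ : ℕ → ℕ) (A : Finset ℕ) (hinj : Set.InjOn φ ↑A)
    (R : Finset (ℕ × ℕ)) (hend : ∀ p ∈ R, p.1 ∈ A ∧ p.2 ∈ A) :
    ((A.image φ).filter
        (fun v => ∀ p ∈ R.image (Prod.map φ φ), p.1 ≠ v ∧ p.2 ≠ v)) =
      (A.filter (fun v => ∀ p ∈ R, p.1 ≠ v ∧ p.2 ≠ v)).image φ := by
  rw [Finset.filter_image]
  congr 1
  apply Finset.filter_congr
  intro a ha
  constructor
  · intro h p hp
    have := h (Prod.map φ φ p) (Finset.mem_image.2 ⟨p, hp, rfl⟩)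
    obtain ⟨h1, h2⟩ := hend p hp
    exact ⟨fun e => this.1 (congrArg φ e), fun e => this.2 (congrArg φ e)⟩
  · intro h p' hp'
    obtain ⟨p, hp, rfl⟩ := Finset.mem_image.1 hp'
    obtain ⟨h1, h2⟩ := hend p hp
    have := h p hp
    exact ⟨fun e => this.1 (hinj h1 ha e), fun e => this.2 (hinj h2 ha e)⟩

/-- In a partial matching on `{1,…,n}`, `#isolated + 2 #arcs = n`. -/
lemma isolated_add_two_mul_card (n : ℕ) (M : Finset (ℕ × ℕ))
    (h : IsPartialMatching n M) : isolatedCount n M + 2 * M.card = n := by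
  obtain ⟨hb, hd⟩ := h
  set E := M.image Prod.fst ∪ M.image Prod.snd with hE
  have hinj1 : Set.InjOn (Prod.fst : ℕ × ℕ → ℕ) ↑M := by
    intro p hp q hq hpq
    by_contra hne
    exact (hd p hp q hq hne).1 hpq
  have hinj2 : Set.InjOn (Prod.snd : ℕ × ℕ → ℕ) ↑M := by
    intro p hp q hq hpq
    by_contra hne
    exact (hd p hp q hq hne).2.2.2 hpq
  have hdisj : Disjoint (M.image Prod.fst) (M.image Prod.snd) := by
    rw [Finset.disjoint_left]
    rintro v hv hv'
    obtain ⟨p, hp, rfl⟩ := Finset.mem_image.1 hv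
    obtain ⟨q, hq, he⟩ := Finset.mem_image.1 hv'
    rcases eq_or_ne p q with rfl | hne
    · have := (hb p hp).2.1; omega
    · exact (hd q hq p hp (Ne.symm hne)).2.2.1 he
  have hEcard : E.card = 2 * M.card := by
    rw [hE, Finset.card_union_of_disjoint hdisj, Finset.card_image_of_injOn hinj1,
      Finset.card_image_of_injOn hinj2]
    omega
  have hEsub : E ⊆ Finset.Icc 1 n := by
    intro v hv
    rcases Finset.mem_union.1 hv with hv | hv
    · obtain ⟨p, hp, rfl⟩ := Finset.mem_image.1 hv
      have := hb p hp; exact Finset.mem_Icc.2 ⟨this.1, by omega⟩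
    · obtain ⟨p, hp, rfl⟩ := Finset.mem_image.1 hv
      have := hb p hp; exact Finset.mem_Icc.2 ⟨by omega, this.2.2⟩
  have hiso : isoSet n M = Finset.Icc 1 n \ E := by
    ext v
    simp only [isoSet, Finset.mem_filter, Finset.mem_sdiff, hE, Finset.mem_union,
      Finset.mem_image]
    constructor
    · rintro ⟨h1, h2⟩
      refine ⟨h1, ?_⟩
      rintro (⟨p, hp, rfl⟩ | ⟨p, hp, rfl⟩)
      · exact (h2 p hp).1 rfl
      · exact (h2 p hp).2 rfl
    · rintro ⟨h1, h2⟩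
      refine ⟨h1, fun p hp => ⟨fun e => h2 (Or.inl ⟨p, hp, e⟩), fun e => h2 (Or.inr ⟨p, hp, e⟩)⟩⟩
  have hcards := Finset.card_le_card hEsub
  rw [isolatedCount_eq_card_isoSet, hiso, Finset.card_sdiff_of_subset hEsub, hEcard]
  rw [Nat.card_Icc] at *
  omega

/-! ### The bijection -/

noncomputable def Phi (M B : Finset (ℕ × ℕ)) : Finset ℕ × Finset (ℕ × ℕ) :=
  ((B.image Prod.fst).image (dmap (B.image Prod.fst)),
    (M \ B).image (Prod.map (cmap (B.image Prod.fst)) (cmap (B.image Prod.fst))))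

noncomputable def Psi (n : ℕ) (D : Finset ℕ) (M' : Finset (ℕ × ℕ)) :
    Finset (ℕ × ℕ) × Finset (ℕ × ℕ) :=
  ((D.image (gmap D)).image (fun i => (i, i + 1)) ∪
      M'.image (Prod.map (emap n (D.image (gmap D))) (emap n (D.image (gmap D)))),
    (D.image (gmap D)).image (fun i => (i, i + 1)))

lemma phi_forward {k n ℓ b : ℕ} (hk : 2 ≤ k) {M B : Finset (ℕ × ℕ)}
    (hM : M ∈ TT k n ℓ) (hB : B ⊆ M.filter (fun p => p.2 = p.1 + 1))
    (hBcard : B.card = b) :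
    (Phi M B).1 ∈ (Finset.Icc 1 (n - b)).powersetCard b ∧
      (Phi M B).2 ∈ TT k (n - 2 * b) ℓ ∧
      Psi n (Phi M B).1 (Phi M B).2 = (M, B) := by
  obtain ⟨hpm, hnc, hiso⟩ := mem_TT.1 hM
  obtain ⟨hbnd, hdisj⟩ := hpm
  set L := B.image Prod.fst with hLdef
  have hBarc : ∀ p ∈ B, p ∈ M ∧ p.2 = p.1 + 1 := fun p hp => by
    have := hB hp; rw [Finset.mem_filter] at this; exact this
  have hBM : B ⊆ M := fun p hp => (hBarc p hp).1
  have hLmem : ∀ i, i ∈ L ↔ (i, i + 1) ∈ B := by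
    intro i
    constructor
    · intro hi
      obtain ⟨p, hp, rfl⟩ := Finset.mem_image.1 hi
      obtain ⟨x, y⟩ := p
      have h2 := (hBarc _ hp).2
      simp only at h2
      rw [h2] at hp
      exact hp
    · intro h
      exact Finset.mem_image.2 ⟨_, h, rfl⟩
  have hL1 : ∀ i ∈ L, 1 ≤ i ∧ i + 1 ≤ n := by
    intro i hi
    have := hbnd _ (hBM ((hLmem i).1 hi))
    exact ⟨this.1, this.2.2⟩
  have hL2 : ∀ i ∈ L, ∀ j ∈ L, i < j → i + 1 < j := by
    intro i hi j hj hij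
    have h1 := hBM ((hLmem i).1 hi)
    have h2 := hBM ((hLmem j).1 hj)
    have hne : ((i, i + 1) : ℕ × ℕ) ≠ (j, j + 1) := by
      intro hc
      rw [Prod.mk.injEq] at hc
      omega
    obtain ⟨e1, e2, e3, e4⟩ := hdisj _ h1 _ h2 hne
    simp only at e1 e2 e3 e4
    omega
  have hLcard : L.card = b := by
    rw [hLdef, Finset.card_image_of_injOn, hBcard]
    intro p hp q hq he
    have hp2 := (hBarc p (Finset.mem_coe.1 hp)).2
    have hq2 := (hBarc q (Finset.mem_coe.1 hq)).2
    exact Prod.ext he (by omega)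
  have hBL : L.image (fun i => (i, i + 1)) = B := by
    ext p
    simp only [Finset.mem_image]
    constructor
    · rintro ⟨i, hi, rfl⟩
      exact (hLmem i).1 hi
    · intro hp
      have h2 := (hBarc p hp).2
      have hpe : (p.1, p.1 + 1) = p := Prod.ext rfl h2.symm
      exact ⟨p.1, (hLmem p.1).2 (by rw [hpe]; exact hp), hpe⟩
  have hRend : ∀ p ∈ M \ B, p.1 ∈ Sset n L ∧ p.2 ∈ Sset n L := by
    intro p hp
    rw [Finset.mem_sdiff] at hp
    obtain ⟨hpM, hpB⟩ := hp
    have hb := hbnd p hpM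
    have key : ∀ i ∈ L, p.1 ≠ i ∧ p.1 ≠ i + 1 ∧ p.2 ≠ i ∧ p.2 ≠ i + 1 := by
      intro i hi
      have hiM := hBM ((hLmem i).1 hi)
      have hne : p ≠ (i, i + 1) := by
        rintro rfl
        exact hpB ((hLmem i).1 hi)
      exact hdisj p hpM _ hiM hne
    constructor
    · exact mem_Sset.2 ⟨Finset.mem_Icc.2 ⟨hb.1, by omega⟩,
        fun i hi => ⟨(key i hi).1, (key i hi).2.1⟩⟩
    · exact mem_Sset.2 ⟨Finset.mem_Icc.2 ⟨by omega, hb.2.2⟩,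
        fun i hi => ⟨(key i hi).2.2.1, (key i hi).2.2.2⟩⟩
  have hRlt : ∀ p ∈ M \ B, p.1 < p.2 := fun p hp =>
    (hbnd p (Finset.mem_sdiff.1 hp).1).2.1
  have hRdisj : ArcsDisjoint (M \ B) := fun p hp q hq hne =>
    hdisj p (Finset.mem_sdiff.1 hp).1 q (Finset.mem_sdiff.1 hq).1 hne
  have hcmono := cmap_strictMonoOn hL1 hL2
  have hcrange : ∀ v ∈ Sset n L, cmap L v ∈ Finset.Icc 1 (n - 2 * b) := by
    intro v hv
    have := cmap_mem hL1 hL2 hv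
    rwa [hLcard] at this
  have hP1 : (Phi M B).1 = L.image (dmap L) := rfl
  have hP2 : (Phi M B).2 = (M \ B).image (Prod.map (cmap L) (cmap L)) := rfl
  refine ⟨?_, ?_, ?_⟩
  · -- D-part
    rw [hP1, Finset.mem_powersetCard]
    constructor
    · rintro x hx
      obtain ⟨i, hi, rfl⟩ := Finset.mem_image.1 hx
      have := dmap_mem hL1 hL2 hi
      rwa [hLcard] at this
    · rw [Finset.card_image_of_injOn (dmap_strictMonoOn hL1 hL2).injOn, hLcard]
  · -- M'-part
    rw [hP2, mem_TT]
    refine ⟨?_, ?_, ?_⟩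
    · exact image_isPartialMatching (cmap L) (Sset n L) (n - 2 * b) hcmono hcrange
        (M \ B) hRend hRlt hRdisj
    · intro hcross
      apply hnc
      obtain ⟨f, hf, h1, h2, h3⟩ :=
        hasKCrossing_of_image (cmap L) (Sset n L) hcmono (M \ B) hRend hcross
      exact ⟨f, fun r => (Finset.sdiff_subset) (hf r), h1, h2, h3⟩
    · have hMsplit : (L.image fun i => (i, i + 1)) ∪ (M \ B) = M := by
        rw [hBL]; exact Finset.union_sdiff_of_subset hBM
      have hisoM : isoSet n M =
          (Sset n L).filter (fun v => ∀ p ∈ M \ B, p.1 ≠ v ∧ p.2 ≠ v) := by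
        conv_lhs => rw [← hMsplit]
        exact isoSet_union_oneArcs n L (M \ B)
      have hcim : (Sset n L).image (cmap L) = Finset.Icc 1 (n - 2 * b) := by
        rw [cmap_image hL1 hL2, hLcard]
      have h1 : isoSet (n - 2 * b) ((M \ B).image
          (Prod.map (cmap L) (cmap L))) = (isoSet n M).image (cmap L) := by
        rw [isoSet, ← hcim,
          filter_untouched_image (cmap L) (Sset n L) hcmono.injOn (M \ B) hRend, hisoM]
      have hsubS : ↑(isoSet n M) ⊆ (↑(Sset n L) : Set ℕ) := by
        rw [hisoM]
        intro x hx
        exact Finset.mem_coe.2 (Finset.filter_subset _ _ (Finset.mem_coe.1 hx))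
      rw [isolatedCount_eq_card_isoSet, h1,
        Finset.card_image_of_injOn (hcmono.injOn.mono hsubS),
        ← isolatedCount_eq_card_isoSet]
      exact hiso
  · -- round trip
    have hD : (Phi M B).1 = L.image (dmap L) := rfl
    have hLL : (L.image (dmap L)).image (gmap (L.image (dmap L))) = L :=
      image_gmap_dmap hL1 hL2
    have hMB : (Phi M B).2 = (M \ B).image (Prod.map (cmap L) (cmap L)) := rfl
    rw [Psi, hD, hMB, hLL, hBL]
    have hcomp : ((M \ B).image (Prod.map (cmap L) (cmap L))).image
        (Prod.map (emap n L) (emap n L)) = M \ B := by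
      rw [Finset.image_image]
      have : ∀ p ∈ M \ B,
          (Prod.map (emap n L) (emap n L) ∘ Prod.map (cmap L) (cmap L)) p = id p := by
        intro p hp
        obtain ⟨h1, h2⟩ := hRend p hp
        obtain ⟨x, y⟩ := p
        simp only [Function.comp_apply, Prod.map_apply', id_eq]
        rw [emap_cmap hL1 hL2 h1, emap_cmap hL1 hL2 h2]
      rw [Finset.image_congr this, Finset.image_id]
    rw [hcomp, Finset.union_sdiff_of_subset hBM]

lemma psi_backward {k n ℓ b : ℕ} (hk : 2 ≤ k) {D : Finset ℕ} {M' : Finset (ℕ × ℕ)}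
    (hD : D ∈ (Finset.Icc 1 (n - b)).powersetCard b) (hM' : M' ∈ TT k (n - 2 * b) ℓ) :
    (Psi n D M').1 ∈ TT k n ℓ ∧
      (Psi n D M').2 ⊆ (Psi n D M').1.filter (fun p => p.2 = p.1 + 1) ∧
      (Psi n D M').2.card = b ∧
      Phi (Psi n D M').1 (Psi n D M').2 = (D, M') := by
  obtain ⟨hDsub, hDcard⟩ := Finset.mem_powersetCard.1 hD
  obtain ⟨hpm', hnc', hiso'⟩ := mem_TT.1 hM'
  obtain ⟨hbnd', hdisj'⟩ := hpm'
  set L := D.image (gmap D) with hLdef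
  have hbn : b ≤ n - b := by
    have := Finset.card_le_card hDsub
    rw [hDcard, Nat.card_Icc] at this
    omega
  have hL1 : ∀ i ∈ L, 1 ≤ i ∧ i + 1 ≤ n := by
    intro i hi
    obtain ⟨j, hj, rfl⟩ := Finset.mem_image.1 hi
    have := gmap_mem hDsub hj
    rw [hDcard] at this
    omega
  have hL2 : ∀ i ∈ L, ∀ j ∈ L, i < j → i + 1 < j := fun i hi j hj hij =>
    gL_spread hi hj hij
  have hLcard : L.card = b := by
    rw [hLdef, Finset.card_image_of_injOn gmap_strictMonoOn.injOn, hDcard]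
  have hn2b : n - 2 * L.card = n - 2 * b := by rw [hLcard]
  have hM'end : ∀ p ∈ M', p.1 ∈ Finset.Icc 1 (n - 2 * L.card) ∧
      p.2 ∈ Finset.Icc 1 (n - 2 * L.card) := by
    intro p hp
    have := hbnd' p hp
    rw [hn2b]
    exact ⟨Finset.mem_Icc.2 ⟨this.1, by omega⟩, Finset.mem_Icc.2 ⟨by omega, this.2.2⟩⟩
  have hemono : StrictMonoOn (emap n L) ↑(Finset.Icc 1 (n - 2 * L.card)) := by
    intro x hx y hy hxy
    exact (emap_lt_iff hL1 hL2 hx hy).2 hxy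
  have heS : ∀ v ∈ Finset.Icc 1 (n - 2 * L.card), emap n L v ∈ Sset n L :=
    fun v hv => (emap_spec hL1 hL2 hv).1
  have hSIcc : ∀ v ∈ Sset n L, v ∈ Finset.Icc 1 n ∧ ∀ i ∈ L, v ≠ i ∧ v ≠ i + 1 :=
    fun v hv => mem_Sset.1 hv
  set X := M'.image (Prod.map (emap n L) (emap n L)) with hXdef
  set B := L.image (fun i => (i, i + 1)) with hBdef
  have hP1 : (Psi n D M').1 = B ∪ X := rfl
  have hP2 : (Psi n D M').2 = B := rfl
  have hBarcs : ∀ p ∈ B, ∃ i ∈ L, p = (i, i + 1) := by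
    intro p hp
    obtain ⟨i, hi, rfl⟩ := Finset.mem_image.1 hp
    exact ⟨i, hi, rfl⟩
  have hXend : ∀ p ∈ X, p.1 ∈ Sset n L ∧ p.2 ∈ Sset n L := by
    rintro p hp
    obtain ⟨q, hq, rfl⟩ := Finset.mem_image.1 hp
    obtain ⟨h1, h2⟩ := hM'end q hq
    exact ⟨heS _ h1, heS _ h2⟩
  have hXpm : IsPartialMatching n X :=
    image_isPartialMatching (emap n L) (Finset.Icc 1 (n - 2 * L.card)) n hemono
      (fun v hv => (hSIcc _ (heS v hv)).1) M' hM'end (fun p hp => (hbnd' p hp).2.1) hdisj'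
  have hdisjBX : Disjoint B X := by
    rw [Finset.disjoint_left]
    intro p hpB hpX
    obtain ⟨i, hi, he⟩ := hBarcs p hpB
    have := ((hSIcc _ (hXend _ hpX).1).2 i hi).1
    rw [he] at this
    exact this rfl
  have hpmM : IsPartialMatching n (B ∪ X) := by
    constructor
    · intro p hp
      rcases Finset.mem_union.1 hp with h | h
      · obtain ⟨i, hi, rfl⟩ := hBarcs p h
        have := hL1 i hi
        exact ⟨this.1, by omega, this.2⟩
      · exact hXpm.1 p h
    · intro p hp q hq hne
      rcases Finset.mem_union.1 hp with h1 | h1 <;> rcases Finset.mem_union.1 hq with h2 | h2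
      · obtain ⟨i, hi, rfl⟩ := hBarcs p h1
        obtain ⟨j, hj, rfl⟩ := hBarcs q h2
        have hij : i ≠ j := by
          intro hc; apply hne; rw [hc]
        have hsp : i + 1 < j ∨ j + 1 < i := by
          rcases lt_or_gt_of_ne hij with h | h
          · exact Or.inl (hL2 i hi j hj h)
          · exact Or.inr (hL2 j hj i hi h)
        show i ≠ j ∧ i ≠ j + 1 ∧ i + 1 ≠ j ∧ i + 1 ≠ j + 1
        omega
      · obtain ⟨i, hi, rfl⟩ := hBarcs p h1
        have hq1 := (hSIcc _ (hXend q h2).1).2 i hi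
        have hq2 := (hSIcc _ (hXend q h2).2).2 i hi
        exact ⟨fun e => hq1.1 e.symm, fun e => hq2.1 e.symm,
          fun e => hq1.2 e.symm, fun e => hq2.2 e.symm⟩
      · obtain ⟨j, hj, rfl⟩ := hBarcs q h2
        have hp1 := (hSIcc _ (hXend p h1).1).2 j hj
        have hp2 := (hSIcc _ (hXend p h1).2).2 j hj
        exact ⟨hp1.1, hp1.2, hp2.1, hp2.2⟩
      · exact hXpm.2 p h1 q h2 hne
  have hncM : KNoncrossing k (B ∪ X) := by
    rintro ⟨f, hf, h1, h2, h3⟩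
    have hX : ∀ r, f r ∈ X := by
      intro r
      rcases Finset.mem_union.1 (hf r) with h | h
      · obtain ⟨i, hi, he⟩ := hBarcs _ h
        exact absurd (by rw [he] : (f r).2 = (f r).1 + 1)
          (one_arc_not_crossing hk f h1 h2 h3 r)
      · exact h
    exact hnc' (hasKCrossing_of_image (emap n L) (Finset.Icc 1 (n - 2 * L.card)) hemono
      M' hM'end ⟨f, hX, h1, h2, h3⟩)
  have hisoM : isolatedCount n (B ∪ X) = ℓ := by
    have h0 : isoSet n (B ∪ X) =
        (Sset n L).filter (fun v => ∀ p ∈ X, p.1 ≠ v ∧ p.2 ≠ v) :=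
      isoSet_union_oneArcs n L X
    have hcim : (Finset.Icc 1 (n - 2 * L.card)).image (emap n L) = Sset n L :=
      emap_image hL1 hL2
    have h1 : isoSet n (B ∪ X) = (isoSet (n - 2 * L.card) M').image (emap n L) := by
      rw [h0, ← hcim, hXdef,
        filter_untouched_image (emap n L) _ (emap_injOn hL1 hL2) M' hM'end]
      rfl
    have hsub : ↑(isoSet (n - 2 * L.card) M') ⊆
        (↑(Finset.Icc 1 (n - 2 * L.card)) : Set ℕ) := by
      intro x hx
      exact Finset.mem_coe.2 (Finset.filter_subset _ _ (Finset.mem_coe.1 hx))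
    rw [isolatedCount_eq_card_isoSet, h1,
      Finset.card_image_of_injOn ((emap_injOn hL1 hL2).mono hsub),
      ← isolatedCount_eq_card_isoSet, hn2b]
    exact hiso'
  refine ⟨?_, ?_, ?_, ?_⟩
  · rw [hP1, mem_TT]
    exact ⟨hpmM, hncM, hisoM⟩
  · rw [hP1, hP2]
    intro p hp
    obtain ⟨i, hi, rfl⟩ := hBarcs p hp
    exact Finset.mem_filter.2 ⟨Finset.mem_union_left _ hp, rfl⟩
  · rw [hP2, hBdef, Finset.card_image_of_injOn (fun x _ y _ e => congrArg Prod.fst e)]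
    exact hLcard
  · rw [hP1, hP2, Phi]
    have hLrec : B.image Prod.fst = L := by
      rw [hBdef, Finset.image_image]
      have : ∀ i ∈ L, (Prod.fst ∘ fun i => (i, i + 1)) i = id i := fun i _ => rfl
      rw [Finset.image_congr this, Finset.image_id]
    rw [hLrec, Finset.union_sdiff_cancel_left hdisjBX]
    have hXM : X.image (Prod.map (cmap L) (cmap L)) = M' := by
      rw [hXdef, Finset.image_image]
      have : ∀ p ∈ M',
          (Prod.map (cmap L) (cmap L) ∘ Prod.map (emap n L) (emap n L)) p = id p := by
        intro p hp
        obtain ⟨h1, h2⟩ := hM'end p hp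
        obtain ⟨x, y⟩ := p
        simp only [Function.comp_apply, Prod.map_apply', id_eq]
        rw [(emap_spec hL1 hL2 h1).2, (emap_spec hL1 hL2 h2).2]
      rw [Finset.image_congr this, Finset.image_id]
    have hLD : L.image (dmap L) = D := by
      rw [hLdef]
      exact image_dmap_gmap
    rw [hXM, hLD]

/-- For `k ≥ 2`, `ℓ ≤ n`:
`S_k(n,ℓ) = Σ_{b=0}^{⌊(n-ℓ)/2⌋} (-1)^b C(n-b,b) f_k(n-2b, ℓ)`. -/
theorem SCount_eq_alternating_sum (k n ℓ : ℕ) (hk : 2 ≤ k) (hl : ℓ ≤ n) :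
    (SCount k n ℓ : ℤ) =
      ∑ b ∈ Finset.range ((n - ℓ) / 2 + 1),
        (-1) ^ b * ((n - b).choose b : ℤ) * (fMatch k (n - 2 * b) ℓ : ℤ) := by
  classical
  set Sig := (TT k n ℓ).sigma
    (fun M => (M.filter (fun p => p.2 = p.1 + 1)).powerset) with hSig
  have step1 : (SCount k n ℓ : ℤ) = ∑ x ∈ Sig, (-1 : ℤ) ^ x.2.card := by
    rw [SCount_eq_card, Finset.card_filter, Nat.cast_sum, hSig, Finset.sum_sigma]
    apply Finset.sum_congr rfl
    intro M _
    rw [Finset.sum_powerset_neg_one_pow_card]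
    by_cases h : (M.filter (fun p => p.2 = p.1 + 1)) = ∅
    · rw [if_pos h]
      rw [Finset.filter_eq_empty_iff] at h
      rw [if_pos h]
      norm_num
    · rw [if_neg h]
      have hne : ¬ (∀ p ∈ M, p.2 ≠ p.1 + 1) := fun hc =>
        h (Finset.filter_eq_empty_iff.2 hc)
      rw [if_neg hne]
      norm_num
  have hmapsto : ∀ x ∈ Sig, x.2.card ∈ Finset.range ((n - ℓ) / 2 + 1) := by
    rintro ⟨M, B⟩ hx
    rw [hSig, Finset.mem_sigma] at hx
    obtain ⟨hM, hB⟩ := hx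
    rw [Finset.mem_powerset] at hB
    have h1 : B.card ≤ M.card :=
      Finset.card_le_card (hB.trans (Finset.filter_subset _ _))
    have h2 := isolated_add_two_mul_card n M (mem_TT.1 hM).1
    rw [(mem_TT.1 hM).2.2] at h2
    show B.card ∈ Finset.range ((n - ℓ) / 2 + 1)
    rw [Finset.mem_range]
    omega
  rw [step1, ← Finset.sum_fiberwise_of_maps_to hmapsto (fun x => (-1 : ℤ) ^ x.2.card)]
  apply Finset.sum_congr rfl
  intro b _
  have hfiber : (Sig.filter (fun x => x.2.card = b)).card =
      ((Finset.Icc 1 (n - b)).powersetCard b ×ˢ TT k (n - 2 * b) ℓ).card := by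
    apply Finset.card_bij' (fun x _ => Phi x.1 x.2)
      (fun y _ => (⟨(Psi n y.1 y.2).1, (Psi n y.1 y.2).2⟩ :
        (_ : Finset (ℕ × ℕ)) × Finset (ℕ × ℕ)))
    · rintro ⟨M, B⟩ hx
      rw [Finset.mem_filter, hSig, Finset.mem_sigma] at hx
      obtain ⟨⟨hM, hB⟩, hcard⟩ := hx
      rw [Finset.mem_powerset] at hB
      obtain ⟨ha, hb', _⟩ := phi_forward hk hM hB hcard
      exact Finset.mem_product.2 ⟨ha, hb'⟩
    · rintro ⟨D, M'⟩ hy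
      rw [Finset.mem_product] at hy
      obtain ⟨hd, hm⟩ := hy
      obtain ⟨h1, h2, h3, _⟩ := psi_backward hk hd hm
      rw [Finset.mem_filter, hSig, Finset.mem_sigma]
      exact ⟨⟨h1, Finset.mem_powerset.2 h2⟩, h3⟩
    · rintro ⟨M, B⟩ hx
      rw [Finset.mem_filter, hSig, Finset.mem_sigma] at hx
      obtain ⟨⟨hM, hB⟩, hcard⟩ := hx
      rw [Finset.mem_powerset] at hB
      obtain ⟨_, _, hround⟩ := phi_forward hk hM hB hcard
      have e1 : (Psi n (Phi M B).1 (Phi M B).2).1 = M := by rw [hround]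
      have e2 : (Psi n (Phi M B).1 (Phi M B).2).2 = B := by rw [hround]
      simp only [e1, e2]
    · rintro ⟨D, M'⟩ hy
      rw [Finset.mem_product] at hy
      obtain ⟨hd, hm⟩ := hy
      obtain ⟨_, _, _, hround⟩ := psi_backward hk hd hm
      exact hround
  have hsum : ∑ x ∈ Sig.filter (fun x => x.2.card = b), (-1 : ℤ) ^ x.2.card =
      ((Sig.filter (fun x => x.2.card = b)).card : ℤ) * (-1 : ℤ) ^ b := by
    rw [Finset.sum_congr rfl (fun x hx => by
      rw [(Finset.mem_filter.1 hx).2] : ∀ x ∈ Sig.filter (fun x => x.2.card = b),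
        (-1 : ℤ) ^ x.2.card = (-1 : ℤ) ^ b), Finset.sum_const, nsmul_eq_mul]
  have hIcc : (Finset.Icc 1 (n - b)).card = n - b := by
    rw [Nat.card_Icc]
    omega
  rw [hsum, hfiber, Finset.card_product, Finset.card_powersetCard, hIcc,
    ← fMatch_eq_card]
  push_cast
  ring
end

section
/- Let k ≥ 2. The total number S_k(n) of k-noncrossing RNA structures on {1,…,n} satisfies S_k(n) = Σ_{b=0}^{⌊n/2⌋} (-1)^b · C(n-b, b) · ( Σ_{ℓ=0}^{n-2b} f_k(n-2b, ℓ) ), where C(·,·) is the binomial coefficient; equivalently, S_k(n) = Σ_{b=0}^{⌊n/2⌋} (-1)^b C(n-b, b) g_k(n-2b), where g_k(m) is the total number of k-noncrossing partial matchings on {1,…,m}. -/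
/-- `S_k(n)`: the total number of `k`-noncrossing RNA structures on `{1,…,n}`
(`k`-noncrossing partial matchings with no 1-arc `(i,i+1)`). -/
noncomputable def STotal (k n : ℕ) : ℕ :=
  Nat.card {M : Finset (ℕ × ℕ) //
    IsPartialMatching n M ∧ KNoncrossing k M ∧ ∀ p ∈ M, p.2 ≠ p.1 + 1}

open Finset

attribute [local instance] Classical.propDecidable

/-- the grid of candidate arcs -/
def grid (n : ℕ) : Finset (ℕ × ℕ) := Finset.Icc 1 n ×ˢ Finset.Icc 1 n

noncomputable def matchSet (k n : ℕ) : Finset (Finset (ℕ × ℕ)) :=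
  (grid n).powerset.filter fun M => IsPartialMatching n M ∧ KNoncrossing k M

lemma subset_grid {n : ℕ} {M : Finset (ℕ × ℕ)} (h : IsPartialMatching n M) :
    M ⊆ grid n := by
  intro p hp
  have := h.1 p hp
  simp only [grid, mem_product, mem_Icc]
  omega

lemma mem_matchSet {k n : ℕ} {M : Finset (ℕ × ℕ)} :
    M ∈ matchSet k n ↔ IsPartialMatching n M ∧ KNoncrossing k M := by
  simp only [matchSet, mem_filter, mem_powerset, and_iff_right_iff_imp]
  exact fun h => subset_grid h.1

lemma nat_card_subtype {P : Finset (ℕ × ℕ) → Prop} {s : Finset (Finset (ℕ × ℕ))}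
    (h : ∀ M, P M ↔ M ∈ s) : Nat.card {M // P M} = s.card := by
  rw [Nat.card_congr (Equiv.subtypeEquivRight h), Nat.card_eq_finsetCard]

lemma STotal_eq (k n : ℕ) :
    STotal k n = ((matchSet k n).filter fun M => ∀ p ∈ M, p.2 ≠ p.1 + 1).card := by
  refine nat_card_subtype fun M => ?_
  simp [mem_filter, mem_matchSet, and_assoc]

lemma fMatch_eq (k n ℓ : ℕ) :
    fMatch k n ℓ = ((matchSet k n).filter fun M => isolatedCount n M = ℓ).card := by
  refine nat_card_subtype fun M => ?_
  simp [mem_filter, mem_matchSet, and_assoc]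

lemma sum_fMatch (k n : ℕ) :
    ∑ ℓ ∈ Finset.range (n + 1), fMatch k n ℓ = (matchSet k n).card := by
  rw [Finset.card_eq_sum_card_fiberwise
    (f := fun M => isolatedCount n M) (t := Finset.range (n + 1))]
  · exact Finset.sum_congr rfl fun ℓ _ => fMatch_eq k n ℓ
  · intro M _
    simp only [Finset.mem_coe, Finset.mem_range]
    have : isolatedCount n M ≤ n := by
      have h1 := Finset.card_filter_le (Finset.Icc 1 n)
        (fun v => ∀ p ∈ M, p.1 ≠ v ∧ p.2 ≠ v)
      simpa [isolatedCount, Nat.card_Icc] using h1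
    omega

section Crossing

lemma crossing_mono {k : ℕ} {M N : Finset (ℕ × ℕ)} (h : M ⊆ N) :
    HasKCrossing k M → HasKCrossing k N := by
  rintro ⟨f, hf, h1, h2, h3⟩
  exact ⟨f, fun r => h (hf r), h1, h2, h3⟩

lemma not_oneArc_of_crossing {k : ℕ} (hk : 2 ≤ k) {f : Fin k → ℕ × ℕ}
    (h1 : StrictMono fun r => (f r).1) (h2 : StrictMono fun r => (f r).2)
    (h3 : ∀ r s, (f r).1 < (f s).2) (r : Fin k) : (f r).2 ≠ (f r).1 + 1 := by
  intro h
  have hex : ∃ s : Fin k, s ≠ r := by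
    by_cases h0 : r.val = 0
    · exact ⟨⟨1, by omega⟩, by intro e; rw [← e] at h0; simp at h0⟩
    · exact ⟨⟨0, by omega⟩, by intro e; rw [← e] at h0; simp at h0⟩
  obtain ⟨s, hs⟩ := hex
  rcases lt_or_gt_of_ne hs with h' | h'
  · have a1 := h2 h'
    have a2 := h3 r s
    simp only at a1
    omega
  · have a1 := h1 h'
    have a2 := h3 s r
    simp only at a1
    omega

/-- any arc participating in a crossing (k ≥ 2) is not a 1-arc; hence crossings
avoid a set `A` of 1-arcs. -/
lemma crossing_sdiff {k : ℕ} (hk : 2 ≤ k) {M A : Finset (ℕ × ℕ)}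
    (hA : ∀ p ∈ A, p.2 = p.1 + 1) :
    HasKCrossing k M → HasKCrossing k (M \ A) := by
  rintro ⟨f, hf, h1, h2, h3⟩
  refine ⟨f, fun r => ?_, h1, h2, h3⟩
  rw [Finset.mem_sdiff]
  refine ⟨hf r, fun hmem => ?_⟩
  exact not_oneArc_of_crossing hk h1 h2 h3 r (hA _ hmem)

lemma crossing_image_iff {D : ℕ → Prop} {ψ : ℕ → ℕ}
    (hψ : ∀ a b, D a → D b → (a < b ↔ ψ a < ψ b)) {M : Finset (ℕ × ℕ)}
    (hM : ∀ p ∈ M, D p.1 ∧ D p.2) (k : ℕ) :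
    HasKCrossing k (M.image fun p => (ψ p.1, ψ p.2)) ↔ HasKCrossing k M := by
  constructor
  · rintro ⟨f, hf, h1, h2, h3⟩
    choose g hg hg2 using fun r => Finset.mem_image.1 (hf r)
    have e1 : ∀ r, ψ (g r).1 = (f r).1 := fun r => congrArg Prod.fst (hg2 r)
    have e2 : ∀ r, ψ (g r).2 = (f r).2 := fun r => congrArg Prod.snd (hg2 r)
    have hD : ∀ r, D (g r).1 ∧ D (g r).2 := fun r => hM _ (hg r)
    refine ⟨g, hg, fun r s hrs => ?_, fun r s hrs => ?_, fun r s => ?_⟩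
    · have := h1 hrs
      simp only [← e1] at this
      exact (hψ _ _ (hD r).1 (hD s).1).2 this
    · have := h2 hrs
      simp only [← e2] at this
      exact (hψ _ _ (hD r).2 (hD s).2).2 this
    · have := h3 r s
      simp only [← e1, ← e2] at this
      exact (hψ _ _ (hD r).1 (hD s).2).2 this
  · rintro ⟨f, hf, h1, h2, h3⟩
    refine ⟨fun r => (ψ (f r).1, ψ (f r).2), fun r => Finset.mem_image_of_mem _ (hf r),
      fun r s hrs => ?_, fun r s hrs => ?_, fun r s => ?_⟩
    · exact (hψ _ _ (hM _ (hf r)).1 (hM _ (hf s)).1).1 (h1 hrs)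
    · exact (hψ _ _ (hM _ (hf r)).2 (hM _ (hf s)).2).1 (h2 hrs)
    · exact (hψ _ _ (hM _ (hf r)).1 (hM _ (hf s)).2).1 (h3 r s)

end Crossing

section Transport

/-- matchings with vertices in an arbitrary finite vertex set `C`. -/
noncomputable def partOn (k : ℕ) (C : Finset ℕ) : Finset (Finset (ℕ × ℕ)) :=
  (C ×ˢ C).powerset.filter fun M =>
    (∀ p ∈ M, p.1 < p.2) ∧ ArcsDisjoint M ∧ KNoncrossing k M

lemma mem_partOn {k : ℕ} {C : Finset ℕ} {M : Finset (ℕ × ℕ)} :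
    M ∈ partOn k C ↔ (∀ p ∈ M, p.1 ∈ C ∧ p.2 ∈ C) ∧
      (∀ p ∈ M, p.1 < p.2) ∧ ArcsDisjoint M ∧ KNoncrossing k M := by
  simp only [partOn, mem_filter, mem_powerset]
  constructor
  · rintro ⟨hs, h⟩
    exact ⟨fun p hp => by simpa [Finset.mem_product] using hs hp, h⟩
  · rintro ⟨hs, h⟩
    exact ⟨fun p hp => by simpa [Finset.mem_product] using hs p hp, h⟩

lemma partOn_Icc (k m : ℕ) : partOn k (Finset.Icc 1 m) = matchSet k m := by
  ext M
  rw [mem_partOn, mem_matchSet]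
  simp only [Finset.mem_Icc, IsPartialMatching]
  constructor
  · rintro ⟨hmem, hlt, hd, hnc⟩
    refine ⟨⟨fun p hp => ?_, hd⟩, hnc⟩
    have := hmem p hp; have := hlt p hp
    omega
  · rintro ⟨⟨hb, hd⟩, hnc⟩
    refine ⟨fun p hp => ?_, fun p hp => (hb p hp).2.1, hd, hnc⟩
    have := hb p hp
    omega

lemma partOn_map {k : ℕ} {C C' : Finset ℕ} {ψ : ℕ → ℕ}
    (hmem : ∀ a, a ∈ C → ψ a ∈ C')
    (hlt : ∀ a b, a ∈ C → b ∈ C → (a < b ↔ ψ a < ψ b))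
    {M : Finset (ℕ × ℕ)} (hM : M ∈ partOn k C) :
    M.image (fun p => (ψ p.1, ψ p.2)) ∈ partOn k C' := by
  obtain ⟨hend, h12, hdisj, hnc⟩ := mem_partOn.1 hM
  have hinj : ∀ a b, a ∈ C → b ∈ C → ψ a = ψ b → a = b := by
    intro a b ha hb hab
    rcases lt_trichotomy a b with h | h | h
    · exact absurd ((hlt a b ha hb).1 h) (by omega)
    · exact h
    · exact absurd ((hlt b a hb ha).1 h) (by omega)
  rw [mem_partOn]
  refine ⟨?_, ?_, ?_, ?_⟩
  · intro x hx
    obtain ⟨p, hp, rfl⟩ := Finset.mem_image.1 hx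
    exact ⟨hmem _ (hend p hp).1, hmem _ (hend p hp).2⟩
  · intro x hx
    obtain ⟨p, hp, rfl⟩ := Finset.mem_image.1 hx
    exact (hlt _ _ (hend p hp).1 (hend p hp).2).1 (h12 p hp)
  · intro x hx y hy hxy
    obtain ⟨p, hp, rfl⟩ := Finset.mem_image.1 hx
    obtain ⟨q, hq, rfl⟩ := Finset.mem_image.1 hy
    have hpq : p ≠ q := by rintro rfl; exact hxy rfl
    obtain ⟨e1, e2, e3, e4⟩ := hdisj p hp q hq hpq
    have c1 := hend p hp; have c2 := hend q hq
    exact ⟨fun h => e1 (hinj _ _ c1.1 c2.1 h), fun h => e2 (hinj _ _ c1.1 c2.2 h),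
      fun h => e3 (hinj _ _ c1.2 c2.1 h), fun h => e4 (hinj _ _ c1.2 c2.2 h)⟩
  · intro hcr
    exact hnc ((crossing_image_iff (D := fun a => a ∈ C)
      (fun a b ha hb => hlt a b ha hb) hend k).1 hcr)

lemma partOn_image_image {C : Finset ℕ} {ψ ψ' : ℕ → ℕ}
    (hinv : ∀ a, a ∈ C → ψ' (ψ a) = a) {M : Finset (ℕ × ℕ)}
    (hend : ∀ p ∈ M, p.1 ∈ C ∧ p.2 ∈ C) :
    (M.image (fun p => (ψ p.1, ψ p.2))).image (fun p => (ψ' p.1, ψ' p.2)) = M := by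
  rw [Finset.image_image]
  have : ∀ p ∈ M, (fun p : ℕ × ℕ => (ψ' p.1, ψ' p.2))
      ((fun p : ℕ × ℕ => (ψ p.1, ψ p.2)) p) = p := by
    intro p hp
    obtain ⟨h1, h2⟩ := hend p hp
    simp [hinv _ h1, hinv _ h2]
  calc M.image _ = M.image id := Finset.image_congr this
    _ = M := Finset.image_id

lemma partOn_card_eq {k m : ℕ} {C C' : Finset ℕ} (hC : C.card = m) (hC' : C'.card = m) :
    (partOn k C).card = (partOn k C').card := by
  set e := C.orderIsoOfFin hC with he
  set e' := C'.orderIsoOfFin hC' with he'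
  set ψ : ℕ → ℕ := fun a => if h : a ∈ C then (e' (e.symm ⟨a, h⟩) : ℕ) else 0 with hψ
  set ψ' : ℕ → ℕ := fun a => if h : a ∈ C' then (e (e'.symm ⟨a, h⟩) : ℕ) else 0 with hψ'
  have hmem : ∀ a, a ∈ C → ψ a ∈ C' := by
    intro a ha
    simp only [hψ, dif_pos ha]
    exact (e' (e.symm ⟨a, ha⟩)).2
  have hmem' : ∀ a, a ∈ C' → ψ' a ∈ C := by
    intro a ha
    simp only [hψ', dif_pos ha]
    exact (e (e'.symm ⟨a, ha⟩)).2
  have hlt : ∀ a b, a ∈ C → b ∈ C → (a < b ↔ ψ a < ψ b) := by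
    intro a b ha hb
    simp only [hψ, dif_pos ha, dif_pos hb]
    rw [Subtype.coe_lt_coe, e'.lt_iff_lt, e.symm.lt_iff_lt, Subtype.mk_lt_mk]
  have hlt' : ∀ a b, a ∈ C' → b ∈ C' → (a < b ↔ ψ' a < ψ' b) := by
    intro a b ha hb
    simp only [hψ', dif_pos ha, dif_pos hb]
    rw [Subtype.coe_lt_coe, e.lt_iff_lt, e'.symm.lt_iff_lt, Subtype.mk_lt_mk]
  have hinv : ∀ a, a ∈ C → ψ' (ψ a) = a := by
    intro a ha
    have h2 : ψ a = ((e' (e.symm ⟨a, ha⟩) : {x // x ∈ C'}) : ℕ) := by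
      simp only [hψ, dif_pos ha]
    have h3 : ψ a ∈ C' := h2 ▸ (e' (e.symm ⟨a, ha⟩)).2
    simp only [hψ', dif_pos h3]
    have h4 : (⟨ψ a, h3⟩ : {x // x ∈ C'}) = e' (e.symm ⟨a, ha⟩) := Subtype.ext h2
    rw [h4, e'.symm_apply_apply, e.apply_symm_apply]
  have hinv' : ∀ a, a ∈ C' → ψ (ψ' a) = a := by
    intro a ha
    have h2 : ψ' a = ((e (e'.symm ⟨a, ha⟩) : {x // x ∈ C}) : ℕ) := by
      simp only [hψ', dif_pos ha]
    have h3 : ψ' a ∈ C := h2 ▸ (e (e'.symm ⟨a, ha⟩)).2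
    simp only [hψ, dif_pos h3]
    have h4 : (⟨ψ' a, h3⟩ : {x // x ∈ C}) = e (e'.symm ⟨a, ha⟩) := Subtype.ext h2
    rw [h4, e.symm_apply_apply, e'.apply_symm_apply]
  refine Finset.card_nbij' (fun M => M.image (fun p => (ψ p.1, ψ p.2)))
    (fun M => M.image (fun p => (ψ' p.1, ψ' p.2)))
    (fun M hM => partOn_map hmem hlt hM) (fun M hM => partOn_map hmem' hlt' hM)
    ?_ ?_
  · intro M hM
    exact partOn_image_image hinv (mem_partOn.1 hM).1
  · intro M hM
    exact partOn_image_image hinv' (mem_partOn.1 hM).1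

end Transport

section OneArcs

def arcVerts (A : Finset (ℕ × ℕ)) : Finset ℕ := A.biUnion fun p => {p.1, p.2}

lemma mem_arcVerts {A : Finset (ℕ × ℕ)} {v : ℕ} :
    v ∈ arcVerts A ↔ ∃ p ∈ A, p.1 = v ∨ p.2 = v := by
  simp [arcVerts, eq_comm]

lemma card_arcVerts {A : Finset (ℕ × ℕ)} (h1 : ∀ p ∈ A, p.1 < p.2)
    (h2 : ArcsDisjoint A) : (arcVerts A).card = 2 * A.card := by
  rw [arcVerts, Finset.card_biUnion]
  · calc ∑ p ∈ A, ({p.1, p.2} : Finset ℕ).card = ∑ _p ∈ A, 2 :=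
        Finset.sum_congr rfl fun p hp => Finset.card_pair (by have := h1 p hp; omega)
      _ = 2 * A.card := by rw [Finset.sum_const, smul_eq_mul, mul_comm]
  · intro p hp q hq hpq
    obtain ⟨e1, e2, e3, e4⟩ := h2 p hp q hq hpq
    simp only [Finset.disjoint_left, Finset.mem_insert, Finset.mem_singleton]
    rintro a (rfl | rfl) <;> omega

lemma arcVerts_subset {n : ℕ} {A : Finset (ℕ × ℕ)} (h : A ⊆ grid n) :
    arcVerts A ⊆ Finset.Icc 1 n := by
  intro v hv
  obtain ⟨p, hp, hpv⟩ := mem_arcVerts.1 hv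
  have := h hp
  simp only [grid, Finset.mem_product] at this
  rcases hpv with rfl | rfl
  · exact this.1
  · exact this.2

lemma card_filter_superset {k n : ℕ} (hk : 2 ≤ k) {A : Finset (ℕ × ℕ)}
    (hA1 : ∀ p ∈ A, p.2 = p.1 + 1) (hA2 : ArcsDisjoint A) (hAg : A ⊆ grid n) :
    ((matchSet k n).filter fun M => A ⊆ M).card = (matchSet k (n - 2 * A.card)).card := by
  have hbounds : ∀ p ∈ A, 1 ≤ p.1 ∧ p.1 < p.2 ∧ p.2 ≤ n := by
    intro p hp
    have := hAg hp
    have h2 := hA1 p hp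
    simp only [grid, Finset.mem_product, Finset.mem_Icc] at this
    omega
  set C := Finset.Icc 1 n \ arcVerts A with hCdef
  have hCcard : C.card = n - 2 * A.card := by
    rw [hCdef, Finset.card_sdiff_of_subset (arcVerts_subset hAg),
      card_arcVerts (fun p hp => (hbounds p hp).2.1) hA2, Nat.card_Icc]
    omega
  have step1 : ((matchSet k n).filter fun M => A ⊆ M).card = (partOn k C).card := by
    refine Finset.card_nbij' (fun M => M \ A) (fun M' => A ∪ M') ?_ ?_ ?_ ?_
    · intro M hM
      rw [Finset.mem_coe, Finset.mem_filter] at hM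
      obtain ⟨hM1, hAM⟩ := hM
      obtain ⟨⟨hb, hd⟩, hnc⟩ := mem_matchSet.1 hM1
      have hend : ∀ p ∈ M \ A, p.1 ∈ C ∧ p.2 ∈ C := by
        intro p hp
        rw [Finset.mem_sdiff] at hp
        obtain ⟨hpM, hpA⟩ := hp
        have hpb := hb p hpM
        have h1 : p.1 ∉ arcVerts A ∧ p.2 ∉ arcVerts A := by
          constructor <;>
          · intro hmem
            obtain ⟨q, hq, hqv⟩ := mem_arcVerts.1 hmem
            have hpq : p ≠ q := fun h => hpA (h ▸ hq)
            have := hd p hpM q (hAM hq) hpq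
            omega
        constructor <;> rw [hCdef, Finset.mem_sdiff, Finset.mem_Icc] <;>
          exact ⟨by omega, by tauto⟩
      rw [Finset.mem_coe, mem_partOn]
      exact ⟨hend, fun p hp => (hb p (Finset.mem_sdiff.1 hp).1).2.1,
        fun p hp q hq hpq => hd p (Finset.mem_sdiff.1 hp).1 q (Finset.mem_sdiff.1 hq).1 hpq,
        fun hcr => hnc (crossing_mono Finset.sdiff_subset hcr)⟩
    · intro M' hM'
      obtain ⟨hend, hlt, hd, hnc⟩ := mem_partOn.1 hM'
      have hendIcc : ∀ p ∈ M', 1 ≤ p.1 ∧ p.1 < p.2 ∧ p.2 ≤ n := by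
        intro p hp
        have h1 := (hend p hp).1
        have h2 := (hend p hp).2
        rw [hCdef, Finset.mem_sdiff, Finset.mem_Icc] at h1 h2
        exact ⟨h1.1.1, hlt p hp, h2.1.2⟩
      have hnotV : ∀ p ∈ M', p.1 ∉ arcVerts A ∧ p.2 ∉ arcVerts A := by
        intro p hp
        have h1 := (hend p hp).1
        have h2 := (hend p hp).2
        rw [hCdef, Finset.mem_sdiff] at h1 h2
        exact ⟨h1.2, h2.2⟩
      have hAV : ∀ p ∈ A, p.1 ∈ arcVerts A ∧ p.2 ∈ arcVerts A := by
        intro p hp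
        exact ⟨mem_arcVerts.2 ⟨p, hp, Or.inl rfl⟩, mem_arcVerts.2 ⟨p, hp, Or.inr rfl⟩⟩
      rw [Finset.mem_coe, Finset.mem_filter, mem_matchSet]
      refine ⟨⟨⟨?_, ?_⟩, ?_⟩, Finset.subset_union_left⟩
      · intro p hp
        rcases Finset.mem_union.1 hp with h | h
        · exact hbounds p h
        · exact hendIcc p h
      · intro p hp q hq hpq
        rcases Finset.mem_union.1 hp with h | h <;> rcases Finset.mem_union.1 hq with h' | h'
        · exact hA2 p h q h' hpq
        · have u := hAV p h
          have v := hnotV q h'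
          exact ⟨fun e => v.1 (e ▸ u.1), fun e => v.2 (e ▸ u.1),
            fun e => v.1 (e ▸ u.2), fun e => v.2 (e ▸ u.2)⟩
        · have u := hAV q h'
          have v := hnotV p h
          exact ⟨fun e => v.1 (by rw [e]; exact u.1), fun e => v.1 (by rw [e]; exact u.2),
            fun e => v.2 (by rw [e]; exact u.1), fun e => v.2 (by rw [e]; exact u.2)⟩
        · exact hd p h q h' hpq
      · intro hcr
        have h2 := crossing_sdiff hk hA1 hcr
        have h3 : (A ∪ M') \ A ⊆ M' := by
          intro x hx
          rw [Finset.mem_sdiff, Finset.mem_union] at hx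
          tauto
        exact hnc (crossing_mono h3 h2)
    · intro M hM
      rw [Finset.mem_coe, Finset.mem_filter] at hM
      exact Finset.union_sdiff_of_subset hM.2
    · intro M' hM'
      obtain ⟨hend, _, _, _⟩ := mem_partOn.1 hM'
      apply Finset.union_sdiff_cancel_left
      rw [Finset.disjoint_left]
      intro p hpA hpM'
      have h1 := (hend p hpM').1
      rw [hCdef, Finset.mem_sdiff] at h1
      exact h1.2 (mem_arcVerts.2 ⟨p, hpA, Or.inl rfl⟩)
  rw [step1, ← partOn_Icc k (n - 2 * A.card)]
  exact partOn_card_eq hCcard (by rw [Nat.card_Icc]; omega)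
end OneArcs

section Counting

lemma mono_iff_of_strict {s : Finset ℕ} {f : ℕ → ℕ}
    (h : ∀ x ∈ s, ∀ y ∈ s, x < y → f x < f y) :
    ∀ x ∈ s, ∀ y ∈ s, (x < y ↔ f x < f y) := by
  intro x hx y hy
  constructor
  · exact h x hx y hy
  · intro hf
    rcases lt_trichotomy x y with h' | rfl | h'
    · exact h'
    · omega
    · exact absurd (h y hy x hx h') (by omega)

lemma count_below_image {s : Finset ℕ} {f : ℕ → ℕ}
    (hf : ∀ a ∈ s, ∀ b ∈ s, (a < b ↔ f a < f b)) {a : ℕ} (ha : a ∈ s) :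
    ((s.image f).filter (· < f a)).card = (s.filter (· < a)).card := by
  have heq : (s.image f).filter (· < f a) = (s.filter (· < a)).image f := by
    ext z
    simp only [Finset.mem_filter, Finset.mem_image]
    constructor
    · rintro ⟨⟨y, hy, rfl⟩, hz⟩
      exact ⟨y, ⟨hy, (hf y hy a ha).2 hz⟩, rfl⟩
    · rintro ⟨y, ⟨hy, hya⟩, rfl⟩
      exact ⟨⟨y, hy, rfl⟩, (hf y hy a ha).1 hya⟩
  rw [heq]
  apply Finset.card_image_of_injOn
  intro x hx y hy hxy
  rw [Finset.coe_filter, Set.mem_setOf_eq] at hx hy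
  rcases lt_trichotomy x y with h' | h' | h'
  · exact absurd ((hf x hx.1 y hy.1).1 h') (by omega)
  · exact h'
  · exact absurd ((hf y hy.1 x hx.1).1 h') (by omega)

noncomputable def goodA (n b : ℕ) : Finset (Finset (ℕ × ℕ)) :=
  (grid n).powerset.filter fun A =>
    (∀ p ∈ A, p.2 = p.1 + 1) ∧ ArcsDisjoint A ∧ A.card = b

noncomputable def spreadSet (n b : ℕ) : Finset (Finset ℕ) :=
  (Finset.Icc 1 (n - 1)).powerset.filter fun S =>
    S.card = b ∧ ∀ x ∈ S, ∀ y ∈ S, x < y → x + 2 ≤ y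

lemma goodA_card_eq_spread (n b : ℕ) : (goodA n b).card = (spreadSet n b).card := by
  refine Finset.card_nbij' (fun A => A.image Prod.fst)
    (fun S => S.image fun x => (x, x + 1)) ?_ ?_ ?_ ?_
  · intro A hA
    simp only [Finset.mem_coe, goodA, Finset.mem_filter, Finset.mem_powerset] at hA
    obtain ⟨hsub, h1, hd, hcard⟩ := hA
    have hbnd : ∀ p ∈ A, 1 ≤ p.1 ∧ p.1 + 1 ≤ n := by
      intro p hp
      have := hsub hp
      simp only [grid, Finset.mem_product, Finset.mem_Icc] at this
      have := h1 p hp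
      omega
    simp only [Finset.mem_coe, spreadSet, Finset.mem_filter, Finset.mem_powerset]
    refine ⟨?_, ?_, ?_⟩
    · intro x hx
      obtain ⟨p, hp, rfl⟩ := Finset.mem_image.1 hx
      have := hbnd p hp
      rw [Finset.mem_Icc]
      omega
    · rw [Finset.card_image_of_injOn, hcard]
      intro p hp q hq hpq
      have hp' : p ∈ A := hp
      have hq' : q ∈ A := hq
      by_contra hne
      exact (hd p hp' q hq' hne).1 hpq
    · intro x hx y hy hxy
      obtain ⟨p, hp, rfl⟩ := Finset.mem_image.1 hx
      obtain ⟨q, hq, rfl⟩ := Finset.mem_image.1 hy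
      have hne : p ≠ q := fun h => by rw [h] at hxy; omega
      have := hd p hp q hq hne
      have e1 := h1 p hp
      omega
  · intro S hS
    simp only [Finset.mem_coe, spreadSet, Finset.mem_filter, Finset.mem_powerset] at hS
    obtain ⟨hsub, hcard, hsp⟩ := hS
    have hbnd : ∀ x ∈ S, 1 ≤ x ∧ x ≤ n - 1 := fun x hx => by
      have := hsub hx; rw [Finset.mem_Icc] at this; exact this
    simp only [Finset.mem_coe, goodA, Finset.mem_filter, Finset.mem_powerset]
    refine ⟨?_, ?_, ?_, ?_⟩
    · intro p hp
      obtain ⟨x, hx, rfl⟩ := Finset.mem_image.1 hp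
      have := hbnd x hx
      simp only [grid, Finset.mem_product, Finset.mem_Icc]
      omega
    · intro p hp
      obtain ⟨x, hx, rfl⟩ := Finset.mem_image.1 hp
      rfl
    · intro p hp q hq hpq
      obtain ⟨x, hx, rfl⟩ := Finset.mem_image.1 hp
      obtain ⟨y, hy, rfl⟩ := Finset.mem_image.1 hq
      have hne : x ≠ y := fun h => hpq (by rw [h])
      rcases lt_or_gt_of_ne hne with h' | h'
      · have := hsp x hx y hy h'
        simp only
        omega
      · have := hsp y hy x hx h'
        simp only
        omega
    · rw [Finset.card_image_of_injOn, hcard]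
      intro x _ y _ h
      exact congrArg Prod.fst h
  · intro A hA
    simp only [Finset.mem_coe, goodA, Finset.mem_filter, Finset.mem_powerset] at hA
    refine Finset.image_image.trans ((Finset.image_congr (g := id) fun p hp => ?_).trans
      Finset.image_id)
    have h := hA.2.1 p hp
    simp only [Function.comp_apply, id_eq]
    exact Prod.ext rfl h.symm
  · intro S _
    exact Finset.image_image.trans
      ((Finset.image_congr (g := id) fun x _ => rfl).trans Finset.image_id)

lemma spread_card (n b : ℕ) : (spreadSet n b).card = (n - b).choose b := by
  have key : (spreadSet n b).card = ((Finset.Icc 1 (n - b)).powersetCard b).card := by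
    refine Finset.card_nbij' (fun S => S.image fun x => x - (S.filter (· < x)).card)
      (fun T => T.image fun t => t + (T.filter (· < t)).card) ?_ ?_ ?_ ?_
    · intro S hS
      simp only [Finset.mem_coe, spreadSet, Finset.mem_filter, Finset.mem_powerset] at hS
      obtain ⟨hsub, hcard, hsp⟩ := hS
      have hbnd : ∀ x ∈ S, 1 ≤ x ∧ x ≤ n - 1 := fun x hx => by
        have := hsub hx; rw [Finset.mem_Icc] at this; exact this
      have hcle : ∀ x ∈ S, (S.filter (· < x)).card + 1 ≤ x := by
        intro x hx
        have h1 : S.filter (· < x) ⊆ Finset.Icc 1 (x - 1) := by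
          intro z hz
          rw [Finset.mem_filter] at hz
          have := hbnd z hz.1
          rw [Finset.mem_Icc]
          omega
        have h2 := Finset.card_le_card h1
        rw [Nat.card_Icc] at h2
        have := (hbnd x hx).1
        omega
      have hmono : ∀ x ∈ S, ∀ y ∈ S, x < y →
          x - (S.filter (· < x)).card < y - (S.filter (· < y)).card := by
        intro x hx y hy hxy
        have hy2 : x + 2 ≤ y := hsp x hx y hy hxy
        have hsubu : S.filter (· < y) ⊆
            (S.filter (· < x)) ∪ ((Finset.Ico x y).erase (x + 1)) := by
          intro z hz
          rw [Finset.mem_filter] at hz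
          rw [Finset.mem_union, Finset.mem_filter, Finset.mem_erase, Finset.mem_Ico]
          by_cases hzx : z < x
          · exact Or.inl ⟨hz.1, hzx⟩
          · refine Or.inr ⟨?_, by omega⟩
            intro hz1
            have := hsp x hx z hz.1 (by omega)
            omega
        have hcu := Finset.card_le_card hsubu
        have hcu2 := Finset.card_union_le (S.filter (· < x))
          ((Finset.Ico x y).erase (x + 1))
        have hce : ((Finset.Ico x y).erase (x + 1)).card = y - x - 1 := by
          rw [Finset.card_erase_of_mem (by rw [Finset.mem_Ico]; omega), Nat.card_Ico]
        have := hcle x hx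
        omega
      rw [Finset.mem_coe, Finset.mem_powersetCard]
      constructor
      · intro z hz
        obtain ⟨x, hx, rfl⟩ := Finset.mem_image.1 hz
        have h1 := hcle x hx
        rw [Finset.mem_Icc]
        refine ⟨by omega, ?_⟩
        -- upper bound : x - c x ≤ n - b
        set q := (S.filter fun z => ¬ z < x).card with hq
        have hqc : (S.filter (· < x)).card + q = b := by
          rw [hq, ← hcard]
          exact Finset.card_filter_add_card_filter_not _
        have hq1 : 1 ≤ q := by
          rw [hq]
          refine Finset.card_pos.2 ⟨x, ?_⟩
          rw [Finset.mem_filter]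
          exact ⟨hx, by omega⟩
        have hU : ((S.filter fun z => ¬ z < x).biUnion fun z => {z, z + 1}).card
            = 2 * q := by
          rw [Finset.card_biUnion]
          · calc ∑ z ∈ S.filter fun z => ¬ z < x, ({z, z + 1} : Finset ℕ).card
                = ∑ _z ∈ S.filter fun z => ¬ z < x, 2 :=
                  Finset.sum_congr rfl fun z _ => Finset.card_pair (by omega)
              _ = 2 * q := by rw [Finset.sum_const, smul_eq_mul, mul_comm]
          · intro z hz w hw hzw
            rw [Finset.mem_coe, Finset.mem_filter] at hz hw
            rcases lt_or_gt_of_ne hzw with h' | h'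
            · have := hsp z hz.1 w hw.1 h'
              simp only [Finset.disjoint_left, Finset.mem_insert, Finset.mem_singleton]
              rintro a (rfl | rfl) <;> omega
            · have := hsp w hw.1 z hz.1 h'
              simp only [Finset.disjoint_left, Finset.mem_insert, Finset.mem_singleton]
              rintro a (rfl | rfl) <;> omega
        have hUsub : ((S.filter fun z => ¬ z < x).biUnion fun z => {z, z + 1})
            ⊆ Finset.Icc x n := by
          intro a ha
          rw [Finset.mem_biUnion] at ha
          obtain ⟨z, hz, ha⟩ := ha
          rw [Finset.mem_filter] at hz
          have := hbnd z hz.1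
          simp only [Finset.mem_insert, Finset.mem_singleton] at ha
          rw [Finset.mem_Icc]
          rcases ha with rfl | rfl <;> omega
        have hle := Finset.card_le_card hUsub
        rw [hU, Nat.card_Icc] at hle
        omega
      · rw [Finset.card_image_of_injOn, hcard]
        intro x hx y hy hxy
        rw [Finset.mem_coe] at hx hy
        dsimp only at hxy
        rcases lt_trichotomy x y with h' | h' | h'
        · exact absurd (hmono x hx y hy h') (by omega)
        · exact h'
        · exact absurd (hmono y hy x hx h') (by omega)
    · intro T hT
      rw [Finset.mem_coe, Finset.mem_powersetCard] at hT
      obtain ⟨hsub, hcard⟩ := hT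
      have hbnd : ∀ t ∈ T, 1 ≤ t ∧ t ≤ n - b := fun t ht => by
        have := hsub ht; rw [Finset.mem_Icc] at this; exact this
      have hcle : ∀ t ∈ T, (T.filter (· < t)).card + 1 ≤ b := by
        intro t ht
        have h1 : T.filter (· < t) ⊆ T.erase t := by
          intro z hz
          rw [Finset.mem_filter] at hz
          rw [Finset.mem_erase]
          exact ⟨by omega, hz.1⟩
        have h2 := Finset.card_le_card h1
        rw [Finset.card_erase_of_mem ht, hcard] at h2
        have : 1 ≤ b := by rw [← hcard]; exact Finset.card_pos.2 ⟨t, ht⟩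
        omega
      have hmono : ∀ t ∈ T, ∀ u ∈ T, t < u →
          t + (T.filter (· < t)).card + 2 ≤ u + (T.filter (· < u)).card := by
        intro t ht u hu htu
        have hss : T.filter (· < t) ⊂ T.filter (· < u) := by
          constructor
          · intro z hz
            rw [Finset.mem_filter] at hz ⊢
            exact ⟨hz.1, by omega⟩
          · intro hcon
            have : t ∈ T.filter (· < t) := hcon (by rw [Finset.mem_filter]; exact ⟨ht, htu⟩)
            rw [Finset.mem_filter] at this
            omega
        have := Finset.card_lt_card hss
        omega
      simp only [Finset.mem_coe, spreadSet, Finset.mem_filter, Finset.mem_powerset]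
      refine ⟨?_, ?_, ?_⟩
      · intro z hz
        obtain ⟨t, ht, rfl⟩ := Finset.mem_image.1 hz
        have h1 := hbnd t ht
        have h2 := hcle t ht
        rw [Finset.mem_Icc]
        omega
      · rw [Finset.card_image_of_injOn, hcard]
        intro x hx y hy hxy
        rw [Finset.mem_coe] at hx hy
        dsimp only at hxy
        rcases lt_trichotomy x y with h' | h' | h'
        · exact absurd (hmono x hx y hy h') (by omega)
        · exact h'
        · exact absurd (hmono y hy x hx h') (by omega)
      · intro x hx y hy hxy
        obtain ⟨t, ht, rfl⟩ := Finset.mem_image.1 hx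
        obtain ⟨u, hu, rfl⟩ := Finset.mem_image.1 hy
        have hne : t ≠ u := by
          rintro rfl; exact absurd hxy (lt_irrefl _)
        rcases lt_or_gt_of_ne hne with h' | h'
        · exact hmono t ht u hu h'
        · have := hmono u hu t ht h'
          omega
    · -- left inverse
      intro S hS
      simp only [Finset.mem_coe, spreadSet, Finset.mem_filter, Finset.mem_powerset] at hS
      obtain ⟨hsub, hcard, hsp⟩ := hS
      have hbnd : ∀ x ∈ S, 1 ≤ x ∧ x ≤ n - 1 := fun x hx => by
        have := hsub hx; rw [Finset.mem_Icc] at this; exact this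
      have hcle : ∀ x ∈ S, (S.filter (· < x)).card + 1 ≤ x := by
        intro x hx
        have h1 : S.filter (· < x) ⊆ Finset.Icc 1 (x - 1) := by
          intro z hz
          rw [Finset.mem_filter] at hz
          have := hbnd z hz.1
          rw [Finset.mem_Icc]
          omega
        have h2 := Finset.card_le_card h1
        rw [Nat.card_Icc] at h2
        have := (hbnd x hx).1
        omega
      have hmono : ∀ x ∈ S, ∀ y ∈ S, x < y →
          x - (S.filter (· < x)).card < y - (S.filter (· < y)).card := by
        intro x hx y hy hxy
        have hy2 : x + 2 ≤ y := hsp x hx y hy hxy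
        have hsubu : S.filter (· < y) ⊆
            (S.filter (· < x)) ∪ ((Finset.Ico x y).erase (x + 1)) := by
          intro z hz
          rw [Finset.mem_filter] at hz
          rw [Finset.mem_union, Finset.mem_filter, Finset.mem_erase, Finset.mem_Ico]
          by_cases hzx : z < x
          · exact Or.inl ⟨hz.1, hzx⟩
          · refine Or.inr ⟨?_, by omega⟩
            intro hz1
            have := hsp x hx z hz.1 (by omega)
            omega
        have hcu := Finset.card_le_card hsubu
        have hcu2 := Finset.card_union_le (S.filter (· < x))
          ((Finset.Ico x y).erase (x + 1))
        have hce : ((Finset.Ico x y).erase (x + 1)).card = y - x - 1 := by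
          rw [Finset.card_erase_of_mem (by rw [Finset.mem_Ico]; omega), Nat.card_Ico]
        have := hcle x hx
        omega
      have hiff := mono_iff_of_strict (s := S)
        (f := fun x => x - (S.filter (· < x)).card) hmono
      have key : ∀ x ∈ S,
          (x - (S.filter (· < x)).card) +
            (((S.image fun x => x - (S.filter (· < x)).card).filter
              (· < (x - (S.filter (· < x)).card))).card) = x := by
        intro x hx
        rw [count_below_image hiff hx]
        have := hcle x hx
        omega
      exact Finset.image_image.trans
        ((Finset.image_congr (g := id) fun x hx => key x hx).trans Finset.image_id)
    · -- right inverse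
      intro T hT
      rw [Finset.mem_coe, Finset.mem_powersetCard] at hT
      obtain ⟨hsub, hcard⟩ := hT
      have hmono : ∀ t ∈ T, ∀ u ∈ T, t < u →
          t + (T.filter (· < t)).card < u + (T.filter (· < u)).card := by
        intro t ht u hu htu
        have : (T.filter (· < t)).card ≤ (T.filter (· < u)).card := by
          apply Finset.card_le_card
          intro z hz
          rw [Finset.mem_filter] at hz ⊢
          exact ⟨hz.1, by omega⟩
        omega
      have hiff := mono_iff_of_strict (s := T)
        (f := fun t => t + (T.filter (· < t)).card) hmono
      have key : ∀ t ∈ T,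
          (t + (T.filter (· < t)).card) -
            (((T.image fun t => t + (T.filter (· < t)).card).filter
              (· < (t + (T.filter (· < t)).card))).card) = t := by
        intro t ht
        rw [count_below_image hiff ht]
        omega
      exact Finset.image_image.trans
        ((Finset.image_congr (g := id) fun t ht => key t ht).trans Finset.image_id)
  rw [key, Finset.card_powersetCard, Nat.card_Icc]
  congr 1

lemma goodA_card (n b : ℕ) : (goodA n b).card = (n - b).choose b := by
  rw [goodA_card_eq_spread, spread_card]

end Counting

/-- For `k ≥ 2`:
`S_k(n) = Σ_{b=0}^{⌊n/2⌋} (-1)^b C(n-b,b) (Σ_{ℓ=0}^{n-2b} f_k(n-2b, ℓ))`. -/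
theorem STotal_eq_alternating_sum (k n : ℕ) (hk : 2 ≤ k) :
    (STotal k n : ℤ) =
      ∑ b ∈ Finset.range (n / 2 + 1),
        (-1) ^ b * ((n - b).choose b : ℤ) *
          ∑ ℓ ∈ Finset.range (n - 2 * b + 1), (fMatch k (n - 2 * b) ℓ : ℤ) := by
  classical
  have hgridmem : ∀ M ∈ matchSet k n, M ⊆ grid n :=
    fun M hM => subset_grid (mem_matchSet.1 hM).1
  have hps : ∀ M ∈ matchSet k n, (M.filter fun p => p.2 = p.1 + 1).powerset
      = (grid n).powerset.filter (fun A => A ⊆ M ∧ ∀ p ∈ A, p.2 = p.1 + 1) := by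
    intro M hM
    ext A
    simp only [Finset.mem_powerset, Finset.mem_filter]
    constructor
    · intro h
      have h1 : A ⊆ M := fun x hx => (Finset.mem_filter.1 (h hx)).1
      have h2 : ∀ p ∈ A, p.2 = p.1 + 1 := fun p hp => (Finset.mem_filter.1 (h hp)).2
      exact ⟨h1.trans (hgridmem M hM), h1, h2⟩
    · rintro ⟨_, h1, h2⟩
      intro x hx
      exact Finset.mem_filter.2 ⟨h1 hx, h2 x hx⟩
  set D := (grid n).powerset.filter
    (fun A => (∀ p ∈ A, p.2 = p.1 + 1) ∧ ArcsDisjoint A) with hD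
  have hDg : ∀ b, D.filter (fun A => A.card = b) = goodA n b := by
    intro b
    rw [hD]
    ext A
    simp only [goodA, Finset.mem_filter, Finset.mem_powerset]
    tauto
  calc (STotal k n : ℤ)
      = (((matchSet k n).filter fun M => ∀ p ∈ M, p.2 ≠ p.1 + 1).card : ℤ) := by
        rw [STotal_eq]
    _ = ∑ M ∈ matchSet k n,
          ∑ A ∈ (M.filter fun p => p.2 = p.1 + 1).powerset, (-1 : ℤ) ^ A.card := by
        rw [Finset.card_filter, Nat.cast_sum]
        refine Finset.sum_congr rfl fun M _ => ?_
        by_cases h : ∀ p ∈ M, p.2 ≠ p.1 + 1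
        · rw [if_pos h, Nat.cast_one]
          have hE : M.filter (fun p => p.2 = p.1 + 1) = ∅ :=
            Finset.filter_eq_empty_iff.2 fun p hp => h p hp
          rw [hE]
          simp
        · rw [if_neg h, Nat.cast_zero]
          have hne : (M.filter fun p => p.2 = p.1 + 1).Nonempty := by
            push_neg at h
            obtain ⟨p, hp, hp2⟩ := h
            exact ⟨p, Finset.mem_filter.2 ⟨hp, by omega⟩⟩
          exact (Finset.sum_powerset_neg_one_pow_card_of_nonempty hne).symm
    _ = ∑ M ∈ matchSet k n, ∑ A ∈ (grid n).powerset,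
          if (A ⊆ M ∧ ∀ p ∈ A, p.2 = p.1 + 1) then (-1 : ℤ) ^ A.card else 0 := by
        refine Finset.sum_congr rfl fun M hM => ?_
        rw [hps M hM, Finset.sum_filter]
    _ = ∑ A ∈ (grid n).powerset, ∑ M ∈ matchSet k n,
          if (A ⊆ M ∧ ∀ p ∈ A, p.2 = p.1 + 1) then (-1 : ℤ) ^ A.card else 0 :=
        Finset.sum_comm
    _ = ∑ A ∈ (grid n).powerset,
          ((((matchSet k n).filter fun M => A ⊆ M ∧ ∀ p ∈ A, p.2 = p.1 + 1).card : ℤ))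
            * (-1) ^ A.card := by
        refine Finset.sum_congr rfl fun A _ => ?_
        rw [← Finset.sum_filter, Finset.sum_const, nsmul_eq_mul]
    _ = ∑ A ∈ D,
          ((((matchSet k n).filter fun M => A ⊆ M ∧ ∀ p ∈ A, p.2 = p.1 + 1).card : ℤ))
            * (-1) ^ A.card := by
        refine (Finset.sum_subset (Finset.filter_subset _ _) ?_).symm
        intro A hA hAD
        have hempty : (matchSet k n).filter
            (fun M => A ⊆ M ∧ ∀ p ∈ A, p.2 = p.1 + 1) = ∅ := by
          rw [Finset.filter_eq_empty_iff]
          rintro M hM ⟨hAM, h1a⟩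
          apply hAD
          rw [Finset.mem_filter]
          refine ⟨hA, h1a, ?_⟩
          intro p hp q hq hpq
          exact (mem_matchSet.1 hM).1.2 p (hAM hp) q (hAM hq) hpq
        rw [hempty]
        simp
    _ = ∑ A ∈ D, ((((matchSet k n).filter fun M => A ⊆ M).card : ℤ)) * (-1) ^ A.card := by
        refine Finset.sum_congr rfl fun A hA => ?_
        simp only [hD, Finset.mem_filter] at hA
        have heq : (matchSet k n).filter (fun M => A ⊆ M ∧ ∀ p ∈ A, p.2 = p.1 + 1)
            = (matchSet k n).filter (fun M => A ⊆ M) :=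
          Finset.filter_congr fun M _ => ⟨fun h => h.1, fun h => ⟨h, hA.2.1⟩⟩
        rw [heq]
    _ = ∑ b ∈ Finset.range (n / 2 + 1), ∑ A ∈ D.filter (fun A => A.card = b),
          ((((matchSet k n).filter fun M => A ⊆ M).card : ℤ)) * (-1) ^ A.card := by
        refine (Finset.sum_fiberwise_of_maps_to ?_ _).symm
        intro A hA
        simp only [hD, Finset.mem_filter, Finset.mem_powerset] at hA
        obtain ⟨hApow, h1a, hdisj⟩ := hA
        have h2 : (arcVerts A).card = 2 * A.card :=
          card_arcVerts (fun p hp => by rw [h1a p hp]; omega) hdisj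
        have h3 := Finset.card_le_card (arcVerts_subset hApow)
        rw [Nat.card_Icc, h2] at h3
        rw [Finset.mem_range]
        omega
    _ = ∑ b ∈ Finset.range (n / 2 + 1),
        (-1) ^ b * ((n - b).choose b : ℤ) *
          ∑ ℓ ∈ Finset.range (n - 2 * b + 1), (fMatch k (n - 2 * b) ℓ : ℤ) := by
        refine Finset.sum_congr rfl fun b _ => ?_
        rw [hDg b]
        have hterm : ∀ A ∈ goodA n b,
            ((((matchSet k n).filter fun M => A ⊆ M).card : ℤ)) * (-1) ^ A.card
              = ((matchSet k (n - 2 * b)).card : ℤ) * (-1) ^ b := by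
          intro A hA
          simp only [goodA, Finset.mem_filter, Finset.mem_powerset] at hA
          obtain ⟨hsub, h1a, hdisj, hcard⟩ := hA
          rw [card_filter_superset hk h1a hdisj hsub, hcard]
        rw [Finset.sum_congr rfl hterm, Finset.sum_const, goodA_card, nsmul_eq_mul]
        have hg : ((matchSet k (n - 2 * b)).card : ℤ)
            = ∑ ℓ ∈ Finset.range (n - 2 * b + 1), (fMatch k (n - 2 * b) ℓ : ℤ) := by
          rw [← sum_fMatch k (n - 2 * b)]
          push_cast
          rfl
        rw [hg]
        ring
end

section
/- For n ≥ 2 and 0 ≤ ℓ ≤ n with n - ℓ even, the numbers S_2(n,ℓ) of RNA secondary structures with exactly ℓ isolated vertices satisfy the two-term recursion (n-ℓ)(n-ℓ+2)·S_2(n,ℓ) − (n+ℓ)(n+ℓ-2)·S_2(n-2,ℓ) = 0. -/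
noncomputable section
namespace RNAProof

open Finset

def SecProp (n l : ℕ) (M : Finset (ℕ × ℕ)) : Prop :=
  IsPartialMatching n M ∧ KNoncrossing 2 M ∧ (∀ p ∈ M, p.2 ≠ p.1 + 1) ∧ isolatedCount n M = l

open scoped Classical in
noncomputable def SSet (n l : ℕ) : Finset (Finset (ℕ × ℕ)) :=
  ((Finset.Icc 1 n ×ˢ Finset.Icc 1 n).powerset).filter fun M => SecProp n l M

lemma mem_SSet {n l : ℕ} {M : Finset (ℕ × ℕ)} : M ∈ SSet n l ↔ SecProp n l M := by
  classical
  simp only [SSet, Finset.mem_filter, Finset.mem_powerset]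
  constructor
  · exact fun h => h.2
  · intro h
    refine ⟨fun p hp => ?_, h⟩
    have h1 := h.1.1 p hp
    simp only [Finset.mem_product, Finset.mem_Icc]
    omega

lemma scount_eq (n l : ℕ) : SCount 2 n l = (SSet n l).card := by
  rw [SCount, ← Nat.card_eq_finsetCard]
  exact Nat.card_congr (Equiv.subtypeEquivRight fun M => mem_SSet.symm)

lemma cross_of {M : Finset (ℕ × ℕ)} {p q : ℕ × ℕ} (hp : p ∈ M) (hq : q ∈ M)
    (h1 : p.1 < q.1) (h2 : q.1 < p.2) (h3 : p.2 < q.2) : HasKCrossing 2 M := by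
  refine ⟨![p, q], ?_, ?_, ?_, ?_⟩
  · intro r; fin_cases r <;> simpa
  · intro a b hab
    fin_cases a <;> fin_cases b <;>
      simp_all [Matrix.cons_val_zero, Matrix.cons_val_one, Matrix.head_cons] <;> omega
  · intro a b hab
    fin_cases a <;> fin_cases b <;>
      simp_all [Matrix.cons_val_zero, Matrix.cons_val_one, Matrix.head_cons] <;> omega
  · intro r s
    fin_cases r <;> fin_cases s <;>
      simp [Matrix.cons_val_zero, Matrix.cons_val_one, Matrix.head_cons] <;> omega

lemma noncross_pair {M : Finset (ℕ × ℕ)} (h : KNoncrossing 2 M) :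
    ∀ p ∈ M, ∀ q ∈ M, ¬(p.1 < q.1 ∧ q.1 < p.2 ∧ p.2 < q.2) :=
  fun p hp q hq hc => h (cross_of hp hq hc.1 hc.2.1 hc.2.2)

lemma knc_of_pairfree {M : Finset (ℕ × ℕ)}
    (h : ∀ p ∈ M, ∀ q ∈ M, ¬(p.1 < q.1 ∧ q.1 < p.2 ∧ p.2 < q.2)) : KNoncrossing 2 M := by
  rintro ⟨f, hfm, h1, h2, h3⟩
  exact h (f 0) (hfm 0) (f 1) (hfm 1)
    ⟨h1 (by decide : (0 : Fin 2) < 1), h3 1 0, h2 (by decide : (0 : Fin 2) < 1)⟩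

lemma knc_subset {M M' : Finset (ℕ × ℕ)} (h : KNoncrossing 2 M) (hs : M' ⊆ M) :
    KNoncrossing 2 M' := by
  rintro ⟨f, hfm, h1, h2, h3⟩
  exact h ⟨f, fun r => hs (hfm r), h1, h2, h3⟩

lemma iso_succ (n : ℕ) (M : Finset (ℕ × ℕ)) (h : ∀ p ∈ M, p.1 ≠ n + 1 ∧ p.2 ≠ n + 1) :
    isolatedCount (n + 1) M = isolatedCount n M + 1 := by
  unfold isolatedCount
  rw [show Finset.Icc 1 (n + 1) = insert (n + 1) (Finset.Icc 1 n) from by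
    ext v; simp [Finset.mem_Icc]; omega]
  rw [Finset.filter_insert, if_pos h, Finset.card_insert_of_notMem]
  intro hmem
  have := Finset.mem_of_mem_filter _ hmem
  simp [Finset.mem_Icc] at this

lemma matching_nil {n : ℕ} {M : Finset (ℕ × ℕ)} (hn : n ≤ 1) (h : IsPartialMatching n M) :
    M = ∅ := by
  rw [Finset.eq_empty_iff_forall_notMem]
  intro p hp
  have := h.1 p hp
  omega

lemma iso_empty (n : ℕ) : isolatedCount n (∅ : Finset (ℕ × ℕ)) = n := by
  unfold isolatedCount
  rw [Finset.filter_true_of_mem (fun v _ => fun p hp => absurd hp (Finset.notMem_empty p))]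
  simp

lemma sec_empty (n : ℕ) : SecProp n n (∅ : Finset (ℕ × ℕ)) := by
  refine ⟨⟨fun p hp => absurd hp (Finset.notMem_empty p),
    fun p hp => absurd hp (Finset.notMem_empty p)⟩, ?_,
    fun p hp => absurd hp (Finset.notMem_empty p), iso_empty n⟩
  rintro ⟨f, hf, -, -, -⟩
  exact absurd (hf 0) (Finset.notMem_empty _)

lemma S_nil {n l : ℕ} (hn : n ≤ 1) : SCount 2 n l = if l = n then 1 else 0 := by
  rw [scount_eq]
  have hset : SSet n l = if l = n then {∅} else ∅ := by
    ext M
    simp only [mem_SSet]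
    split
    case isTrue h =>
      subst h
      simp only [Finset.mem_singleton]
      constructor
      · intro hs
        exact matching_nil hn hs.1
      · rintro rfl
        exact sec_empty _
    case isFalse h =>
      simp only [Finset.notMem_empty, iff_false]
      intro hs
      have h2 := hs.2.2.2
      rw [matching_nil hn hs.1, iso_empty] at h2
      exact h h2.symm
  rw [hset]
  split <;> simp

end RNAProof

namespace RNAProof
open Finset

section Split

variable {N j : ℕ}

lemma arc_split (hj1 : 1 ≤ j) (hj2 : j + 2 ≤ N) {M : Finset (ℕ × ℕ)}
    (hm : IsPartialMatching N M) (hk : KNoncrossing 2 M) (hmem : (j, N) ∈ M) :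
    ∀ p ∈ M, p = (j, N) ∨ p.2 < j ∨ (j < p.1 ∧ p.2 < N) := by
  intro p hp
  by_cases hpe : p = (j, N)
  · exact Or.inl hpe
  right
  have hb := hm.1 p hp
  have hd : p.1 ≠ j ∧ p.1 ≠ N ∧ p.2 ≠ j ∧ p.2 ≠ N := hm.2 p hp (j, N) hmem hpe
  have hcr : ¬(p.1 < j ∧ j < p.2 ∧ p.2 < N) := noncross_pair hk p hp (j, N) hmem
  omega

lemma iso_split (hj1 : 1 ≤ j) (hj2 : j + 2 ≤ N) {M : Finset (ℕ × ℕ)}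
    (hm : IsPartialMatching N M) (hk : KNoncrossing 2 M) (hmem : (j, N) ∈ M) :
    isolatedCount N M =
      isolatedCount (j - 1) (M.filter fun p => p.2 < j)
        + isolatedCount (N - 1 - j) ((M.filter fun p => j < p.1 ∧ p.2 < N).image
            fun p => (p.1 - j, p.2 - j)) := by
  classical
  unfold isolatedCount
  have key1 : (Finset.Icc 1 N).filter (fun v => ∀ p ∈ M, p.1 ≠ v ∧ p.2 ≠ v)
      = ((Finset.Icc 1 (j - 1)).filter (fun v => ∀ p ∈ M, p.1 ≠ v ∧ p.2 ≠ v))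
        ∪ ((Finset.Icc (j + 1) (N - 1)).filter (fun v => ∀ p ∈ M, p.1 ≠ v ∧ p.2 ≠ v)) := by
    ext v
    simp only [Finset.mem_union, Finset.mem_filter, Finset.mem_Icc]
    constructor
    · rintro ⟨⟨h1, h2⟩, hiso⟩
      have hvj : j ≠ v := (hiso (j, N) hmem).1
      have hvN : N ≠ v := (hiso (j, N) hmem).2
      by_cases hvlt : v ≤ j - 1
      · exact Or.inl ⟨⟨h1, hvlt⟩, hiso⟩
      · exact Or.inr ⟨⟨by omega, by omega⟩, hiso⟩
    · rintro (⟨⟨h1, h2⟩, hiso⟩ | ⟨⟨h1, h2⟩, hiso⟩) <;> exact ⟨⟨by omega, by omega⟩, hiso⟩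
  rw [key1, Finset.card_union_of_disjoint]
  swap
  · rw [Finset.disjoint_left]
    intro v hv hv'
    simp only [Finset.mem_filter, Finset.mem_Icc] at hv hv'
    omega
  congr 1
  · refine congrArg Finset.card (Finset.filter_congr fun v hv => ?_)
    rw [Finset.mem_Icc] at hv
    constructor
    · intro hiso p hp
      exact hiso p (Finset.mem_of_mem_filter p hp)
    · intro hiso p hp
      rcases arc_split hj1 hj2 hm hk hmem p hp with rfl | hlow | hhigh
      · exact ⟨show j ≠ v by omega, show N ≠ v by omega⟩
      · exact hiso p (Finset.mem_filter.mpr ⟨hp, hlow⟩)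
      · have hb := hm.1 p hp
        constructor <;> omega
  · refine Finset.card_nbij' (i := fun v => v - j) (j := fun w => w + j) ?_ ?_ ?_ ?_
    · intro v hv
      simp only [Finset.mem_coe, Finset.mem_filter, Finset.mem_Icc] at hv ⊢
      obtain ⟨⟨h1, h2⟩, hiso⟩ := hv
      refine ⟨⟨by omega, by omega⟩, ?_⟩
      intro q hq
      rw [Finset.mem_image] at hq
      obtain ⟨p, hpf, rfl⟩ := hq
      rw [Finset.mem_filter] at hpf
      obtain ⟨hpM, hpj, hpN⟩ := hpf
      have hi := hiso p hpM
      have hb := hm.1 p hpM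
      exact ⟨show p.1 - j ≠ v - j by omega, show p.2 - j ≠ v - j by omega⟩
    · intro w hw
      simp only [Finset.mem_coe, Finset.mem_filter, Finset.mem_Icc] at hw ⊢
      obtain ⟨⟨h1, h2⟩, hiso⟩ := hw
      refine ⟨⟨by omega, by omega⟩, ?_⟩
      intro p hp
      rcases arc_split hj1 hj2 hm hk hmem p hp with rfl | hlow | hhigh
      · exact ⟨show j ≠ w + j by omega, show N ≠ w + j by omega⟩
      · have hb := hm.1 p hp
        constructor <;> omega
      · have hi : p.1 - j ≠ w ∧ p.2 - j ≠ w := hiso (p.1 - j, p.2 - j)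
          (Finset.mem_image_of_mem _ (Finset.mem_filter.mpr ⟨hp, hhigh⟩))
        have hb := hm.1 p hp
        constructor <;> omega
    · intro v hv
      simp only [Finset.mem_coe, Finset.mem_filter, Finset.mem_Icc] at hv
      dsimp only
      omega
    · intro w hw
      simp only [Finset.mem_coe, Finset.mem_filter, Finset.mem_Icc] at hw
      dsimp only
      omega

lemma low_sec (hj1 : 1 ≤ j) {l : ℕ} {M : Finset (ℕ × ℕ)} (hsec : SecProp N l M) :
    SecProp (j - 1) (isolatedCount (j - 1) (M.filter fun p => p.2 < j))
      (M.filter fun p => p.2 < j) := by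
  have hsub : M.filter (fun p => p.2 < j) ⊆ M := Finset.filter_subset _ _
  refine ⟨⟨?_, fun p hp q hq => hsec.1.2 p (hsub hp) q (hsub hq)⟩,
    knc_subset hsec.2.1 hsub, fun p hp => hsec.2.2.1 p (hsub hp), rfl⟩
  intro p hp
  have hb := hsec.1.1 p (hsub hp)
  have h2 := (Finset.mem_filter.mp hp).2
  omega

lemma high_sec (hj2 : j + 2 ≤ N) {l : ℕ} {M : Finset (ℕ × ℕ)} (hsec : SecProp N l M) :
    SecProp (N - 1 - j)
      (isolatedCount (N - 1 - j) ((M.filter fun p => j < p.1 ∧ p.2 < N).image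
        fun p => (p.1 - j, p.2 - j)))
      ((M.filter fun p => j < p.1 ∧ p.2 < N).image fun p => (p.1 - j, p.2 - j)) := by
  have hmem : ∀ q ∈ (M.filter fun p => j < p.1 ∧ p.2 < N).image
      (fun p => (p.1 - j, p.2 - j)),
      ∃ p, (p ∈ M ∧ j < p.1 ∧ p.2 < N) ∧ (p.1 - j, p.2 - j) = q := by
    intro q hq
    rw [Finset.mem_image] at hq
    obtain ⟨p, hpf, rfl⟩ := hq
    rw [Finset.mem_filter] at hpf
    exact ⟨p, ⟨hpf.1, hpf.2⟩, rfl⟩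
  refine ⟨⟨?_, ?_⟩, ?_, ?_, rfl⟩
  · intro q hq
    obtain ⟨p, ⟨hpM, hpj, hpN⟩, rfl⟩ := hmem q hq
    have hb := hsec.1.1 p hpM
    exact ⟨show 1 ≤ p.1 - j by omega, show p.1 - j < p.2 - j by omega,
      show p.2 - j ≤ N - 1 - j by omega⟩
  · intro q hq q' hq' hne
    obtain ⟨p, ⟨hpM, hpj, hpN⟩, rfl⟩ := hmem q hq
    obtain ⟨p', ⟨hpM', hpj', hpN'⟩, rfl⟩ := hmem q' hq'
    have hne' : p ≠ p' := fun h => hne (by rw [h])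
    have hd := hsec.1.2 p hpM p' hpM' hne'
    have hb := hsec.1.1 p hpM
    have hb' := hsec.1.1 p' hpM'
    exact ⟨show p.1 - j ≠ p'.1 - j by omega, show p.1 - j ≠ p'.2 - j by omega,
      show p.2 - j ≠ p'.1 - j by omega, show p.2 - j ≠ p'.2 - j by omega⟩
  · apply knc_of_pairfree
    intro q hq q' hq' hcr
    obtain ⟨p, ⟨hpM, hpj, hpN⟩, rfl⟩ := hmem q hq
    obtain ⟨p', ⟨hpM', hpj', hpN'⟩, rfl⟩ := hmem q' hq'
    have hcr' : p.1 - j < p'.1 - j ∧ p'.1 - j < p.2 - j ∧ p.2 - j < p'.2 - j := hcr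
    have hb := hsec.1.1 p hpM
    have hb' := hsec.1.1 p' hpM'
    exact noncross_pair hsec.2.1 p hpM p' hpM' ⟨by omega, by omega, by omega⟩
  · intro q hq
    obtain ⟨p, ⟨hpM, hpj, hpN⟩, rfl⟩ := hmem q hq
    have h1 := hsec.2.2.1 p hpM
    have hb := hsec.1.1 p hpM
    exact show p.2 - j ≠ p.1 - j + 1 by omega

end Split
end RNAProof

namespace RNAProof
open Finset

section Psi

variable {N j : ℕ}

lemma psi_parts (hj1 : 1 ≤ j) (hj2 : j + 2 ≤ N) {u w : ℕ} {M1 M2 : Finset (ℕ × ℕ)}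
    (h1 : SecProp (j - 1) u M1) (h2 : SecProp (N - 1 - j) w M2) :
    SecProp N (u + w) (insert (j, N) (M1 ∪ M2.image fun p => (p.1 + j, p.2 + j)))
    ∧ (insert (j, N) (M1 ∪ M2.image fun p => (p.1 + j, p.2 + j))).filter
        (fun p => p.2 < j) = M1
    ∧ (insert (j, N) (M1 ∪ M2.image fun p => (p.1 + j, p.2 + j))).filter
        (fun p => j < p.1 ∧ p.2 < N) = M2.image fun p => (p.1 + j, p.2 + j) := by
  classical
  have hb1 := h1.1.1
  have hb2 := h2.1.1
  set Psi := insert (j, N) (M1 ∪ M2.image fun p => (p.1 + j, p.2 + j)) with hPsi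
  have hmemc : ∀ p, p ∈ Psi ↔ p = (j, N) ∨ p ∈ M1 ∨ ∃ q ∈ M2, (q.1 + j, q.2 + j) = p := by
    intro p
    simp [hPsi, Finset.mem_insert, Finset.mem_union, Finset.mem_image]
  have hlow : Psi.filter (fun p => p.2 < j) = M1 := by
    ext p
    simp only [Finset.mem_filter, hmemc]
    constructor
    · rintro ⟨rfl | hp1 | ⟨q, hq, rfl⟩, hlt⟩
      · have hlt' : N < j := hlt
        exact absurd hlt' (by omega)
      · exact hp1
      · have hlt' : q.2 + j < j := hlt
        exact absurd hlt' (by omega)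
    · intro hp1
      have hb := hb1 p hp1
      exact ⟨Or.inr (Or.inl hp1), show p.2 < j by omega⟩
  have hhigh : Psi.filter (fun p => j < p.1 ∧ p.2 < N)
      = M2.image fun p => (p.1 + j, p.2 + j) := by
    ext p
    simp only [Finset.mem_filter, hmemc, Finset.mem_image]
    constructor
    · rintro ⟨rfl | hp1 | ⟨q, hq, rfl⟩, hlt⟩
      · have hlt' : j < j ∧ N < N := hlt
        exact absurd hlt'.1 (by omega)
      · have hb := hb1 p hp1
        have hlt' : j < p.1 ∧ p.2 < N := hlt
        exact absurd hlt'.1 (by omega)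
      · exact ⟨q, hq, rfl⟩
    · rintro ⟨q, hq, rfl⟩
      have hb := hb2 q hq
      exact ⟨Or.inr (Or.inr ⟨q, hq, rfl⟩),
        show j < q.1 + j ∧ q.2 + j < N by omega⟩
  have hmatch : IsPartialMatching N Psi := by
    constructor
    · intro p hp
      rcases (hmemc p).mp hp with rfl | hp1 | ⟨q, hq, rfl⟩
      · exact ⟨hj1, by omega, le_refl N⟩
      · have hb := hb1 p hp1
        exact ⟨by omega, by omega, by omega⟩
      · have hb := hb2 q hq
        exact ⟨show 1 ≤ q.1 + j by omega, show q.1 + j < q.2 + j by omega,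
          show q.2 + j ≤ N by omega⟩
    · intro p hp q hq hne
      rcases (hmemc p).mp hp with rfl | hp1 | ⟨a, ha, rfl⟩ <;>
        rcases (hmemc q).mp hq with rfl | hq1 | ⟨c, hc, rfl⟩
      · exact absurd rfl hne
      · have hb := hb1 q hq1
        exact ⟨show j ≠ q.1 by omega, show j ≠ q.2 by omega,
          show N ≠ q.1 by omega, show N ≠ q.2 by omega⟩
      · have hb := hb2 c hc
        exact ⟨show j ≠ c.1 + j by omega, show j ≠ c.2 + j by omega,
          show N ≠ c.1 + j by omega, show N ≠ c.2 + j by omega⟩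
      · have hb := hb1 p hp1
        exact ⟨show p.1 ≠ j by omega, show p.1 ≠ N by omega,
          show p.2 ≠ j by omega, show p.2 ≠ N by omega⟩
      · exact h1.1.2 p hp1 q hq1 hne
      · have hb := hb1 p hp1
        have hb' := hb2 c hc
        exact ⟨show p.1 ≠ c.1 + j by omega, show p.1 ≠ c.2 + j by omega,
          show p.2 ≠ c.1 + j by omega, show p.2 ≠ c.2 + j by omega⟩
      · have hb := hb2 a ha
        exact ⟨show a.1 + j ≠ j by omega, show a.1 + j ≠ N by omega,
          show a.2 + j ≠ j by omega, show a.2 + j ≠ N by omega⟩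
      · have hb := hb2 a ha
        have hb' := hb1 q hq1
        exact ⟨show a.1 + j ≠ q.1 by omega, show a.1 + j ≠ q.2 by omega,
          show a.2 + j ≠ q.1 by omega, show a.2 + j ≠ q.2 by omega⟩
      · have hne' : a ≠ c := by
          intro h
          exact hne (by rw [h])
        have hd := h2.1.2 a ha c hc hne'
        exact ⟨show a.1 + j ≠ c.1 + j by omega, show a.1 + j ≠ c.2 + j by omega,
          show a.2 + j ≠ c.1 + j by omega, show a.2 + j ≠ c.2 + j by omega⟩
  have hknc : KNoncrossing 2 Psi := by
    apply knc_of_pairfree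
    intro p hp q hq hcr
    rcases (hmemc p).mp hp with rfl | hp1 | ⟨a, ha, rfl⟩ <;>
      rcases (hmemc q).mp hq with rfl | hq1 | ⟨c, hc, rfl⟩
    · have hcr' : j < j ∧ j < N ∧ N < N := hcr
      omega
    · have hcr' : j < q.1 ∧ q.1 < N ∧ N < q.2 := hcr
      have hb := hb1 q hq1
      omega
    · have hcr' : j < c.1 + j ∧ c.1 + j < N ∧ N < c.2 + j := hcr
      have hb := hb2 c hc
      omega
    · have hcr' : p.1 < j ∧ j < p.2 ∧ p.2 < N := hcr
      have hb := hb1 p hp1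
      omega
    · exact noncross_pair h1.2.1 p hp1 q hq1 hcr
    · have hcr' : p.1 < c.1 + j ∧ c.1 + j < p.2 ∧ p.2 < c.2 + j := hcr
      have hb := hb1 p hp1
      omega
    · have hcr' : a.1 + j < j ∧ j < a.2 + j ∧ a.2 + j < N := hcr
      omega
    · have hcr' : a.1 + j < q.1 ∧ q.1 < a.2 + j ∧ a.2 + j < q.2 := hcr
      have hb := hb1 q hq1
      have hb' := hb2 a ha
      omega
    · have hcr' : a.1 + j < c.1 + j ∧ c.1 + j < a.2 + j ∧ a.2 + j < c.2 + j := hcr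
      exact noncross_pair h2.2.1 a ha c hc ⟨by omega, by omega, by omega⟩
  have hiso : isolatedCount N Psi = u + w := by
    have := iso_split hj1 hj2 hmatch hknc (Finset.mem_insert_self _ _)
    rw [hlow, hhigh] at this
    rw [Finset.image_image] at this
    rw [show ((fun p : ℕ × ℕ => (p.1 - j, p.2 - j)) ∘ fun p : ℕ × ℕ => (p.1 + j, p.2 + j))
        = id from funext fun q => by
      simp only [Function.comp_apply, id_eq]
      exact Prod.ext (by dsimp only; omega) (by dsimp only; omega)] at this
    rw [Finset.image_id] at this
    rw [this, h1.2.2.2, h2.2.2.2]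
  refine ⟨⟨hmatch, hknc, ?_, hiso⟩, hlow, hhigh⟩
  intro p hp
  rcases (hmemc p).mp hp with rfl | hp1 | ⟨a, ha, rfl⟩
  · exact show N ≠ j + 1 by omega
  · exact h1.2.2.1 p hp1
  · have h0 := h2.2.2.1 a ha
    exact show a.2 + j ≠ (a.1 + j) + 1 by omega

end Psi
end RNAProof

namespace RNAProof
open Finset

section Count

variable {N j : ℕ}

lemma Aju_card (hj1 : 1 ≤ j) (hj2 : j + 2 ≤ N) (l u : ℕ) (hu : u ≤ l) :
    (((SSet N l).filter fun M => (j, N) ∈ M).filter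
        fun M => isolatedCount (j - 1) (M.filter fun p => p.2 < j) = u).card
      = ((SSet (j - 1) u) ×ˢ (SSet (N - 1 - j) (l - u))).card := by
  classical
  refine Finset.card_nbij'
    (i := fun M => (M.filter fun p => p.2 < j,
      (M.filter fun p => j < p.1 ∧ p.2 < N).image fun p => (p.1 - j, p.2 - j)))
    (j := fun Mp => insert (j, N) (Mp.1 ∪ Mp.2.image fun p => (p.1 + j, p.2 + j)))
    ?_ ?_ ?_ ?_
  · intro M hM
    simp only [Finset.mem_coe, Finset.mem_filter] at hM
    obtain ⟨⟨hMS, hjN⟩, hlu⟩ := hM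
    have hsec := mem_SSet.mp hMS
    have hisp := iso_split hj1 hj2 hsec.1 hsec.2.1 hjN
    rw [hsec.2.2.2, hlu] at hisp
    rw [Finset.mem_coe, Finset.mem_product]
    refine ⟨mem_SSet.mpr ?_, mem_SSet.mpr ?_⟩
    · have hls := low_sec (N := N) hj1 hsec
      rwa [hlu] at hls
    · have hhs := high_sec hj2 hsec
      rwa [show isolatedCount (N - 1 - j) ((M.filter fun p => j < p.1 ∧ p.2 < N).image
        fun p => (p.1 - j, p.2 - j)) = l - u from by omega] at hhs
  · intro Mp hMp
    rw [Finset.mem_coe, Finset.mem_product] at hMp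
    have h1 := mem_SSet.mp hMp.1
    have h2 := mem_SSet.mp hMp.2
    obtain ⟨hsec, hlow, hhigh⟩ := psi_parts hj1 hj2 h1 h2
    simp only [Finset.mem_coe, Finset.mem_filter]
    refine ⟨⟨mem_SSet.mpr ?_, Finset.mem_insert_self _ _⟩, ?_⟩
    · rwa [show u + (l - u) = l from by omega] at hsec
    · rw [hlow]
      exact h1.2.2.2
  · intro M hM
    simp only [Finset.mem_coe, Finset.mem_filter] at hM
    obtain ⟨⟨hMS, hjN⟩, hlu⟩ := hM
    have hsec := mem_SSet.mp hMS
    dsimp only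
    rw [Finset.image_image]
    rw [show (M.filter fun p => j < p.1 ∧ p.2 < N).image
        ((fun p : ℕ × ℕ => (p.1 + j, p.2 + j)) ∘ fun p : ℕ × ℕ => (p.1 - j, p.2 - j))
        = M.filter fun p => j < p.1 ∧ p.2 < N from ?_]
    · ext p
      simp only [Finset.mem_insert, Finset.mem_union, Finset.mem_filter]
      constructor
      · rintro (rfl | ⟨hp, _⟩ | ⟨hp, _⟩)
        · exact hjN
        · exact hp
        · exact hp
      · intro hp
        rcases arc_split hj1 hj2 hsec.1 hsec.2.1 hjN p hp with rfl | hlow2 | hhigh2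
        · exact Or.inl rfl
        · exact Or.inr (Or.inl ⟨hp, hlow2⟩)
        · exact Or.inr (Or.inr ⟨hp, hhigh2⟩)
    · nth_rewrite 2 [show M.filter (fun p => j < p.1 ∧ p.2 < N)
        = (M.filter fun p => j < p.1 ∧ p.2 < N).image id from (Finset.image_id).symm]
      apply Finset.image_congr
      intro p hp
      simp only [Finset.mem_coe, Finset.mem_filter] at hp
      have hb := hsec.1.1 p hp.1
      exact Prod.ext (by simp only [Function.comp_apply, id_eq]; omega)
        (by simp only [Function.comp_apply, id_eq]; omega)
  · intro Mp hMp
    rw [Finset.mem_coe, Finset.mem_product] at hMp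
    have h1 := mem_SSet.mp hMp.1
    have h2 := mem_SSet.mp hMp.2
    obtain ⟨hsec, hlow, hhigh⟩ := psi_parts hj1 hj2 h1 h2
    dsimp only
    rw [hlow, hhigh, Finset.image_image]
    rw [show ((fun p : ℕ × ℕ => (p.1 - j, p.2 - j)) ∘ fun p : ℕ × ℕ => (p.1 + j, p.2 + j))
        = id from funext fun q => Prod.ext (by simp only [Function.comp_apply, id_eq]; omega)
          (by simp only [Function.comp_apply, id_eq]; omega)]
    rw [Finset.image_id]

lemma Aj_card (hj1 : 1 ≤ j) (hj2 : j + 2 ≤ N) (l : ℕ) :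
    ((SSet N l).filter fun M => (j, N) ∈ M).card
      = ∑ u ∈ Finset.range (l + 1), (SSet (j - 1) u).card * (SSet (N - 1 - j) (l - u)).card := by
  classical
  have hpart : (SSet N l).filter (fun M => (j, N) ∈ M)
      = (Finset.range (l + 1)).biUnion (fun u =>
          ((SSet N l).filter fun M => (j, N) ∈ M).filter
            fun M => isolatedCount (j - 1) (M.filter fun p => p.2 < j) = u) := by
    ext M
    simp only [Finset.mem_biUnion, Finset.mem_filter, Finset.mem_range]
    constructor
    · intro hM
      refine ⟨isolatedCount (j - 1) (M.filter fun p => p.2 < j), ?_, hM, rfl⟩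
      have hsec := mem_SSet.mp hM.1
      have hisp := iso_split hj1 hj2 hsec.1 hsec.2.1 hM.2
      rw [hsec.2.2.2] at hisp
      omega
    · rintro ⟨u, _, hM, _⟩
      exact hM
  rw [hpart, Finset.card_biUnion]
  · apply Finset.sum_congr rfl
    intro u hu
    rw [Finset.mem_range] at hu
    rw [Aju_card hj1 hj2 l u (by omega), Finset.card_product]
  · intro u hu v hv huv
    rw [Function.onFun_apply, Finset.disjoint_left]
    intro M hMu hMv
    simp only [Finset.mem_filter] at hMu hMv
    exact huv (by rw [← hMu.2, ← hMv.2])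

lemma arc_card (m l : ℕ) :
    ((SSet (m + 2) l).filter fun M => ¬ ∀ p ∈ M, p.2 ≠ m + 2).card
      = ∑ j ∈ Finset.Icc 1 m, ((SSet (m + 2) l).filter fun M => (j, m + 2) ∈ M).card := by
  classical
  have hpart : (SSet (m + 2) l).filter (fun M => ¬ ∀ p ∈ M, p.2 ≠ m + 2)
      = (Finset.Icc 1 m).biUnion (fun j =>
          (SSet (m + 2) l).filter fun M => (j, m + 2) ∈ M) := by
    ext M
    simp only [Finset.mem_biUnion, Finset.mem_filter, Finset.mem_Icc]
    constructor
    · rintro ⟨hM, hnot⟩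
      push_neg at hnot
      obtain ⟨p, hp, hp2⟩ := hnot
      have hsec := mem_SSet.mp hM
      have hb := hsec.1.1 p hp
      have h1 := hsec.2.2.1 p hp
      refine ⟨p.1, ⟨by omega, by omega⟩, hM, ?_⟩
      rw [show (p.1, m + 2) = p from by rw [← hp2]]
      exact hp
    · rintro ⟨j, hj, hM, hmem⟩
      exact ⟨hM, fun hall => (hall (j, m + 2) hmem) rfl⟩
  rw [hpart, Finset.card_biUnion]
  intro u hu v hv huv
  rw [Function.onFun_apply, Finset.disjoint_left]
  intro M hMu hMv
  simp only [Finset.mem_filter] at hMu hMv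
  have hsec := mem_SSet.mp hMu.1
  have hd : u ≠ v ∧ u ≠ m + 2 ∧ m + 2 ≠ v ∧ m + 2 ≠ m + 2 :=
    hsec.1.2 (u, m + 2) hMu.2 (v, m + 2) hMv.2
      (fun h => huv (congrArg Prod.fst h))
  exact hd.2.2.2 rfl

lemma noarc_card (m l : ℕ) :
    ((SSet (m + 2) l).filter fun M => ∀ p ∈ M, p.2 ≠ m + 2).card
      = if 1 ≤ l then (SSet (m + 1) (l - 1)).card else 0 := by
  classical
  split
  case isTrue hl =>
    apply Finset.card_bij (i := fun M _ => M)
    · intro M hM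
      simp only [Finset.mem_filter] at hM
      obtain ⟨hMS, hno⟩ := hM
      have hsec := mem_SSet.mp hMS
      apply mem_SSet.mpr
      have hbnd : ∀ p ∈ M, 1 ≤ p.1 ∧ p.1 < p.2 ∧ p.2 ≤ m + 1 := by
        intro p hp
        have hb := hsec.1.1 p hp
        have := hno p hp
        omega
      have hiso := iso_succ (m + 1) M (fun p hp => by
        have hb := hbnd p hp
        omega)
      refine ⟨⟨hbnd, hsec.1.2⟩, hsec.2.1, hsec.2.2.1, ?_⟩
      have hiso' : isolatedCount (m + 2) M = isolatedCount (m + 1) M + 1 := hiso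
      have h2 := hsec.2.2.2
      omega
    · intro a _ b _ h
      exact h
    · intro M hM
      have hsec := mem_SSet.mp hM
      have hbnd := hsec.1.1
      refine ⟨M, ?_, rfl⟩
      simp only [Finset.mem_filter]
      have hno : ∀ p ∈ M, p.2 ≠ m + 2 := fun p hp => by
        have := hbnd p hp
        omega
      refine ⟨mem_SSet.mpr ⟨⟨fun p hp => by have := hbnd p hp; omega, hsec.1.2⟩,
        hsec.2.1, hsec.2.2.1, ?_⟩, hno⟩
      have hiso := iso_succ (m + 1) M (fun p hp => by have := hbnd p hp; omega)
      have hiso' : isolatedCount (m + 2) M = isolatedCount (m + 1) M + 1 := hiso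
      have h2 := hsec.2.2.2
      omega
  case isFalse hl =>
    rw [Finset.card_eq_zero]
    ext M
    simp only [Finset.mem_filter, Finset.notMem_empty, iff_false, not_and]
    intro hMS hno
    have hsec := mem_SSet.mp hMS
    have hiso := hsec.2.2.2
    have hNin : (m + 2) ∈ (Finset.Icc 1 (m + 2)).filter
        (fun v => ∀ p ∈ M, p.1 ≠ v ∧ p.2 ≠ v) := by
      rw [Finset.mem_filter, Finset.mem_Icc]
      refine ⟨⟨by omega, le_refl _⟩, fun p hp => ?_⟩
      have hb := hsec.1.1 p hp
      have := hno p hp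
      omega
    have hpos := Finset.card_pos.mpr ⟨m + 2, hNin⟩
    unfold isolatedCount at hiso
    omega

end Count
end RNAProof

namespace RNAProof
open Finset

theorem S_rec (m l : ℕ) :
    SCount 2 (m + 2) l + SCount 2 m l
      = (if 1 ≤ l then SCount 2 (m + 1) (l - 1) else 0)
        + ∑ p ∈ Finset.HasAntidiagonal.antidiagonal m, ∑ q ∈ Finset.HasAntidiagonal.antidiagonal l,
            SCount 2 p.1 q.1 * SCount 2 p.2 q.2 := by
  have hpart := Finset.card_filter_add_card_filter_not
    (s := SSet (m + 2) l) (p := fun M => ∀ p ∈ M, p.2 ≠ m + 2)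
  rw [noarc_card, arc_card] at hpart
  have step1 : ∀ a b : ℕ, (∑ q ∈ Finset.HasAntidiagonal.antidiagonal l, SCount 2 a q.1 * SCount 2 b q.2)
      = ∑ u ∈ Finset.range (l + 1), SCount 2 a u * SCount 2 b (l - u) := fun a b =>
    Finset.Nat.sum_antidiagonal_eq_sum_range_succ_mk _ l
  have step2 : (∑ p ∈ Finset.HasAntidiagonal.antidiagonal m, ∑ q ∈ Finset.HasAntidiagonal.antidiagonal l,
      SCount 2 p.1 q.1 * SCount 2 p.2 q.2)
      = ∑ a ∈ Finset.range (m + 1), ∑ u ∈ Finset.range (l + 1),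
          SCount 2 a u * SCount 2 (m - a) (l - u) := by
    rw [Finset.Nat.sum_antidiagonal_eq_sum_range_succ_mk]
    exact Finset.sum_congr rfl fun a _ => step1 a (m - a)
  have hterm : ∀ u ∈ Finset.range (l + 1), SCount 2 m u * SCount 2 (m - m) (l - u)
      = if u = l then SCount 2 m l else 0 := by
    intro u hu
    rw [Finset.mem_range] at hu
    rw [Nat.sub_self]
    by_cases h : u = l
    · subst h
      rw [Nat.sub_self, S_nil (n := 0) (by norm_num), if_pos rfl, if_pos rfl, mul_one]
    · rw [S_nil (n := 0) (by norm_num), if_neg (by omega), mul_zero, if_neg h]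
  have hlast : (∑ u ∈ Finset.range (l + 1), SCount 2 m u * SCount 2 (m - m) (l - u))
      = SCount 2 m l := by
    rw [Finset.sum_congr rfl hterm, Finset.sum_ite_eq' (Finset.range (l + 1)) l]
    rw [if_pos (Finset.mem_range.mpr (by omega))]
  have step4 : (∑ j ∈ Finset.Icc 1 m, ((SSet (m + 2) l).filter fun M => (j, m + 2) ∈ M).card)
      = ∑ a ∈ Finset.range m, ∑ u ∈ Finset.range (l + 1),
          SCount 2 a u * SCount 2 (m - a) (l - u) := by
    refine Finset.sum_nbij' (i := fun j => j - 1) (j := fun a => a + 1) ?_ ?_ ?_ ?_ ?_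
    · intro a ha
      rw [Finset.mem_Icc] at ha
      rw [Finset.mem_range]
      omega
    · intro a ha
      rw [Finset.mem_range] at ha
      rw [Finset.mem_Icc]
      omega
    · intro a ha
      rw [Finset.mem_Icc] at ha
      omega
    · intro a ha
      omega
    · intro j hj
      rw [Finset.mem_Icc] at hj
      rw [Aj_card (j := j) (N := m + 2) (by omega) (by omega) l]
      apply Finset.sum_congr rfl
      intro u _
      rw [← scount_eq, ← scount_eq]
      rw [show m + 2 - 1 - j = m - (j - 1) from by omega]
  rw [step2, Finset.sum_range_succ, hlast, ← step4]
  rw [scount_eq (m + 2) l]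
  by_cases hl : 1 ≤ l
  · rw [if_pos hl] at hpart ⊢
    rw [scount_eq (m + 1) (l - 1)]
    omega
  · rw [if_neg hl] at hpart ⊢
    omega

end RNAProof



noncomputable section
namespace RNAProof

open PowerSeries

abbrev Q1 := PowerSeries ℚ
abbrev Q2 := PowerSeries Q1

/-- y·d/dy on inner power series. -/
def yd (g : Q1) : Q1 := PowerSeries.mk fun l => (l : ℚ) * PowerSeries.coeff l g

lemma yd_add (f g : Q1) : yd (f + g) = yd f + yd g := by
  ext l; simp [yd, mul_add]

/-- x·d/dx as an additive hom. -/
def th : Q2 →+ Q2 where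
  toFun f := PowerSeries.mk fun n => (n : Q1) * PowerSeries.coeff n f
  map_zero' := by ext n; simp
  map_add' f g := by ext n; simp [mul_add]

/-- y·d/dy on outer series, acting through coefficients. -/
def mu : Q2 →+ Q2 where
  toFun f := PowerSeries.mk fun n => yd (PowerSeries.coeff n f)
  map_zero' := by ext n; simp [yd]
  map_add' f g := by ext n; simp [yd_add]

lemma coeff_th (n : ℕ) (f : Q2) :
    PowerSeries.coeff n (th f) = (n : Q1) * PowerSeries.coeff n f := by
  simp [th]

lemma coeff_mu (n : ℕ) (f : Q2) :
    PowerSeries.coeff n (mu f) = yd (PowerSeries.coeff n f) := by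
  simp [mu]

lemma yd_mul (f g : Q1) : yd (f * g) = yd f * g + f * yd g := by
  ext l
  simp only [yd, coeff_mk, PowerSeries.coeff_mul, map_add, Finset.mul_sum,
    ← Finset.sum_add_distrib]
  refine Finset.sum_congr rfl fun p hp => ?_
  rw [Finset.HasAntidiagonal.mem_antidiagonal] at hp
  rw [← hp]
  push_cast
  ring

def ydh : Q1 →+ Q1 where
  toFun := yd
  map_zero' := by ext l; simp [yd]
  map_add' := yd_add

lemma th_mul (f g : Q2) : th (f * g) = th f * g + f * th g := by
  refine PowerSeries.ext fun n => ?_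
  simp only [coeff_th, map_add, PowerSeries.coeff_mul, Finset.mul_sum,
    ← Finset.sum_add_distrib]
  refine Finset.sum_congr rfl fun p hp => ?_
  rw [Finset.HasAntidiagonal.mem_antidiagonal] at hp
  rw [← hp]
  push_cast
  ring

lemma ydh_apply (f : Q1) : ydh f = yd f := rfl

lemma mu_mul (f g : Q2) : mu (f * g) = mu f * g + f * mu g := by
  refine PowerSeries.ext fun n => ?_
  simp only [coeff_mu, map_add, PowerSeries.coeff_mul]
  rw [← ydh_apply, map_sum, ← Finset.sum_add_distrib]
  exact Finset.sum_congr rfl fun p _ => by rw [ydh_apply, yd_mul]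

lemma yd_one : yd 1 = 0 := by
  ext l
  simp only [yd, coeff_mk, PowerSeries.coeff_one, map_zero]
  rcases l with _ | l <;> simp

lemma yd_X : yd (PowerSeries.X : Q1) = PowerSeries.X := by
  ext l
  simp only [yd, coeff_mk, PowerSeries.coeff_X]
  rcases l with _ | l
  · simp
  · rcases l with _ | l <;> simp

lemma th_one : th (1 : Q2) = 0 := by
  ext n
  simp only [coeff_th, PowerSeries.coeff_one, map_zero]
  rcases n with _ | n <;> simp

lemma mu_one : mu (1 : Q2) = 0 := by
  ext n
  simp only [coeff_mu, PowerSeries.coeff_one, map_zero]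
  rcases n with _ | n <;> simp [yd_one, yd]

def xv : Q2 := PowerSeries.X
def yv : Q2 := PowerSeries.C (PowerSeries.X : Q1)

lemma th_x : th xv = xv := by
  ext n
  simp only [coeff_th, xv, PowerSeries.coeff_X]
  rcases n with _ | n
  · simp
  · rcases n with _ | n <;> simp

lemma th_y : th yv = 0 := by
  ext n
  simp only [coeff_th, yv, PowerSeries.coeff_C, map_zero]
  rcases n with _ | n <;> simp

lemma mu_x : mu xv = 0 := by
  ext n
  simp only [coeff_mu, xv, PowerSeries.coeff_X, map_zero]
  rcases n with _ | n
  · simp [yd]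
  · rcases n with _ | n <;> simp [yd_one, yd]

lemma mu_y : mu yv = yv := by
  ext n
  simp only [coeff_mu, yv, PowerSeries.coeff_C]
  rcases n with _ | n
  · simp [yd_X]
  · simp [yd]


section Main

variable (S2 : ℕ → ℕ → ℚ)

def TS : Q2 := PowerSeries.mk fun n => PowerSeries.mk fun l => S2 n l

def cc (n l : ℕ) (f : Q2) : ℚ := PowerSeries.coeff l (PowerSeries.coeff n f)

lemma cc_add (n l : ℕ) (f g : Q2) : cc n l (f + g) = cc n l f + cc n l g := by
  simp [cc]

lemma cc_sub (n l : ℕ) (f g : Q2) : cc n l (f - g) = cc n l f - cc n l g := by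
  simp [cc]

lemma cc_th (n l : ℕ) (f : Q2) : cc n l (th f) = n * cc n l f := by
  rw [cc, cc, coeff_th, ← map_natCast (PowerSeries.C (R := ℚ)) n, PowerSeries.coeff_C_mul]

lemma cc_mu (n l : ℕ) (f : Q2) : cc n l (mu f) = l * cc n l f := by
  rw [cc, cc, coeff_mu, yd, PowerSeries.coeff_mk]

lemma cc_X2 (n l : ℕ) (hn : 2 ≤ n) (f : Q2) : cc n l (xv ^ 2 * f) = cc (n - 2) l f := by
  obtain ⟨k, rfl⟩ : ∃ k, n = k + 2 := ⟨n - 2, by omega⟩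
  rw [cc, cc, xv, PowerSeries.coeff_X_pow_mul]
  simp

lemma cc_TS (n l : ℕ) : cc n l (TS S2) = S2 n l := by
  simp [cc, TS]

theorem key_recursion
    (hP : xv * xv * TS S2 * TS S2 + 1 = (1 - xv * yv + xv * xv) * TS S2)
    (n l : ℕ) (hn : 2 ≤ n) :
    ((n : ℚ) - l) * ((n : ℚ) - l + 2) * S2 n l -
      ((n : ℚ) + l) * ((n : ℚ) + l - 2) * S2 (n - 2) l = 0 := by
  set t : Q2 := TS S2 with ht
  have e1 := congrArg (fun z => th z) hP
  have e2 := congrArg (fun z => mu z) hP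
  simp only [th_mul, map_add, map_sub, map_zero, th_one, th_x, th_y] at e1
  simp only [mu_mul, map_add, map_sub, map_zero, mu_one, mu_x, mu_y] at e2
  have e3 := congrArg (fun z => th z) e1
  have e4 := congrArg (fun z => mu z) e1
  have e5 := congrArg (fun z => mu z) e2
  simp only [th_mul, map_add, map_sub, map_zero, th_one, th_x, th_y] at e3
  simp only [mu_mul, map_add, map_sub, map_zero, mu_one, mu_x, mu_y] at e4
  simp only [mu_mul, map_add, map_sub, map_zero, mu_one, mu_x, mu_y] at e5
  have hW3 : ((th (th t) + mu (mu t) + th t + th t - mu (th t) - mu (th t) - mu t - mu t)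
      - xv ^ 2 * (th (th t) + mu (mu t) + th t + th t + mu (th t) + mu (th t) + mu t + mu t))
      * (2 * xv ^ 2 * t - (1 - xv * yv + xv ^ 2)) ^ 3 = 0 := by
    linear_combination
      (8*xv^6*t^2 + (-8)*xv^6*t + 8*xv^5*yv*t + (-8)*xv^4*t^2 + (-8)*xv^3*yv*t + 8*xv^2*t) * hP + (4*xv^6*t^2 + 4*xv^6*t*(th t) + 8*xv^6*t*(mu t) + (-4)*xv^6*t + (-2)*xv^6*(th t) + (-4)*xv^6*(mu t) + 2*xv^6 + 6*xv^5*yv*t + 2*xv^5*yv*(th t) + 4*xv^5*yv*(mu t) + (-4)*xv^5*yv + 2*xv^4*yv^2 + (-4)*xv^4*t^2 + (-4)*xv^4*t*(th t) + 8*xv^4*t*(mu t) + 4*xv^4*t + (-8)*xv^4*(mu t) + (-2)*xv^4 + 2*xv^3*yv*t + (-2)*xv^3*yv*(th t) + 4*xv^3*yv*(mu t) + 2*xv^2*yv^2 + 2*xv^2*(th t) + (-4)*xv^2*(mu t) + (-2)*xv^2 + (-4)*xv*yv + 2) * e1 + (4*xv^6*t*(mu t) + (-2)*xv^6*(mu t)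 + 2*xv^6 + 2*xv^5*yv*t + 2*xv^5*yv*(mu t) + (-4)*xv^5*yv + 2*xv^4*yv^2 + (-4)*xv^4*t*(mu t) + 2*xv^4 + (-2)*xv^3*yv*t + (-2)*xv^3*yv*(mu t) + (-2)*xv^2*yv^2 + 2*xv^2*(mu t) + (-2)*xv^2 + 4*xv*yv + (-2)) * e2 + ((-4)*xv^6*t^2 + 4*xv^6*t + (-1)*xv^6 + (-4)*xv^5*yv*t + 2*xv^5*yv + (-1)*xv^4*yv^2 + 4*xv^4*t^2 + (-1)*xv^4 + 4*xv^3*yv*t + xv^2*yv^2 + (-4)*xv^2*t + xv^2 + (-2)*xv*yv + 1) * e3 + ((-8)*xv^6*t^2 + 8*xv^6*t + (-2)*xv^6 + (-8)*xv^5*yv*t + 4*xv^5*yv + (-2)*xv^4*yv^2 + (-8)*xv^4*t^2 + 16*xv^4*t + (-6)*xv^4 + (-8)*xv^3*yv*t + 8*xv^3*yv + (-2)*xv^2*yv^2 + 8*xv^2*t + (-6)*xv^2 + 4*xv*yv + (-2)) * e4 + ((-4)*xv^6*t^2 + 4*xv^6*t + (-1)*xv^6 + (-4)*xv^5*yv*t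 + 2*xv^5*yv + (-1)*xv^4*yv^2 + 4*xv^4*t^2 + (-1)*xv^4 + 4*xv^3*yv*t + xv^2*yv^2 + (-4)*xv^2*t + xv^2 + (-2)*xv*yv + 1) * e5
  have hWne : (2 * xv ^ 2 * t - (1 - xv * yv + xv ^ 2)) ≠ 0 := by
    intro h
    have h0 := congrArg (PowerSeries.constantCoeff) h
    simp [xv, yv] at h0
  have hF : (th (th t) + mu (mu t) + th t + th t - mu (th t) - mu (th t) - mu t - mu t)
      = xv ^ 2 * (th (th t) + mu (mu t) + th t + th t + mu (th t) + mu (th t) + mu t + mu t) := by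
    rcases mul_eq_zero.mp hW3 with h | h
    · exact sub_eq_zero.mp h
    · exact absurd h (pow_ne_zero 3 hWne)
  have h2 := congrArg (cc n l) hF
  rw [cc_X2 n l hn] at h2
  rw [ht] at h2
  simp only [cc_add, cc_sub, cc_th, cc_mu, cc_TS] at h2
  rw [show ((n - 2 : ℕ) : ℚ) = (n : ℚ) - 2 from by
    rw [Nat.cast_sub hn]; norm_num] at h2
  linear_combination h2

end Main

end RNAProof


namespace RNAProof
open PowerSeries

section Glue

def S2q : ℕ → ℕ → ℚ := fun n l => (SCount 2 n l : ℚ)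

lemma S2q_zero (l : ℕ) : S2q 0 l = if l = 0 then 1 else 0 := by
  rw [S2q, S_nil (by norm_num)]
  split <;> norm_num

lemma S2q_one (l : ℕ) : S2q 1 l = if l = 1 then 1 else 0 := by
  rw [S2q, S_nil (by norm_num)]
  split <;> norm_num

lemma S2q_rec (m l : ℕ) :
    S2q (m + 2) l + S2q m l
      = (if 1 ≤ l then S2q (m + 1) (l - 1) else 0)
        + ∑ p ∈ Finset.HasAntidiagonal.antidiagonal m, ∑ q ∈ Finset.HasAntidiagonal.antidiagonal l,
            S2q p.1 q.1 * S2q p.2 q.2 := by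
  have h := S_rec m l
  have hc : ((SCount 2 (m + 2) l + SCount 2 m l : ℕ) : ℚ)
      = (((if 1 ≤ l then SCount 2 (m + 1) (l - 1) else 0)
        + ∑ p ∈ Finset.HasAntidiagonal.antidiagonal m, ∑ q ∈ Finset.HasAntidiagonal.antidiagonal l,
            SCount 2 p.1 q.1 * SCount 2 p.2 q.2 : ℕ) : ℚ) := by
    exact_mod_cast congrArg (fun z : ℕ => (z : ℚ)) h
  push_cast at hc
  simpa [S2q] using hc

lemma cc_one (n l : ℕ) : cc n l (1 : Q2) = if n = 0 ∧ l = 0 then 1 else 0 := by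
  rw [cc, PowerSeries.coeff_one]
  by_cases hn : n = 0
  · simp [hn, PowerSeries.coeff_one]
  · simp [hn]

lemma cc_mul_TT (n l : ℕ) :
    cc n l (TS S2q * TS S2q)
      = ∑ p ∈ Finset.HasAntidiagonal.antidiagonal n, ∑ q ∈ Finset.HasAntidiagonal.antidiagonal l,
          S2q p.1 q.1 * S2q p.2 q.2 := by
  rw [cc, PowerSeries.coeff_mul, map_sum]
  apply Finset.sum_congr rfl
  intro p _
  rw [show PowerSeries.coeff p.1 (TS S2q) = PowerSeries.mk (fun u => S2q p.1 u) from by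
      simp [TS],
    show PowerSeries.coeff p.2 (TS S2q) = PowerSeries.mk (fun u => S2q p.2 u) from by
      simp [TS],
    PowerSeries.coeff_mul]
  apply Finset.sum_congr rfl
  intro q _
  simp

lemma cc_xyT (n l : ℕ) :
    cc n l (PowerSeries.X * (yv * TS S2q))
      = if 1 ≤ n ∧ 1 ≤ l then S2q (n - 1) (l - 1) else 0 := by
  rw [cc, show (PowerSeries.X : Q2) * (yv * TS S2q)
      = PowerSeries.X ^ 1 * (yv * TS S2q) from by rw [pow_one],
    PowerSeries.coeff_X_pow_mul']
  by_cases hn : 1 ≤ n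
  · rw [if_pos hn, yv, PowerSeries.coeff_C_mul,
      show PowerSeries.coeff (n - 1) (TS S2q) = PowerSeries.mk (fun u => S2q (n - 1) u)
        from by simp [TS],
      show (PowerSeries.X : Q1) * PowerSeries.mk (fun u => S2q (n - 1) u)
        = PowerSeries.X ^ 1 * PowerSeries.mk (fun u => S2q (n - 1) u) from by rw [pow_one],
      PowerSeries.coeff_X_pow_mul']
    by_cases hl : 1 ≤ l
    · rw [if_pos hl, if_pos ⟨hn, hl⟩, PowerSeries.coeff_mk]
    · rw [if_neg hl, if_neg (by tauto)]
  · rw [if_neg hn, if_neg (by tauto), map_zero]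

lemma cc_X2mul (n l : ℕ) (f : Q2) :
    cc n l (PowerSeries.X ^ 2 * f) = if 2 ≤ n then cc (n - 2) l f else 0 := by
  rw [cc, PowerSeries.coeff_X_pow_mul']
  by_cases hn : 2 ≤ n
  · rw [if_pos hn, if_pos hn]
    rfl
  · rw [if_neg hn, if_neg hn, map_zero]

theorem hP_holds :
    xv * xv * TS S2q * TS S2q + 1 = (1 - xv * yv + xv * xv) * TS S2q := by
  have h1 : xv * xv * TS S2q * TS S2q = PowerSeries.X ^ 2 * (TS S2q * TS S2q) := by
    rw [xv]; ring
  have h2 : (1 - xv * yv + xv * xv) * TS S2q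
      = TS S2q - PowerSeries.X * (yv * TS S2q) + PowerSeries.X ^ 2 * TS S2q := by
    rw [xv]; ring
  rw [h1, h2]
  refine PowerSeries.ext fun n => ?_
  refine PowerSeries.ext fun l => ?_
  show cc n l (PowerSeries.X ^ 2 * (TS S2q * TS S2q) + 1)
      = cc n l (TS S2q - PowerSeries.X * (yv * TS S2q) + PowerSeries.X ^ 2 * TS S2q)
  rw [cc_add, cc_X2mul, cc_one, cc_add, cc_sub, cc_TS, cc_xyT, cc_X2mul, cc_TS]
  rcases n with _ | n
  · rw [S2q_zero]
    by_cases hl : l = 0 <;> simp [hl]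
  rcases n with _ | m
  · rw [S2q_one, S2q_zero]
    by_cases hl : l = 0
    · simp [hl]
    · by_cases hl1 : l = 1
      · simp [hl1]
      · simp [hl, hl1, show ¬(l - 1 = 0) from by omega, show (1:ℕ) ≤ l from by omega]
  · simp only [show m + 1 + 1 = m + 2 from rfl]
    rw [if_pos (by omega : 2 ≤ m + 2), if_pos (by omega : 2 ≤ m + 2),
      if_neg (by omega : ¬(m + 2 = 0 ∧ l = 0)),
      show m + 2 - 2 = m from by omega, show m + 2 - 1 = m + 1 from by omega,
      cc_mul_TT,
      show (if 1 ≤ m + 2 ∧ 1 ≤ l then S2q (m + 1) (l - 1) else 0)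
        = (if 1 ≤ l then S2q (m + 1) (l - 1) else 0) from by
          by_cases hl : 1 ≤ l
          · rw [if_pos ⟨by omega, hl⟩, if_pos hl]
          · rw [if_neg (by tauto), if_neg hl]]
    linear_combination -S2q_rec m l

end Glue
end RNAProof


end

/-- For `n ≥ 2`, `0 ≤ ℓ ≤ n`, `n - ℓ` even:
`(n-ℓ)(n-ℓ+2)·S₂(n,ℓ) − (n+ℓ)(n+ℓ-2)·S₂(n-2,ℓ) = 0`. -/
theorem SCount_two_recursion (n ℓ : ℕ) (hn : 2 ≤ n) (hl : ℓ ≤ n)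
    (he : Even (n - ℓ)) :
    ((n : ℤ) - ℓ) * ((n : ℤ) - ℓ + 2) * (SCount 2 n ℓ : ℤ) -
      ((n : ℤ) + ℓ) * ((n : ℤ) + ℓ - 2) * (SCount 2 (n - 2) ℓ : ℤ) = 0 := by
  have hq := RNAProof.key_recursion RNAProof.S2q RNAProof.hP_holds n ℓ hn
  have h2 : ((((n : ℤ) - ℓ) * ((n : ℤ) - ℓ + 2) * (SCount 2 n ℓ : ℤ) -
      ((n : ℤ) + ℓ) * ((n : ℤ) + ℓ - 2) * (SCount 2 (n - 2) ℓ : ℤ) : ℤ) : ℚ) = 0 := by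
    push_cast
    simp only [RNAProof.S2q] at hq
    linear_combination hq
  exact_mod_cast h2
end
end
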